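/- arXiv:1304.4626 — 10 statements merged into one kernel-verified Lean document; each statement's English description precedes it below -/
import Mathlib

section
/- Let M = (E, I) be a matroid on a finite ground set E that is representable over a field F and has rank p + q. Let S be a finite family of independent sets of M, each of size p, and let w : S → ℕ be a weight function. Then there exists a subfamily Ŝ ⊆ S with |Ŝ| ≤ C(p+q, p) (the binomial coefficient) such that Ŝ is min q-representative for S: for every set Y ⊆ E with |Y| ≤ q, if there is X ∈ S with X ∩ Y = ∅ and X ∪ Y ∈ I, then there is X̂ ∈ Ŝ with X̂ ∩ Y = ∅, X̂ ∪ Y ∈ I, and w(X̂) ≤ w(X). -/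
/-- A matroid `M` is representable over a field `𝔽` if there is an assignment of vectors
(columns of a matrix) to the elements of the ground set such that a subset of the ground set
is independent in `M` exactly when the corresponding vectors are linearly independent. -/
def MatroidRepresentable {α : Type*} (M : Matroid α) (𝔽 : Type*) [Field 𝔽] : Prop :=
  ∃ (n : ℕ) (v : α → (Fin n → 𝔽)),
    ∀ I : Set α, I ⊆ M.E → (M.Indep I ↔ LinearIndependent 𝔽 (fun x : I => v x))

/-- `M` has rank `k`: some base (equivalently, every base) of `M` has `k` elements. -/
def MatroidRankEq {α : Type*} (M : Matroid α) (k : ℕ) : Prop :=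
  ∃ B, M.IsBase B ∧ B.encard = (k : ℕ∞)

/-- `Shat ⊆ S` is a min `q`-representative subfamily of `S` with respect to the matroid `M`
and the weight function `w`: for every `Y ⊆ M.E` with `|Y| ≤ q`, whenever some `X ∈ S` is
disjoint from `Y` with `X ∪ Y` independent, some `X̂ ∈ Shat` is disjoint from `Y` with
`X̂ ∪ Y` independent and `w X̂ ≤ w X`. -/
def MinQRepFam {α : Type*} (M : Matroid α) (q : ℕ) (w : Set α → ℕ)
    (S Shat : Set (Set α)) : Prop :=
  Shat ⊆ S ∧
    ∀ Y : Set α, Y ⊆ M.E → Y.encard ≤ (q : ℕ∞) →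
      ∀ X ∈ S, Disjoint X Y → M.Indep (X ∪ Y) →
        ∃ Xhat ∈ Shat, Disjoint Xhat Y ∧ M.Indep (Xhat ∪ Y) ∧ w Xhat ≤ w X


open BigOperators Function

namespace RepFamAux

variable {F : Type*} [Field F] {p q : ℕ}

lemma update_append_left {V : Type*} [DecidableEq (Fin p)] (x : Fin p → V) (y : Fin q → V) (i : Fin p) (z : V) :
    Function.update (Fin.append x y) (Fin.castAdd q i) z = Fin.append (Function.update x i z) y := by
  funext j
  induction j using Fin.addCases with
  | left k =>
    rw [Fin.append_left]
    rcases eq_or_ne k i with rfl | hk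
    · simp
    · rw [Function.update_of_ne (fun h => hk (by simpa [Fin.ext_iff] using h)),
        Function.update_of_ne hk, Fin.append_left]
  | right k =>
    rw [Function.update_of_ne (by simp [Fin.ext_iff]; omega), Fin.append_right,
      Fin.append_right]

lemma update_append_right {V : Type*} [DecidableEq (Fin q)] (x : Fin p → V) (y : Fin q → V) (i : Fin q) (z : V) :
    Function.update (Fin.append x y) (Fin.natAdd p i) z = Fin.append x (Function.update y i z) := by
  funext j
  induction j using Fin.addCases with
  | left k =>
    rw [Function.update_of_ne (by simp [Fin.ext_iff]; omega), Fin.append_left, Fin.append_left]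
  | right k =>
    rw [Fin.append_right]
    rcases eq_or_ne k i with rfl | hk
    · simp
    · rw [Function.update_of_ne (fun h => hk (by simpa [Fin.ext_iff] using h)),
        Function.update_of_ne hk, Fin.append_right]

lemma comp_append {V W : Type*} (f : V → W) (x : Fin p → V) (y : Fin q → V) :
    f ∘ Fin.append x y = Fin.append (f ∘ x) (f ∘ y) := by
  funext j
  induction j using Fin.addCases with
  | left k => simp [Fin.append_left]
  | right k => simp [Fin.append_right]

/-- Partial application of an alternating map: fix the last `q` arguments. -/
noncomputable def leftApp {V : Type*} [AddCommGroup V] [Module F V]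
    (f : V [⋀^Fin (p + q)]→ₗ[F] F) (y : Fin q → V) : V [⋀^Fin p]→ₗ[F] F where
  toFun x := f (Fin.append x y)
  map_update_add' x i a b := by
    simp only [← update_append_left]
    exact f.map_update_add _ _ _ _
  map_update_smul' x i c a := by
    simp only [← update_append_left]
    exact f.map_update_smul _ _ _ _
  map_eq_zero_of_eq' x i j hxij hij := by
    refine f.map_eq_zero_of_eq (Fin.append x y) (i := Fin.castAdd q i) (j := Fin.castAdd q j) ?_ ?_
    · rw [Fin.append_left, Fin.append_left]; exact hxij
    · simpa [Fin.ext_iff] using fun h => hij (by simpa [Fin.ext_iff] using h)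

@[simp] lemma leftApp_apply {V : Type*} [AddCommGroup V] [Module F V]
    (f : V [⋀^Fin (p + q)]→ₗ[F] F) (y : Fin q → V) (x : Fin p → V) :
    leftApp f y x = f (Fin.append x y) := rfl

/-- Partial application of an alternating map: fix the first `p` arguments. -/
noncomputable def rightApp {V : Type*} [AddCommGroup V] [Module F V]
    (f : V [⋀^Fin (p + q)]→ₗ[F] F) (x : Fin p → V) : V [⋀^Fin q]→ₗ[F] F where
  toFun y := f (Fin.append x y)
  map_update_add' y i a b := by
    simp only [← update_append_right]
    exact f.map_update_add _ _ _ _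
  map_update_smul' y i c a := by
    simp only [← update_append_right]
    exact f.map_update_smul _ _ _ _
  map_eq_zero_of_eq' y i j hyij hij := by
    refine f.map_eq_zero_of_eq (Fin.append x y) (i := Fin.natAdd p i) (j := Fin.natAdd p j) ?_ ?_
    · rw [Fin.append_right, Fin.append_right]; exact hyij
    · simpa [Fin.ext_iff] using fun h => hij (by simpa [Fin.ext_iff] using h)

@[simp] lemma rightApp_apply {V : Type*} [AddCommGroup V] [Module F V]
    (f : V [⋀^Fin (p + q)]→ₗ[F] F) (x : Fin p → V) (y : Fin q → V) :
    rightApp f x y = f (Fin.append x y) := rfl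



/-- Index type: `p`-element subsets of `Fin (p+q)`. -/
abbrev Jty (p q : ℕ) := {s : Finset (Fin (p + q)) // s.card = p}

lemma compl_card (s : Jty p q) : (s : Finset (Fin (p + q)))ᶜ.card = q := by
  have := Finset.card_compl (s : Finset (Fin (p + q)))
  rw [s.2] at this
  simpa using this

/-- The `k × k` minor (on columns given by `s`) of the matrix with rows `x`. -/
noncomputable def minorMap (k : ℕ) (s : Finset (Fin (p + q))) (h : s.card = k) :
    ((Fin (p + q) → F) [⋀^Fin k]→ₗ[F] F) :=
  (Matrix.detRowAlternating).compLinearMap (LinearMap.funLeft F F (s.orderEmbOfFin h))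

lemma minorMap_apply (k : ℕ) (s : Finset (Fin (p + q))) (h : s.card = k)
    (x : Fin k → Fin (p + q) → F) :
    minorMap k s h x = Matrix.det (Matrix.of fun i j => x i (s.orderEmbOfFin h j)) := rfl

/-- single basis vector -/
noncomputable def eb (p q : ℕ) (F : Type*) [Field F] : Fin (p + q) → (Fin (p + q) → F) :=
  fun i => Pi.single i 1

/-- The sign associated to a `p`-subset `s` of `Fin (p+q)`. -/
noncomputable def eps (F : Type*) [Field F] (s : Jty p q) : F :=
  Matrix.detRowAlternating
    (Fin.append (fun i => eb p q F ((s : Finset (Fin (p + q))).orderEmbOfFin s.2 i))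
      (fun i => eb p q F (((s : Finset (Fin (p + q)))ᶜ).orderEmbOfFin (compl_card s) i)))

lemma minor_eq_zero (k : ℕ) (s : Finset (Fin (p + q))) (h : s.card = k)
    (v : Fin k → Fin (p + q)) (i : Fin k) (hi : v i ∉ s) :
    minorMap (F := F) k s h (fun j => eb p q F (v j)) = 0 := by
  rw [minorMap_apply]
  refine Matrix.det_eq_zero_of_row_eq_zero i (fun j => ?_)
  have : v i ≠ s.orderEmbOfFin h j := fun hc => hi (hc ▸ s.orderEmbOfFin_mem h j)
  simp [eb, Pi.single_apply, Ne.symm this]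

lemma minorPermEx (k : ℕ) (s : Finset (Fin (p + q))) (h : s.card = k)
    (v : Fin k → Fin (p + q)) (hv : Function.Injective v) (hrange : ∀ i, v i ∈ s) :
    ∃ σ : Equiv.Perm (Fin k), (∀ i, s.orderEmbOfFin h (σ i) = v i) ∧
      minorMap (F := F) k s h (fun j => eb p q F (v j)) = (Equiv.Perm.sign σ : ℤ) := by
  classical
  have hbij : Function.Bijective (fun i => (s.orderIsoOfFin h).symm ⟨v i, hrange i⟩) :=
    Finite.injective_iff_bijective.mp
      (fun a b hab => hv (by simpa [Subtype.ext_iff] using (s.orderIsoOfFin h).symm.injective hab))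
  set σ : Equiv.Perm (Fin k) := Equiv.ofBijective _ hbij with hσ
  have hσap : ∀ i, s.orderEmbOfFin h (σ i) = v i := by
    intro i
    show (s.orderEmbOfFin h) ((s.orderIsoOfFin h).symm ⟨v i, hrange i⟩) = v i
    rw [← Finset.coe_orderIsoOfFin_apply, OrderIso.apply_symm_apply]
  refine ⟨σ, hσap, ?_⟩
  rw [minorMap_apply]
  have hmat : (Matrix.of fun i j => eb p q F (v i) (s.orderEmbOfFin h j)) =
      σ.permMatrix F := by
    ext i j
    have hiff : s.orderEmbOfFin h j = v i ↔ σ i = j := by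
      rw [← hσap i]
      exact ⟨fun hc => ((s.orderEmbOfFin h).injective hc).symm, fun hc => by rw [hc]⟩
    have h1 : (Matrix.of fun i j => eb p q F (v i) (s.orderEmbOfFin h j)) i j
        = if σ i = j then (1 : F) else 0 := by
      simp only [Matrix.of_apply, eb, Pi.single_apply]
      rw [if_congr hiff rfl rfl]
    have h2 : σ.permMatrix F i j = if σ i = j then (1 : F) else 0 := by
      simp [Equiv.Perm.permMatrix, PEquiv.toMatrix_apply, Equiv.toPEquiv_apply, eq_comm]
    rw [h1, h2]
  rw [hmat, Matrix.det_permutation]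
end RepFamAux

namespace RepFamAux
variable {F : Type*} [Field F] {p q : ℕ}

lemma append_perm {V : Type*} (a : Fin p → V) (b : Fin q → V)
    (σ : Equiv.Perm (Fin p)) (τ : Equiv.Perm (Fin q)) :
    Fin.append a b ∘ (finSumFinEquiv.permCongr (Equiv.sumCongr σ τ)) =
      Fin.append (a ∘ σ) (b ∘ τ) := by
  funext j
  induction j using Fin.addCases with
  | left i =>
    simp [Equiv.permCongr_apply, Fin.append_left]
  | right i =>
    simp [Equiv.permCongr_apply, Fin.append_right]

lemma laplace_base (v : Fin p → Fin (p + q)) (hv : Injective v)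
    (u : Fin q → Fin (p + q)) (hu : Injective u) :
    Matrix.detRowAlternating
        (Fin.append (fun i => eb p q F (v i)) (fun i => eb p q F (u i))) =
      ∑ s : Jty p q, eps F s *
        (minorMap p s.1 s.2 (fun i => eb p q F (v i)) *
          minorMap q s.1ᶜ (compl_card s) (fun i => eb p q F (u i))) := by
  classical
  by_cases hvu : ∃ i j, v i = u j
  · obtain ⟨i, j, hij⟩ := hvu
    have hLHS : Matrix.detRowAlternating
        (Fin.append (fun i => eb p q F (v i)) (fun i => eb p q F (u i))) = 0 := by
      refine AlternatingMap.map_eq_zero_of_eq _ _ (i := Fin.castAdd q i) (j := Fin.natAdd p j)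
        ?_ (by simp [Fin.ext_iff]; omega)
      rw [Fin.append_left, Fin.append_right, hij]
    rw [hLHS]
    refine (Finset.sum_eq_zero fun s _ => ?_).symm
    by_cases hvs : ∀ i, v i ∈ s.1
    · by_cases hus : ∀ j, u j ∈ s.1ᶜ
      · exact absurd (hvs i) (by simpa [hij] using Finset.mem_compl.mp (hus j))
      · push_neg at hus
        obtain ⟨j', hj'⟩ := hus
        rw [minor_eq_zero q s.1ᶜ (compl_card s) u j' hj']
        ring
    · push_neg at hvs
      obtain ⟨i', hi'⟩ := hvs
      rw [minor_eq_zero p s.1 s.2 v i' hi']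
      ring
  · push_neg at hvu
    set t : Finset (Fin (p + q)) := Finset.image v Finset.univ with htdef
    have ht : t.card = p := by
      rw [htdef, Finset.card_image_of_injective _ hv, Finset.card_univ, Fintype.card_fin]
    set sJ : Jty p q := ⟨t, ht⟩ with hsJ
    have hvt : ∀ i, v i ∈ t := fun i => Finset.mem_image_of_mem v (Finset.mem_univ i)
    have hut : ∀ j, u j ∈ tᶜ := by
      intro j
      rw [Finset.mem_compl, htdef, Finset.mem_image]
      rintro ⟨i, -, hij⟩
      exact hvu i j hij
    obtain ⟨σ, hσap, hσdet⟩ := minorPermEx (F := F) p t ht v hv hvt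
    obtain ⟨τ, hτap, hτdet⟩ := minorPermEx (F := F) q tᶜ (compl_card sJ) u hu hut
    have hrw : (Fin.append (fun i => eb p q F (v i)) (fun i => eb p q F (u i))) =
        (Fin.append (fun i => eb p q F (t.orderEmbOfFin ht i))
          (fun i => eb p q F (tᶜ.orderEmbOfFin (compl_card sJ) i))) ∘
          (finSumFinEquiv.permCongr (Equiv.sumCongr σ τ)) := by
      funext j
      rw [append_perm]
      induction j using Fin.addCases with
      | left i => simp [Fin.append_left, hσap]
      | right i => simp [Fin.append_right, hτap]
    have hsum : ∑ s : Jty p q, eps F s *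
        (minorMap p s.1 s.2 (fun i => eb p q F (v i)) *
          minorMap q s.1ᶜ (compl_card s) (fun i => eb p q F (u i))) =
        eps F sJ * (minorMap p sJ.1 sJ.2 (fun i => eb p q F (v i)) *
          minorMap q sJ.1ᶜ (compl_card sJ) (fun i => eb p q F (u i))) := by
      refine Finset.sum_eq_single sJ (fun s _ hs => ?_) (by simp)
      have : ¬ (t ⊆ s.1) := by
        intro hsub
        exact hs (Subtype.ext ((Finset.eq_of_subset_of_card_le hsub (by rw [ht, s.2])).symm))
      obtain ⟨x, hxt, hxs⟩ := Finset.not_subset.mp this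
      obtain ⟨i', -, rfl⟩ := Finset.mem_image.mp hxt
      rw [minor_eq_zero p s.1 s.2 v i' hxs]
      ring
    rw [hsum, hσdet, hτdet, hrw, AlternatingMap.map_perm]
    have hsign : Equiv.Perm.sign (finSumFinEquiv.permCongr (Equiv.sumCongr σ τ)) =
        Equiv.Perm.sign σ * Equiv.Perm.sign τ := by
      rw [Equiv.Perm.sign_permCongr, Equiv.Perm.sign_sumCongr]
    rw [hsign]
    show ((Equiv.Perm.sign σ * Equiv.Perm.sign τ : ℤˣ) : ℤ) • eps F sJ = _
    rw [zsmul_eq_mul]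
    push_cast
    ring
end RepFamAux

namespace RepFamAux
variable {F : Type*} [Field F] {p q : ℕ}

lemma altSum_apply {ι V κ : Type*} [AddCommGroup V] [Module F V] (t : Finset κ)
    (f : κ → (V [⋀^ι]→ₗ[F] F)) (v : ι → V) :
    (∑ s ∈ t, f s) v = ∑ s ∈ t, f s v := by
  classical
  induction t using Finset.cons_induction with
  | empty => simp
  | cons a t ha ih =>
    rw [Finset.sum_cons, Finset.sum_cons, AlternatingMap.add_apply, ih]

theorem laplace (x : Fin p → Fin (p + q) → F) (y : Fin q → Fin (p + q) → F) :
    Matrix.detRowAlternating (Fin.append x y) =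
      ∑ s : Jty p q, eps F s *
        (minorMap p s.1 s.2 x * minorMap q s.1ᶜ (compl_card s) y) := by
  classical
  have step1 : ∀ (v : Fin p → Fin (p + q)), Injective v → ∀ y : Fin q → Fin (p + q) → F,
      Matrix.detRowAlternating (Fin.append (fun i => eb p q F (v i)) y) =
        ∑ s : Jty p q, eps F s *
          (minorMap p s.1 s.2 (fun i => eb p q F (v i)) *
            minorMap q s.1ᶜ (compl_card s) y) := by
    intro v hv
    have hmaps : rightApp Matrix.detRowAlternating (fun i => eb p q F (v i)) =
        ∑ s : Jty p q, (eps F s * minorMap p s.1 s.2 (fun i => eb p q F (v i))) •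
          minorMap q s.1ᶜ (compl_card s) := by
      refine Module.Basis.ext_alternating (Pi.basisFun F (Fin (p + q))) (fun u hu => ?_)
      have hbe : (fun i => (Pi.basisFun F (Fin (p + q))) (u i)) = fun i => eb p q F (u i) := by
        funext i; simp [eb]
      rw [hbe, rightApp_apply, laplace_base v hv u hu, altSum_apply]
      refine Finset.sum_congr rfl fun s _ => ?_
      rw [AlternatingMap.smul_apply, smul_eq_mul]
      ring
    intro y
    have h := DFunLike.congr_fun hmaps y
    rw [rightApp_apply] at h
    rw [h, altSum_apply]
    refine Finset.sum_congr rfl fun s _ => ?_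
    rw [AlternatingMap.smul_apply, smul_eq_mul]
    ring
  have hmaps2 : leftApp Matrix.detRowAlternating y =
      ∑ s : Jty p q, (eps F s * minorMap q s.1ᶜ (compl_card s) y) • minorMap p s.1 s.2 := by
    refine Module.Basis.ext_alternating (Pi.basisFun F (Fin (p + q))) (fun v hv => ?_)
    have hbe : (fun i => (Pi.basisFun F (Fin (p + q))) (v i)) = fun i => eb p q F (v i) := by
      funext i; simp [eb]
    rw [hbe, leftApp_apply, step1 v hv y, altSum_apply]
    refine Finset.sum_congr rfl fun s _ => ?_
    rw [AlternatingMap.smul_apply, smul_eq_mul]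
    ring
  have h := DFunLike.congr_fun hmaps2 x
  rw [leftApp_apply] at h
  rw [h, altSum_apply]
  refine Finset.sum_congr rfl fun s _ => ?_
  rw [AlternatingMap.smul_apply, smul_eq_mul]
  ring

/-- rows linearly independent iff `detRowAlternating ≠ 0`, for a square tuple of rows. -/
lemma rows_li_iff_det_ne_zero {n : ℕ} (z : Fin n → Fin n → F) :
    LinearIndependent F z ↔ Matrix.detRowAlternating (R := F) z ≠ 0 := by
  have h1 : LinearIndependent F z ↔ IsUnit (Matrix.of z) :=
    Matrix.linearIndependent_rows_iff_isUnit (A := Matrix.of z)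
  rw [h1, Matrix.isUnit_iff_isUnit_det, isUnit_iff_ne_zero]
  rfl

end RepFamAux

namespace RepFamAux
variable {F : Type*} [Field F] {p q : ℕ}

lemma exists_min_weight_spanning {V ι : Type*} [AddCommGroup V] [Module F V]
    [FiniteDimensional F V] (φ : ι → V) (w : ι → ℕ) (s : Finset ι) :
    ∃ T : Finset ι, T ⊆ s ∧ T.card ≤ Module.finrank F V ∧
      ∀ X ∈ s, φ X ∈ Submodule.span F (φ '' {X' | X' ∈ T ∧ w X' ≤ w X}) := by
  classical
  suffices h : ∃ T : Finset ι, T ⊆ s ∧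
      LinearIndependent F (fun x : (T : Set ι) => φ x) ∧
      ∀ X ∈ s, φ X ∈ Submodule.span F (φ '' {X' | X' ∈ T ∧ w X' ≤ w X}) by
    obtain ⟨T, hTs, hli, hrep⟩ := h
    have hcard : T.card ≤ Module.finrank F V := by
      simpa using hli.fintype_card_le_finrank
    exact ⟨T, hTs, hcard, hrep⟩
  induction s using Finset.strongInduction with
  | _ s ih =>
    rcases s.eq_empty_or_nonempty with rfl | hne
    · refine ⟨∅, Finset.Subset.refl _, ?_, by simp⟩
      haveI : IsEmpty ((↑(∅ : Finset ι)) : Set ι) := by simp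
      exact linearIndependent_empty_type
    · obtain ⟨X₀, hX₀s, hmax⟩ := s.exists_max_image w hne
      obtain ⟨T, hTs, hli, hrep⟩ := ih (s.erase X₀) (Finset.erase_ssubset hX₀s)
      have hTX₀ : X₀ ∉ (T : Set ι) := fun h => (Finset.ne_of_mem_erase (hTs h)) rfl
      by_cases hspan : φ X₀ ∈ Submodule.span F (φ '' (T : Set ι))
      · refine ⟨T, hTs.trans (Finset.erase_subset _ _), hli, fun X hX => ?_⟩
        rcases eq_or_ne X X₀ with rfl | hne'
        · have hset : {X' | X' ∈ T ∧ w X' ≤ w X} = (T : Set ι) := by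
            ext a
            simp only [Set.mem_setOf_eq, Finset.mem_coe, and_iff_left_iff_imp]
            exact fun ha => hmax a (Finset.mem_of_mem_erase (hTs ha))
          rw [hset]; exact hspan
        · exact hrep X (Finset.mem_erase.mpr ⟨hne', hX⟩)
      · refine ⟨insert X₀ T,
          Finset.insert_subset hX₀s (hTs.trans (Finset.erase_subset _ _)), ?_, ?_⟩
        · have h2 : LinearIndependent F (fun x : (insert X₀ (T : Set ι) : Set ι) => φ x) :=
            LinearIndepOn.insert hli hspan
          have hco : ((insert X₀ T : Finset ι) : Set ι) = insert X₀ (T : Set ι) :=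
            Finset.coe_insert _ _
          rw [hco]
          exact h2
        · intro X hX
          rcases eq_or_ne X X₀ with rfl | hne'
          · exact Submodule.subset_span ⟨X, ⟨Finset.mem_insert_self _ _, le_refl _⟩, rfl⟩
          · refine Submodule.span_mono (Set.image_mono ?_)
              (hrep X (Finset.mem_erase.mpr ⟨hne', hX⟩))
            intro a ha
            exact ⟨Finset.mem_insert_of_mem ha.1, ha.2⟩

lemma exists_enum {α : Type*} {X : Set α} {k : ℕ} (h : X.encard = k) :
    ∃ g : Fin k → α, Function.Injective g ∧ Set.range g = X := by
  have hfin : X.Finite := Set.finite_of_encard_eq_coe h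
  have hcard : hfin.toFinset.card = k := by
    have h2 := hfin.encard_eq_coe_toFinset_card
    rw [h] at h2
    exact_mod_cast h2.symm
  set e := Finset.equivFinOfCardEq hcard with he
  refine ⟨fun i => (e.symm i : α), ?_, ?_⟩
  · intro a b hab
    exact e.symm.injective (Subtype.coe_injective hab)
  · ext a
    constructor
    · rintro ⟨i, rfl⟩
      exact hfin.mem_toFinset.mp (e.symm i).2
    · intro ha
      exact ⟨e ⟨a, hfin.mem_toFinset.mpr ha⟩, by simp⟩

lemma disjoint_of_li_append {α : Type*} {u : α → Fin (p + q) → F} {X Y : Set α}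
    {gx : Fin p → α} (hgxr : Set.range gx = X) {gy : Fin q → α} (hgyr : Set.range gy = Y)
    (h : LinearIndependent F (fun i => u (Fin.append gx gy i))) : Disjoint X Y := by
  rw [Set.disjoint_left]
  rintro a haX haY
  rw [← hgxr] at haX
  rw [← hgyr] at haY
  obtain ⟨k, rfl⟩ := haX
  obtain ⟨l, hl⟩ := haY
  have h1 : u (Fin.append gx gy (Fin.castAdd q k)) = u (Fin.append gx gy (Fin.natAdd p l)) := by
    rw [Fin.append_left, Fin.append_right, hl]
  have h2 := h.injective h1
  simp only [Fin.ext_iff, Fin.coe_castAdd, Fin.coe_natAdd] at h2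
  omega

lemma li_union_iff_append {α : Type*} {u : α → Fin (p + q) → F} {X Y : Set α}
    (hd : Disjoint X Y) {gx : Fin p → α} (hgxi : Injective gx) (hgxr : Set.range gx = X)
    {gy : Fin q → α} (hgyi : Injective gy) (hgyr : Set.range gy = Y) :
    LinearIndependent F (fun a : ↥(X ∪ Y) => u a) ↔
      LinearIndependent F (fun i => u (Fin.append gx gy i)) := by
  have hmem : ∀ i, Fin.append gx gy i ∈ X ∪ Y := by
    intro i
    induction i using Fin.addCases with
    | left k => rw [Fin.append_left]; exact Or.inl (hgxr ▸ Set.mem_range_self k)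
    | right k => rw [Fin.append_right]; exact Or.inr (hgyr ▸ Set.mem_range_self k)
  have hgxX : ∀ k, gx k ∈ X := fun k => hgxr ▸ Set.mem_range_self k
  have hgyY : ∀ k, gy k ∈ Y := fun k => hgyr ▸ Set.mem_range_self k
  have hbij : Function.Bijective
      (fun i : Fin (p + q) => (⟨Fin.append gx gy i, hmem i⟩ : ↥(X ∪ Y))) := by
    constructor
    · intro a b hab
      rw [Subtype.mk_eq_mk] at hab
      induction a using Fin.addCases with
      | left k =>
        induction b using Fin.addCases with
        | left l =>
          rw [Fin.append_left, Fin.append_left] at hab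
          have := hgxi hab
          simp [this]
        | right l =>
          rw [Fin.append_left, Fin.append_right] at hab
          exact absurd (hgyY l) (Set.disjoint_left.mp hd (hab ▸ hgxX k))
      | right k =>
        induction b using Fin.addCases with
        | left l =>
          rw [Fin.append_right, Fin.append_left] at hab
          exact absurd (hgyY k) (Set.disjoint_left.mp hd (hab ▸ hgxX l))
        | right l =>
          rw [Fin.append_right, Fin.append_right] at hab
          have := hgyi hab
          simp [this]
    · rintro ⟨a, ha | ha⟩
      · obtain ⟨k, rfl⟩ := hgxr ▸ ha
        exact ⟨Fin.castAdd q k, Subtype.ext (Fin.append_left _ _ _)⟩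
      · obtain ⟨k, rfl⟩ := hgyr ▸ ha
        exact ⟨Fin.natAdd p k, Subtype.ext (Fin.append_right _ _ _)⟩
  have := linearIndependent_equiv (R := F) (Equiv.ofBijective _ hbij)
    (f := fun a : ↥(X ∪ Y) => u a)
  rw [← this]
  rfl

lemma extend_Y {α : Type*} (M : Matroid α) (hrank : MatroidRankEq M (p + q))
    {X Y : Set α} (hX : X.encard = (p : ℕ∞)) (hY : Y.encard ≤ (q : ℕ∞))
    (hd : Disjoint X Y) (hind : M.Indep (X ∪ Y)) :
    ∃ Y', Y ⊆ Y' ∧ Y' ⊆ M.E ∧ Y'.encard = (q : ℕ∞) ∧ Disjoint X Y' ∧ M.Indep (X ∪ Y') := by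
  obtain ⟨B0, hB0, hB0card⟩ := hrank
  obtain ⟨B, hB, hXYB⟩ := hind.exists_isBase_superset
  have hBcard : B.encard = ((p : ℕ∞) + q) := by
    rw [hB.encard_eq_encard_of_isBase hB0, hB0card]
    push_cast
    rfl
  have hXB : X ⊆ B := (Set.subset_union_left).trans hXYB
  have hYBX : Y ⊆ B \ X := by
    intro a ha
    exact ⟨hXYB (Or.inr ha), fun hax => Set.disjoint_left.mp hd hax ha⟩
  have hdiff : (B \ X).encard + X.encard = B.encard :=
    Set.encard_diff_add_encard_of_subset hXB
  have hq : (q : ℕ∞) ≤ (B \ X).encard := by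
    have hp : X.encard ≠ ⊤ := by rw [hX]; simp
    refine (ENat.add_le_add_iff_right hp).mp ?_
    rw [hdiff, hX, hBcard, add_comm]
  obtain ⟨Y', hYY', hY'B, hY'card⟩ :=
    Set.exists_superset_subset_encard_eq hYBX hY hq
  refine ⟨Y', hYY', fun a ha => hB.subset_ground (hY'B ha).1, hY'card, ?_, ?_⟩
  · exact Set.disjoint_left.mpr (fun a haX haY' => (hY'B haY').2 haX)
  · exact hB.indep.subset (Set.union_subset hXB (hY'B.trans Set.diff_subset))

end RepFamAux

namespace RepFamAux
variable {F : Type*} [Field F] {p q : ℕ}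

lemma exists_good_rep {α : Type*} (M : Matroid α) (hE : M.E.Finite)
    (hrep : MatroidRepresentable M F) (hrank : MatroidRankEq M (p + q)) :
    ∃ u : α → (Fin (p + q) → F),
      ∀ I : Set α, I ⊆ M.E → (M.Indep I ↔ LinearIndependent F (fun x : I => u x)) := by
  classical
  obtain ⟨n, v, hv⟩ := hrep
  set W := Submodule.span F (v '' M.E) with hWdef
  haveI : FiniteDimensional F W := FiniteDimensional.span_of_finite F (hE.image v)
  obtain ⟨B0, hB0, hB0card⟩ := hrank
  have hB0E : B0 ⊆ M.E := hB0.subset_ground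
  have hB0fin : B0.Finite := Set.finite_of_encard_eq_coe hB0card
  haveI := hB0fin.fintype
  have hB0li : LinearIndependent F (fun x : B0 => v x) := (hv B0 hB0E).mp hB0.indep
  have hvW : ∀ a ∈ M.E, v a ∈ W := fun a ha => Submodule.subset_span (Set.mem_image_of_mem v ha)
  have hw0li : LinearIndependent F (fun x : B0 => (⟨v x, hvW x (hB0E x.2)⟩ : W)) :=
    LinearIndependent.of_comp W.subtype hB0li
  have hcardB0 : Fintype.card B0 = p + q := by
    have h2 := Set.encard_eq_coe_toFinset_card B0
    rw [hB0card, Set.toFinset_card] at h2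
    exact_mod_cast h2.symm
  have hlow : p + q ≤ Module.finrank F W := by
    have h3 := hw0li.fintype_card_le_finrank
    rwa [hcardB0] at h3
  obtain ⟨t, hts, hsp, hlit⟩ := exists_linearIndependent F (v '' M.E)
  have htfin : t.Finite := (hE.image v).subset hts
  haveI := htfin.fintype
  have hch : ∀ c : t, ∃ a, a ∈ M.E ∧ v a = c := by
    rintro ⟨c, hc⟩
    obtain ⟨a, ha, rfl⟩ := hts hc
    exact ⟨a, ha, rfl⟩
  choose g hgE hgv using hch
  have hginj : Function.Injective g := by
    intro c c' hcc
    have : (c : Fin n → F) = c' := by rw [← hgv c, ← hgv c', hcc]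
    exact Subtype.ext this
  set I := Set.range g with hIdef
  have hIE : I ⊆ M.E := by rintro a ⟨c, rfl⟩; exact hgE c
  have hIli : LinearIndependent F (fun x : I => v x) := by
    have he' : Function.Injective (fun x : I => (⟨v x, by
        obtain ⟨c, hc⟩ := x.2
        rw [← hc, hgv]
        exact c.2⟩ : t)) := by
      intro x y hxy
      obtain ⟨c, hc⟩ := x.2
      obtain ⟨c', hc'⟩ := y.2
      have hvv : v x = v y := congrArg Subtype.val hxy
      rw [← hc, ← hc', hgv, hgv] at hvv
      exact Subtype.ext (by rw [← hc, ← hc', Subtype.ext hvv])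
    have := hlit.comp _ he'
    exact this
  have hMIndI : M.Indep I := (hv I hIE).mpr hIli
  have hIcard : I.encard ≤ (p + q : ℕ∞) := by
    obtain ⟨B1, hB1, hIB1⟩ := hMIndI.exists_isBase_superset
    have : B1.encard = ((p + q : ℕ) : ℕ∞) := by
      rw [hB1.encard_eq_encard_of_isBase hB0, hB0card]
    exact le_trans (Set.encard_mono hIB1) (le_of_eq this)
  have htI : t.encard = I.encard := Set.encard_congr (Equiv.ofInjective g hginj)
  have hup : Module.finrank F W ≤ p + q := by
    have h4 : Module.finrank F W ≤ t.toFinset.card := by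
      rw [hWdef, ← hsp]
      exact finrank_span_le_card t
    have h5 : t.toFinset.card ≤ p + q := by
      have h6 := Set.encard_eq_coe_toFinset_card t
      rw [htI] at h6
      have h7 : (t.toFinset.card : ℕ∞) ≤ ((p + q : ℕ) : ℕ∞) := by
        rw [← Set.encard_eq_coe_toFinset_card t, htI]
        exact hIcard
      exact_mod_cast h7
    exact h4.trans h5
  have hfr : Module.finrank F W = p + q := le_antisymm hup hlow
  set b := Module.finBasisOfFinrankEq F W hfr with hbdef
  refine ⟨fun a => if h : a ∈ M.E then b.equivFun ⟨v a, hvW a h⟩ else 0, ?_⟩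
  intro I' hI'E
  rw [hv I' hI'E]
  set wI : I' → W := fun x => ⟨v x, hvW x (hI'E x.2)⟩ with hwIdef
  have hvcomp : (fun x : I' => v x) = W.subtype ∘ wI := rfl
  have hucomp : (fun x : I' => if h : (x : α) ∈ M.E then b.equivFun ⟨v x, hvW x h⟩ else 0) =
      (b.equivFun : W →ₗ[F] (Fin (p + q) → F)) ∘ wI := by
    funext x
    rw [comp_apply, dif_pos (hI'E x.2)]
    rfl
  constructor
  · intro h
    have hwli : LinearIndependent F wI := LinearIndependent.of_comp W.subtype (by rw [← hvcomp]; exact h)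
    have := hwli.map' (b.equivFun : W →ₗ[F] (Fin (p + q) → F)) (LinearEquiv.ker _)
    rw [← hucomp] at this
    exact this
  · intro h
    have hwli : LinearIndependent F wI :=
      LinearIndependent.of_comp (b.equivFun : W →ₗ[F] (Fin (p + q) → F)) (by rw [← hucomp]; exact h)
    have := hwli.map' W.subtype (Submodule.ker_subtype W)
    rw [← hvcomp] at this
    exact this

end RepFamAux

/-- Let `M` be a matroid on a finite ground set, representable over a field
`𝔽`, of rank `p + q`. Let `S` be a finite family of independent sets of `M`, each of size `p`,
with weights `w`. Then there is a subfamily `Shat ⊆ S` of size at most `C(p+q, p)` which is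
min `q`-representative for `S`. -/
theorem stmt0 {α 𝔽 : Type*} [Field 𝔽] (M : Matroid α) (hE : M.E.Finite)
    (hrep : MatroidRepresentable M 𝔽) (p q : ℕ) (hrank : MatroidRankEq M (p + q))
    (S : Set (Set α)) (hSfin : S.Finite)
    (hS : ∀ X ∈ S, M.Indep X ∧ X.encard = (p : ℕ∞))
    (w : Set α → ℕ) :
    ∃ Shat : Set (Set α), Shat.ncard ≤ (p + q).choose p ∧ MinQRepFam M q w S Shat := by
  classical
  rcases S.eq_empty_or_nonempty with rfl | hSne
  · refine ⟨∅, by simp, Set.empty_subset _, ?_⟩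
    intro Y _ _ X hX
    exact absurd hX (Set.notMem_empty X)
  obtain ⟨u, hu⟩ := RepFamAux.exists_good_rep (p := p) (q := q) M hE hrep hrank
  haveI hfne : Nonempty (Fin p → α) := by
    rcases Nat.eq_zero_or_pos p with rfl | hp
    · exact ⟨fun i => i.elim0⟩
    · obtain ⟨X₀, hX₀⟩ := hSne
      have hX₀ne : X₀.Nonempty := by
        rw [Set.nonempty_iff_ne_empty]
        intro hc
        have := (hS X₀ hX₀).2
        rw [hc] at this
        simp only [Set.encard_empty] at this
        have : (p : ℕ∞) = 0 := this.symm
        exact_mod_cast absurd this (by exact_mod_cast hp.ne')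
      obtain ⟨a, _⟩ := hX₀ne
      exact ⟨fun _ => a⟩
  have henum : ∀ X ∈ S, ∃ g : Fin p → α, Function.Injective g ∧ Set.range g = X :=
    fun X hX => RepFamAux.exists_enum (hS X hX).2
  choose! gX hgXi hgXr using henum
  set φ : Set α → (RepFamAux.Jty p q → 𝔽) :=
    fun X s => RepFamAux.minorMap p s.1 s.2 (fun i => u (gX X i)) with hφdef
  obtain ⟨T, hTs, hTcard, hTrep⟩ :=
    RepFamAux.exists_min_weight_spanning (F := 𝔽) φ w hSfin.toFinset
  have hfr : Module.finrank 𝔽 (RepFamAux.Jty p q → 𝔽) = (p + q).choose p := by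
    rw [Module.finrank_fintype_fun_eq_card]
    rw [Fintype.card_finset_len, Fintype.card_fin]
  refine ⟨(T : Set (Set α)), ?_, ?_, ?_⟩
  · rw [Set.ncard_coe_finset]
    rw [hfr] at hTcard
    exact hTcard
  · intro X hX
    exact hSfin.mem_toFinset.mp (hTs hX)
  · intro Y hYE hYcard X hXS hdXY hindXY
    obtain ⟨Y', hYY', hY'E, hY'card, hdXY', hindXY'⟩ :=
      RepFamAux.extend_Y M hrank (hS X hXS).2 hYcard hdXY hindXY
    obtain ⟨gy, hgyi, hgyr⟩ := RepFamAux.exists_enum hY'card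
    have hXE : X ⊆ M.E := (hS X hXS).1.subset_ground
    have hsub_li : LinearIndependent 𝔽 (fun a : ↥(X ∪ Y') => u a) :=
      (hu _ (Set.union_subset hXE hY'E)).mp hindXY'
    have htuple : LinearIndependent 𝔽 (fun i => u (Fin.append (gX X) gy i)) :=
      (RepFamAux.li_union_iff_append hdXY' (hgXi X hXS) (hgXr X hXS) hgyi hgyr).mp hsub_li
    have hdet : Matrix.detRowAlternating (R := 𝔽) (fun i => u (Fin.append (gX X) gy i)) ≠ 0 :=
      (RepFamAux.rows_li_iff_det_ne_zero _).mp htuple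
    set L : (RepFamAux.Jty p q → 𝔽) →ₗ[𝔽] 𝔽 :=
      ∑ s : RepFamAux.Jty p q,
        (RepFamAux.eps 𝔽 s *
          RepFamAux.minorMap q s.1ᶜ (RepFamAux.compl_card s) (fun i => u (gy i))) •
          LinearMap.proj s with hLdef
    have hL : ∀ Z : Set α, L (φ Z) =
        Matrix.detRowAlternating (Fin.append (fun i => u (gX Z i)) (fun i => u (gy i))) := by
      intro Z
      rw [RepFamAux.laplace, hLdef, LinearMap.sum_apply]
      refine Finset.sum_congr rfl fun s _ => ?_
      rw [LinearMap.smul_apply, LinearMap.proj_apply, smul_eq_mul, hφdef]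
      ring
    have hrowsX : (fun i => u (Fin.append (gX X) gy i)) =
        Fin.append (fun i => u (gX X i)) (fun i => u (gy i)) := RepFamAux.comp_append u _ _
    have hLX : L (φ X) ≠ 0 := by
      rw [hL X, ← hrowsX]
      exact hdet
    have hspan := hTrep X (hSfin.mem_toFinset.mpr hXS)
    have hex : ∃ X' ∈ T, w X' ≤ w X ∧ L (φ X') ≠ 0 := by
      by_contra hcon
      push_neg at hcon
      have hker : φ '' {X' | X' ∈ T ∧ w X' ≤ w X} ⊆ (LinearMap.ker L : Set _) := by
        rintro _ ⟨X', ⟨hX'T, hX'w⟩, rfl⟩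
        exact LinearMap.mem_ker.mpr (hcon X' hX'T hX'w)
      have hmem := Submodule.span_le.mpr hker hspan
      exact hLX (LinearMap.mem_ker.mp hmem)
    obtain ⟨Xh, hXhT, hXhw, hLXh⟩ := hex
    have hXhS : Xh ∈ S := hSfin.mem_toFinset.mp (hTs hXhT)
    have hrowsXh : (fun i => u (Fin.append (gX Xh) gy i)) =
        Fin.append (fun i => u (gX Xh i)) (fun i => u (gy i)) := RepFamAux.comp_append u _ _
    have hdeth : Matrix.detRowAlternating (R := 𝔽) (fun i => u (Fin.append (gX Xh) gy i)) ≠ 0 := by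
      rw [hrowsXh, ← hL Xh]
      exact hLXh
    have htupleh : LinearIndependent 𝔽 (fun i => u (Fin.append (gX Xh) gy i)) :=
      (RepFamAux.rows_li_iff_det_ne_zero _).mpr hdeth
    have hdXhY' : Disjoint Xh Y' :=
      RepFamAux.disjoint_of_li_append (hgXr Xh hXhS) hgyr htupleh
    have hsubh : LinearIndependent 𝔽 (fun a : ↥(Xh ∪ Y') => u a) :=
      (RepFamAux.li_union_iff_append hdXhY' (hgXi Xh hXhS) (hgXr Xh hXhS) hgyi hgyr).mpr htupleh
    have hXhE : Xh ⊆ M.E := (hS Xh hXhS).1.subset_ground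
    have hindh : M.Indep (Xh ∪ Y') := (hu _ (Set.union_subset hXhE hY'E)).mpr hsubh
    refine ⟨Xh, Finset.mem_coe.mpr hXhT, ?_, ?_, hXhw⟩
    · exact Set.disjoint_of_subset_right hYY' hdXhY'
    · exact hindh.subset (Set.union_subset_union_right Xh hYY')
end

section
/- Let F be a field, k = p + q, and let A be a k × n matrix over F of rank k, with columns indexed by E = {1, …, n}. For a p-subset S of E whose columns in A are linearly independent, let φ(S) be the vector in F^{C(k,p)}, indexed by the p-subsets I of the row set {1,…,k}, whose I-coordinate is det(A[I, S]), the p × p minor of A with rows I and columns S (rows and columns taken in increasing order). Let 𝒮 be a finite family of p-subsets of E, each with linearly independent columns, and let W ⊆ 𝒮 be such that every vector φ(S) with S ∈ 𝒮 lies in the linear span of {φ(Ŝ) : Ŝ ∈ W}. Then W is q-representative for 𝒮: for every Y ⊆ E with |Y| ≤ q, if there is S ∈ 𝒮 with S ∩ Y = ∅ and the columns of A indexed by S ∪ Y linearly independent, then there is Ŝ ∈ W with Ŝ ∩ Y = ∅ and the columns of A indexed by Ŝ ∪ Y linearly independent. -/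
/-- The `p × p` minor `det A[I, S]` of the matrix `A`, where the rows `I` and columns `S`
are taken in increasing order (junk value `0` if `I` or `S` does not have exactly `p`
elements). -/
noncomputable def detMinor {𝔽 : Type*} [Field 𝔽] {k n : ℕ} (p : ℕ)
    (A : Matrix (Fin k) (Fin n) 𝔽) (I : Finset (Fin k)) (S : Finset (Fin n)) : 𝔽 :=
  if h : I.card = p ∧ S.card = p then
    (A.submatrix (fun a => I.orderEmbOfFin h.1 a) (fun b => S.orderEmbOfFin h.2 b)).det
  else 0

/-- The vector `φ(S) ∈ 𝔽^{C(k,p)}`, indexed by the `p`-subsets `I` of the row set of `A`,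
whose `I`-coordinate is the minor `det A[I, S]`. -/
noncomputable def phiVec {𝔽 : Type*} [Field 𝔽] {k n : ℕ} (p : ℕ)
    (A : Matrix (Fin k) (Fin n) 𝔽) (S : Finset (Fin n)) :
    {I : Finset (Fin k) // I.card = p} → 𝔽 :=
  fun I => detMinor p A I.1 S

/-- The columns of `A` indexed by `S` are linearly independent. -/
def ColsIndep {𝔽 : Type*} [Field 𝔽] {k n : ℕ} (A : Matrix (Fin k) (Fin n) 𝔽)
    (S : Finset (Fin n)) : Prop :=
  LinearIndependent 𝔽 (fun j : (S : Set (Fin n)) => fun i => A i j)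



section
variable {𝔽 : Type*} [Field 𝔽] {k n p q : ℕ}

noncomputable def sumAlt (hk : k = p + q) :
    AlternatingMap 𝔽 (Fin k → 𝔽) 𝔽 (Fin p ⊕ Fin q) :=
  (Matrix.detRowAlternating).domDomCongr ((finCongr hk).trans finSumFinEquiv.symm)

noncomputable def Fy (hk : k = p + q) (y : Fin q → Fin k → 𝔽) :
    AlternatingMap 𝔽 (Fin k → 𝔽) 𝔽 (Fin p) where
  toFun v := sumAlt hk (Sum.elim v y)
  map_update_add' v a x x' := by
    simp only [← Sum.update_elim_inl, (sumAlt hk).map_update_add]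
  map_update_smul' v a c x := by
    simp only [← Sum.update_elim_inl, (sumAlt hk).map_update_smul]
  map_eq_zero_of_eq' v a b hv hab := by
    refine (sumAlt hk).map_eq_zero_of_eq _ (i := Sum.inl a) (j := Sum.inl b) (by simpa) (by simpa)

noncomputable def mI (I : Finset (Fin k)) (hI : I.card = p) :
    AlternatingMap 𝔽 (Fin k → 𝔽) 𝔽 (Fin p) :=
  (Matrix.detRowAlternating).compLinearMap (LinearMap.funLeft 𝔽 𝔽 (I.orderEmbOfFin hI))

lemma mI_apply (I : Finset (Fin k)) (hI : I.card = p) (v : Fin p → Fin k → 𝔽) :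
    mI I hI v = (Matrix.of fun a b => v a (I.orderEmbOfFin hI b)).det := rfl

lemma altSum_apply {ι' : Type*} (s : Finset ι')
    (f : ι' → AlternatingMap 𝔽 (Fin k → 𝔽) 𝔽 (Fin p)) (v : Fin p → Fin k → 𝔽) :
    (∑ i ∈ s, f i) v = ∑ i ∈ s, f i v := by
  induction s using Finset.cons_induction with
  | empty => rfl
  | cons a s ha ih => simp [Finset.sum_cons, AlternatingMap.add_apply, ih]

/-- Laplace expansion. -/
lemma laplace (hk : k = p + q) (y : Fin q → Fin k → 𝔽) (v : Fin p → Fin k → 𝔽) :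
    Fy hk y v = ∑ I : {I : Finset (Fin k) // I.card = p},
      (Fy hk y fun a => Pi.single (I.1.orderEmbOfFin I.2 a) 1) * mI I.1 I.2 v := by
  classical
  set c : {I : Finset (Fin k) // I.card = p} → 𝔽 :=
    fun I => Fy hk y fun a => Pi.single (I.1.orderEmbOfFin I.2 a) 1 with hc
  have key : Fy hk y = ∑ I : {I : Finset (Fin k) // I.card = p}, c I • mI I.1 I.2 := by
    refine Module.Basis.ext_alternating (Pi.basisFun 𝔽 (Fin k)) fun w hw => ?_
    have hwcard : (Finset.univ.image w).card = p := by
      rw [Finset.card_image_of_injective _ hw, Finset.card_univ, Fintype.card_fin]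
    set I₀ : {I : Finset (Fin k) // I.card = p} := ⟨Finset.univ.image w, hwcard⟩ with hI₀
    have hwmem : ∀ a, w a ∈ I₀.1 := fun a => Finset.mem_image_of_mem w (Finset.mem_univ a)
    set τ : Fin p → Fin p := fun a => (I₀.1.orderIsoOfFin I₀.2).symm ⟨w a, hwmem a⟩ with hτ
    have hτinj : Function.Injective τ := by
      intro a b hab
      have := (I₀.1.orderIsoOfFin I₀.2).symm.toEquiv.injective hab
      exact hw (congrArg Subtype.val this)
    set σ : Equiv.Perm (Fin p) :=
      Equiv.ofBijective τ ((Finite.injective_iff_bijective).1 hτinj) with hσ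
    have hσw : ∀ a, I₀.1.orderEmbOfFin I₀.2 (σ a) = w a := by
      intro a
      have : ((I₀.1.orderIsoOfFin I₀.2) (τ a) : Fin k) = w a := by simp [hτ]
      simp only [Finset.coe_orderIsoOfFin_apply] at this
      exact this
    rw [altSum_apply]
    have hzero : ∀ I : {I : Finset (Fin k) // I.card = p}, I ≠ I₀ →
        (c I • mI I.1 I.2) (fun a => Pi.basisFun 𝔽 (Fin k) (w a)) = 0 := by
      intro I hI
      have hnot : ∃ a, w a ∉ I.1 := by
        by_contra h
        push_neg at h
        refine hI (Subtype.ext (Finset.eq_of_subset_of_card_le ?_ (by simp [I.2, hwcard, hI₀])).symm)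
        intro x hx
        obtain ⟨a, -, rfl⟩ := Finset.mem_image.1 hx
        exact h a
      obtain ⟨a, ha⟩ := hnot
      rw [AlternatingMap.smul_apply, mI_apply]
      have hrow : ∀ b, (Matrix.of fun a b =>
          (Pi.basisFun 𝔽 (Fin k) (w a) : Fin k → 𝔽) (I.1.orderEmbOfFin I.2 b)) a b = 0 := by
        intro b
        simp only [Matrix.of_apply, Pi.basisFun_apply, Pi.single_apply]
        rw [if_neg]
        intro h
        exact ha (h ▸ Finset.orderEmbOfFin_mem I.1 I.2 b)
      rw [Matrix.det_eq_zero_of_row_eq_zero a hrow, smul_zero]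
    rw [Finset.sum_eq_single_of_mem I₀ (Finset.mem_univ _) (fun I _ hI => hzero I hI)]
    rw [AlternatingMap.smul_apply, mI_apply]
    have hcond : ∀ a b, (I₀.1.orderEmbOfFin I₀.2 b = w a) ↔ b = σ a := by
      intro a b
      constructor
      · intro h
        exact (I₀.1.orderEmbOfFin I₀.2).injective (by rw [h, hσw])
      · rintro rfl
        exact hσw a
    have hmat : (Matrix.of fun a b =>
        (Pi.basisFun 𝔽 (Fin k) (w a) : Fin k → 𝔽) (I₀.1.orderEmbOfFin I₀.2 b)) =
        σ.permMatrix 𝔽 := by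
      ext a b
      simp only [Matrix.of_apply, Pi.basisFun_apply, Pi.single_apply,
        Equiv.Perm.permMatrix, PEquiv.toMatrix_apply, Equiv.toPEquiv_apply, Option.mem_def,
        Option.some.injEq]
      simp only [hcond a b]
      by_cases h : b = σ a <;> simp [h, eq_comm]
    rw [hmat, Matrix.det_permutation]
    have hlhs : (fun a => (Pi.basisFun 𝔽 (Fin k) (w a) : Fin k → 𝔽)) =
        (fun a => (Pi.single (I₀.1.orderEmbOfFin I₀.2 a) 1 : Fin k → 𝔽)) ∘ σ := by
      funext a
      simp [Function.comp, hσw, Pi.basisFun_apply]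
    rw [hlhs, AlternatingMap.map_perm]
    rcases Int.units_eq_one_or (Equiv.Perm.sign σ) with h | h <;>
      simp [h, hc, smul_smul]
  conv_lhs => rw [key]
  rw [altSum_apply]
  simp [AlternatingMap.smul_apply, smul_eq_mul, hc]

variable (A : Matrix (Fin k) (Fin n) 𝔽)

lemma det_ne_iff (u : Fin k → Fin n) :
    (A.transpose.submatrix u id).det ≠ 0 ↔
      LinearIndependent 𝔽 (fun j : Fin k => fun i => A i (u j)) := by
  rw [← isUnit_iff_ne_zero, ← Matrix.isUnit_iff_isUnit_det,
    ← Matrix.linearIndependent_rows_iff_isUnit]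
  rfl

lemma Fy_cols (hk : k = p + q) (S' Y' : Finset (Fin n)) (hS' : S'.card = p) (hY' : Y'.card = q) :
    Fy hk (fun b i => A i (Y'.orderEmbOfFin hY' b)) (fun a i => A i (S'.orderEmbOfFin hS' a)) =
    (A.transpose.submatrix (fun j => Sum.elim (fun a => S'.orderEmbOfFin hS' a)
      (fun b => Y'.orderEmbOfFin hY' b) (((finCongr hk).trans finSumFinEquiv.symm) j)) id).det := by
  show Matrix.detRowAlternating _ = _
  rw [Matrix.detRowAlternating]
  congr 1
  funext j i
  cases h : finSumFinEquiv.symm (Fin.cast hk j) <;> simp [finCongr, h]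

end


section
variable {𝔽 : Type*} [Field 𝔽] {k n p q : ℕ} (A : Matrix (Fin k) (Fin n) 𝔽)

lemma pairing (hk : k = p + q) (y : Fin q → Fin k → 𝔽) (S' : Finset (Fin n)) (hS' : S'.card = p) :
    ∑ I : {I : Finset (Fin k) // I.card = p},
        (Fy hk y fun a => Pi.single (I.1.orderEmbOfFin I.2 a) 1) * phiVec p A S' I
      = Fy hk y (fun a i => A i (S'.orderEmbOfFin hS' a)) := by
  rw [laplace hk y]
  refine (Finset.sum_congr rfl fun I _ => ?_).symm
  congr 1
  show _ = detMinor p A I.1 S'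
  rw [detMinor, dif_pos ⟨I.2, hS'⟩, mI_apply, ← Matrix.det_transpose]
  rfl

lemma colsIndep_mono {U V : Finset (Fin n)} (h : U ⊆ V) (hV : ColsIndep A V) :
    ColsIndep A U :=
  hV.comp (Set.inclusion (Finset.coe_subset.2 h)) (Set.inclusion_injective _)

lemma colsIndep_extend
    (hspan : Submodule.span 𝔽 (Set.range fun j : Fin n => fun i => A i j) = ⊤) :
    ∀ m (U : Finset (Fin n)), ColsIndep A U → U.card + m = k →
      ∃ T, U ⊆ T ∧ T.card = k ∧ ColsIndep A T := by
  intro m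
  induction m with
  | zero =>
    intro U hU hcard
    exact ⟨U, subset_rfl, by omega, hU⟩
  | succ m ih =>
    intro U hU hcard
    classical
    set col : Fin n → (Fin k → 𝔽) := fun j i => A i j with hcol
    have hinjOn : Set.InjOn col ↑U := fun x hx y hy hxy =>
      congrArg Subtype.val (hU.injective (a₁ := ⟨x, hx⟩) (a₂ := ⟨y, hy⟩) hxy)
    have hsetU : LinearIndependent 𝔽 ((↑) : (col '' ↑U) → (Fin k → 𝔽)) :=
      (linearIndepOn_iff_image hinjOn).1 hU
    have hproper : ∃ j, col j ∉ Submodule.span 𝔽 (col '' ↑U) := by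
      by_contra h
      push_neg at h
      have hle : Submodule.span 𝔽 (Set.range col) ≤ Submodule.span 𝔽 (col '' ↑U) :=
        Submodule.span_le.2 (by rintro x ⟨j, rfl⟩; exact h j)
      rw [hspan] at hle
      have htop : Submodule.span 𝔽 (col '' ↑U) = ⊤ := top_le_iff.1 hle
      have h1 : Module.finrank 𝔽 (Submodule.span 𝔽 (col '' ↑U)) ≤ U.card := by
        have h2 := finrank_span_finset_le_card (R := 𝔽) (U.image col)
        rw [Set.finrank, Finset.coe_image] at h2
        exact le_trans h2 Finset.card_image_le
      rw [htop, finrank_top, Module.finrank_fin_fun] at h1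
      omega
    obtain ⟨j, hj⟩ := hproper
    have hjU : j ∉ U := fun h => hj (Submodule.subset_span ⟨j, h, rfl⟩)
    have hinjOn' : Set.InjOn col ↑(insert j U) := by
      intro x hx y hy hxy
      rw [Finset.coe_insert, Set.mem_insert_iff] at hx hy
      rcases hx with rfl | hx <;> rcases hy with rfl | hy
      · rfl
      · exact (hj (hxy ▸ Submodule.subset_span (Set.mem_image_of_mem col hy))).elim
      · exact (hj (hxy ▸ Submodule.subset_span (Set.mem_image_of_mem col hx))).elim
      · exact hinjOn hx hy hxy
    have hins : ColsIndep A (insert j U) := by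
      refine (linearIndepOn_iff_image hinjOn').2 ?_
      have himg : col '' ↑(insert j U) = insert (col j) (col '' ↑U) := by
        rw [Finset.coe_insert, Set.image_insert_eq]
      rw [himg]
      exact (show LinearIndepOn 𝔽 id (col '' ↑U) from hsetU).insert (by simpa using hj)
    obtain ⟨T, hT1, hT2, hT3⟩ := ih (insert j U) hins
      (by rw [Finset.card_insert_of_notMem hjU]; omega)
    exact ⟨T, (Finset.subset_insert j U).trans hT1, hT2, hT3⟩

lemma det_iff_indep (hk : k = p + q) (S' Y' : Finset (Fin n))
    (hS' : S'.card = p) (hY' : Y'.card = q) :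
    (A.transpose.submatrix (fun j => Sum.elim (fun a => S'.orderEmbOfFin hS' a)
      (fun b => Y'.orderEmbOfFin hY' b) (((finCongr hk).trans finSumFinEquiv.symm) j)) id).det ≠ 0
    ↔ (Disjoint S' Y' ∧ ColsIndep A (S' ∪ Y')) := by
  classical
  rw [det_ne_iff]
  set e : Fin k ≃ (Fin p ⊕ Fin q) := (finCongr hk).trans finSumFinEquiv.symm with he
  set u : Fin k → Fin n := fun j => Sum.elim (fun a => S'.orderEmbOfFin hS' a)
      (fun b => Y'.orderEmbOfFin hY' b) (e j) with hudef
  have hu : ∀ j, u j = Sum.elim (fun a => S'.orderEmbOfFin hS' a)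
      (fun b => Y'.orderEmbOfFin hY' b) (e j) := fun j => rfl
  have hmemS : ∀ a, ∃ j, u j = S'.orderEmbOfFin hS' a := by
    intro a
    exact ⟨e.symm (Sum.inl a), by rw [hu, Equiv.apply_symm_apply, Sum.elim_inl]⟩
  have hmemY : ∀ b, ∃ j, u j = Y'.orderEmbOfFin hY' b := by
    intro b
    exact ⟨e.symm (Sum.inr b), by rw [hu, Equiv.apply_symm_apply, Sum.elim_inr]⟩
  have hucases : ∀ x ∈ S' ∪ Y', ∃ j, u j = x := by
    intro x hx
    rcases Finset.mem_union.1 hx with hx | hx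
    · obtain ⟨a, ha⟩ : ∃ a, S'.orderEmbOfFin hS' a = x := by
        have hr : x ∈ Set.range (S'.orderEmbOfFin hS') := by
          rw [Finset.range_orderEmbOfFin]; exact hx
        exact hr
      exact ha ▸ hmemS a
    · obtain ⟨b, hb⟩ : ∃ b, Y'.orderEmbOfFin hY' b = x := by
        have hr : x ∈ Set.range (Y'.orderEmbOfFin hY') := by
          rw [Finset.range_orderEmbOfFin]; exact hx
        exact hr
      exact hb ▸ hmemY b
  constructor
  · intro hrows
    have hrowinj : Function.Injective (fun j : Fin k => fun i : Fin k => A i (u j)) :=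
      hrows.injective
    constructor
    · rw [Finset.disjoint_left]
      intro x hxS hxY
      obtain ⟨a, ha⟩ : ∃ a, S'.orderEmbOfFin hS' a = x := by
        have hr : x ∈ Set.range (S'.orderEmbOfFin hS') := by
          rw [Finset.range_orderEmbOfFin]; exact hxS
        exact hr
      obtain ⟨b, hb⟩ : ∃ b, Y'.orderEmbOfFin hY' b = x := by
        have hr : x ∈ Set.range (Y'.orderEmbOfFin hY') := by
          rw [Finset.range_orderEmbOfFin]; exact hxY
        exact hr
      have h1 : u (e.symm (Sum.inl a)) = x := by rw [hu, Equiv.apply_symm_apply, Sum.elim_inl, ha]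
      have h2 : u (e.symm (Sum.inr b)) = x := by rw [hu, Equiv.apply_symm_apply, Sum.elim_inr, hb]
      have heq : e.symm (Sum.inl a) = e.symm (Sum.inr b) := by
        apply hrowinj
        funext i
        simp only [h1, h2]
      exact absurd (e.symm.injective heq) (by simp)
    · have hchoice : ∀ x : ((S' ∪ Y' : Finset (Fin n)) : Set (Fin n)), ∃ j, u j = ↑x :=
        fun x => hucases x x.2
      choose g hg using hchoice
      have hginj : Function.Injective g := by
        intro x1 x2 h12
        apply Subtype.ext
        rw [← hg x1, ← hg x2, h12]
      have hcomp := hrows.comp g hginj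
      have heq : ((fun j : Fin k => fun i => A i (u j)) ∘ g) =
          fun x : ((S' ∪ Y' : Finset (Fin n)) : Set (Fin n)) => fun i => A i ↑x := by
        funext x
        simp only [Function.comp_apply, hg x]
      rwa [heq] at hcomp
  · rintro ⟨hd, hind⟩
    have hmem : ∀ j, u j ∈ S' ∪ Y' := by
      intro j
      rw [hu]
      cases e j with
      | inl a => exact Finset.mem_union_left _ (Finset.orderEmbOfFin_mem S' hS' a)
      | inr b => exact Finset.mem_union_right _ (Finset.orderEmbOfFin_mem Y' hY' b)
    have hginj : Function.Injective
        (fun j => (⟨u j, hmem j⟩ : ((S' ∪ Y' : Finset (Fin n)) : Set (Fin n)))) := by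
      intro j1 j2 h12
      have h12' : u j1 = u j2 := congrArg Subtype.val h12
      rw [hu j1, hu j2] at h12'
      apply e.injective
      cases h1 : e j1 with
      | inl a1 =>
        cases h2 : e j2 with
        | inl a2 =>
          rw [h1, h2, Sum.elim_inl, Sum.elim_inl] at h12'
          rw [(S'.orderEmbOfFin hS').injective h12']
        | inr b2 =>
          rw [h1, h2, Sum.elim_inl, Sum.elim_inr] at h12'
          exact absurd (Finset.orderEmbOfFin_mem Y' hY' b2)
            (Finset.disjoint_left.1 hd (h12' ▸ Finset.orderEmbOfFin_mem S' hS' a1))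
      | inr b1 =>
        cases h2 : e j2 with
        | inl a2 =>
          rw [h1, h2, Sum.elim_inr, Sum.elim_inl] at h12'
          exact absurd (Finset.orderEmbOfFin_mem Y' hY' b1)
            (Finset.disjoint_left.1 hd (h12'.symm ▸ Finset.orderEmbOfFin_mem S' hS' a2))
        | inr b2 =>
          rw [h1, h2, Sum.elim_inr, Sum.elim_inr] at h12'
          rw [(Y'.orderEmbOfFin hY').injective h12']
    have hcomp := hind.comp
      (fun j => (⟨u j, hmem j⟩ : ((S' ∪ Y' : Finset (Fin n)) : Set (Fin n)))) hginj
    have heq : ((fun x : ((S' ∪ Y' : Finset (Fin n)) : Set (Fin n)) => fun i => A i ↑x) ∘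
        (fun j => (⟨u j, hmem j⟩ : ((S' ∪ Y' : Finset (Fin n)) : Set (Fin n))))) =
        fun j : Fin k => fun i => A i (u j) := rfl
    rwa [heq] at hcomp

end

/-- Let `A` be a `k × n` matrix of rank `k = p + q` over a field `𝔽`.
Let `𝒮` be a finite family of `p`-subsets of the column set, each with linearly independent
columns, and let `W ⊆ 𝒮` be such that every `φ(S)` with `S ∈ 𝒮` lies in the span of
`{φ(Ŝ) : Ŝ ∈ W}`. Then `W` is `q`-representative for `𝒮`. -/
theorem stmt2 {𝔽 : Type*} [Field 𝔽] (p q k n : ℕ) (hk : k = p + q)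
    (A : Matrix (Fin k) (Fin n) 𝔽) (hArank : A.rank = k)
    (𝒮 : Finset (Finset (Fin n)))
    (hcard : ∀ S ∈ 𝒮, S.card = p) (hindep : ∀ S ∈ 𝒮, ColsIndep A S)
    (W : Finset (Finset (Fin n))) (hW : W ⊆ 𝒮)
    (hspan : ∀ S ∈ 𝒮,
      phiVec p A S ∈ Submodule.span 𝔽 ((fun T => phiVec p A T) '' (W : Set (Finset (Fin n))))) :
    ∀ Y : Finset (Fin n), Y.card ≤ q → ∀ S ∈ 𝒮, Disjoint S Y → ColsIndep A (S ∪ Y) →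
      ∃ Shat ∈ W, Disjoint Shat Y ∧ ColsIndep A (Shat ∪ Y) := by
  classical
  intro Y hYq S hS hdisj hSY
  have hScard := hcard S hS
  -- the columns of A span everything
  have hspanA : Submodule.span 𝔽 (Set.range fun j : Fin n => fun i => A i j) = ⊤ := by
    apply Submodule.eq_top_of_finrank_eq
    have h1 : A.rank = Module.finrank 𝔽
        (Submodule.span 𝔽 (Set.range fun j : Fin n => fun i => A i j)) := by
      rw [Matrix.rank, Matrix.range_mulVecLin]
      rfl
    rw [← h1, hArank, Module.finrank_fin_fun]
  -- extend S ∪ Y to a set T of k independent columns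
  have hUle : (S ∪ Y).card ≤ k := by
    have h1 := hSY.fintype_card_le_finrank
    have h2 : Fintype.card ((S ∪ Y : Finset (Fin n)) : Set (Fin n)) = (S ∪ Y).card :=
      Fintype.card_coe _
    rwa [h2, Module.finrank_fin_fun] at h1
  obtain ⟨T, hUT, hTcard, hTind⟩ :=
    colsIndep_extend A hspanA (k - (S ∪ Y).card) (S ∪ Y) hSY (by omega)
  have hST : S ⊆ T := fun x hx => hUT (Finset.mem_union_left _ hx)
  set Y' : Finset (Fin n) := T \ S with hY'def
  have hYY' : Y ⊆ Y' := fun x hx => Finset.mem_sdiff.2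
    ⟨hUT (Finset.mem_union_right _ hx), fun hxS => Finset.disjoint_left.1 hdisj hxS hx⟩
  have hY'card : Y'.card = q := by
    rw [hY'def, Finset.card_sdiff_of_subset hST, hTcard, hScard]
    omega
  set y : Fin q → Fin k → 𝔽 := fun b i => A i (Y'.orderEmbOfFin hY'card b) with hy
  set c : {I : Finset (Fin k) // I.card = p} → 𝔽 :=
    fun I => Fy hk y fun a => Pi.single (I.1.orderEmbOfFin I.2 a) 1 with hcdef
  set ψ : ({I : Finset (Fin k) // I.card = p} → 𝔽) →ₗ[𝔽] 𝔽 :=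
    ∑ I : {I : Finset (Fin k) // I.card = p}, c I • LinearMap.proj I with hψdef
  have hψ : ∀ x, ψ x = ∑ I : {I : Finset (Fin k) // I.card = p}, c I * x I := by
    intro x
    rw [hψdef, LinearMap.sum_apply]
    refine Finset.sum_congr rfl fun I _ => ?_
    rw [LinearMap.smul_apply, LinearMap.proj_apply, smul_eq_mul]
  have hpair : ∀ S' (hS' : S'.card = p),
      ψ (phiVec p A S') =
      (A.transpose.submatrix (fun j => Sum.elim (fun a => S'.orderEmbOfFin hS' a)
        (fun b => Y'.orderEmbOfFin hY'card b)
        (((finCongr hk).trans finSumFinEquiv.symm) j)) id).det := by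
    intro S' hS'
    rw [hψ, pairing A hk y S' hS', Fy_cols A hk S' Y' hS' hY'card]
  -- ψ does not vanish on φ(S)
  have hSne : ψ (phiVec p A S) ≠ 0 := by
    rw [hpair S hScard]
    refine (det_iff_indep A hk S Y' hScard hY'card).2 ⟨Finset.disjoint_sdiff, ?_⟩
    have hTeq : S ∪ Y' = T := by
      rw [hY'def, Finset.union_sdiff_of_subset hST]
    rwa [hTeq]
  -- hence ψ does not vanish on some φ(Ŝ) with Ŝ ∈ W
  have hWex : ∃ Shat ∈ W, ψ (phiVec p A Shat) ≠ 0 := by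
    by_contra h
    push_neg at h
    have hker : Submodule.span 𝔽 ((fun T => phiVec p A T) '' (W : Set (Finset (Fin n)))) ≤
        LinearMap.ker ψ := by
      refine Submodule.span_le.2 ?_
      rintro x ⟨Shat, hShat, rfl⟩
      exact LinearMap.mem_ker.2 (h Shat hShat)
    exact hSne (hker (hspan S hS))
  obtain ⟨Shat, hShatW, hne⟩ := hWex
  have hShatcard := hcard Shat (hW hShatW)
  rw [hpair Shat hShatcard] at hne
  obtain ⟨hd, hind⟩ := (det_iff_indep A hk Shat Y' hShatcard hY'card).1 hne
  refine ⟨Shat, hShatW, ?_, ?_⟩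
  · exact hd.mono_right hYY'
  · exact colsIndep_mono A (Finset.union_subset_union_right hYY') hind
end

section
/- Let V be a vector space over a field F, let S be a finite indexed family of vectors of V, and let w assign a natural-number weight to each member of S. Let W ⊆ S be a subfamily that is linearly independent and spans the linear span of S (i.e., W is a basis of span(S) chosen from S), and suppose W has minimum total weight among all subfamilies of S that are bases of span(S). Then for every v ∈ S, writing v = Σ_{u ∈ W} λ_u · u with coefficients λ_u ∈ F, every u ∈ W with λ_u ≠ 0 satisfies w(u) ≤ w(v). -/
lemma finsetIndep_iff' {𝔽 V ι : Type*} [Field 𝔽] [AddCommGroup V] [Module 𝔽 V]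
    (v : ι → V) (s : Finset ι) :
    LinearIndependent 𝔽 (fun i : (s : Set ι) => v i) ↔
      ∀ g : ι → 𝔽, ∑ k ∈ s, g k • v k = 0 → ∀ k ∈ s, g k = 0 := by
  classical
  rw [Fintype.linearIndependent_iff]
  constructor
  · intro h g hg k hk
    exact h (fun i => g i) (by rw [← hg, ← Finset.sum_finset_coe (fun k => g k • v k)]) ⟨k, hk⟩
  · intro h g hg i
    set g' : ι → 𝔽 := fun k => if hk : k ∈ s then g ⟨k, hk⟩ else 0 with hg'
    have : ∑ k ∈ s, g' k • v k = 0 := by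
      rw [← Finset.sum_finset_coe (fun k => g' k • v k), ← hg]
      exact Finset.sum_congr rfl fun x _ => by simp [g', x.2]
    simpa [g', i.2] using h g' this i i.2

/-- Let `v : ι → V` be a finite indexed family of vectors of a vector space
`V` over a field `𝔽`, with natural-number weights `w`. Let `W` be a subfamily of the index
set which is linearly independent and spans the span of the whole family (a basis of
`span (range v)` chosen from the family), of minimum total weight among all such subfamilies.
Then for every index `j`, writing `v j = ∑ i ∈ W, lam i • v i`, every `i ∈ W` with
`lam i ≠ 0` satisfies `w i ≤ w j`. -/
theorem stmt3 {𝔽 V : Type*} [Field 𝔽] [AddCommGroup V] [Module 𝔽 V]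
    {ι : Type*} [Fintype ι] (v : ι → V) (w : ι → ℕ)
    (W : Finset ι)
    (hindep : LinearIndependent 𝔽 (fun i : (W : Set ι) => v i))
    (hspan : Submodule.span 𝔽 (v '' (W : Set ι)) = Submodule.span 𝔽 (Set.range v))
    (hmin : ∀ W' : Finset ι,
      LinearIndependent 𝔽 (fun i : (W' : Set ι) => v i) →
      Submodule.span 𝔽 (v '' (W' : Set ι)) = Submodule.span 𝔽 (Set.range v) →
      ∑ i ∈ W, w i ≤ ∑ i ∈ W', w i)
    (j : ι) (lam : ι → 𝔽) (hexp : v j = ∑ i ∈ W, lam i • v i) :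
    ∀ i ∈ W, lam i ≠ 0 → w i ≤ w j := by
  classical
  rw [finsetIndep_iff'] at hindep
  intro i hi hlam
  by_cases hjW : j ∈ W
  · -- uniqueness: lam is the delta function at j, so i = j
    have hz : ∑ k ∈ W, (lam k - if k = j then 1 else 0) • v k = 0 := by
      rw [Finset.sum_congr rfl (fun k _ => sub_smul (lam k) _ (v k)), Finset.sum_sub_distrib,
        ← hexp]
      simp [Finset.sum_ite_eq' W j (fun k => (1 : 𝔽) • v k), hjW]
    have hi' := hindep _ hz i hi
    by_cases hij : i = j
    · subst hij; exact le_refl _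
    · exfalso; apply hlam; simpa [hij] using hi'
  · by_contra hc
    push_neg at hc
    set W' : Finset ι := insert j (W.erase i) with hW'
    have hjE : j ∉ W.erase i := fun h => hjW (Finset.mem_of_mem_erase h)
    -- independence of W'
    have hindep' : LinearIndependent 𝔽 (fun k : (W' : Set ι) => v k) := by
      rw [finsetIndep_iff']
      intro g hg
      rw [hW', Finset.sum_insert hjE] at hg
      -- substitute hexp
      have key : ∑ k ∈ W, ((g j * lam k) + if k = i then 0 else g k) • v k = 0 := by
        have h1 : ∑ k ∈ W, (g j * lam k) • v k = g j • v j := by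
          rw [hexp, Finset.smul_sum]
          exact Finset.sum_congr rfl fun k _ => by rw [smul_smul]
        have h2 : ∑ k ∈ W, (if k = i then 0 else g k) • v k
            = ∑ k ∈ W.erase i, g k • v k := by
          rw [← Finset.add_sum_erase _ _ hi, if_pos rfl, zero_smul, zero_add]
          exact Finset.sum_congr rfl fun k hk => by
            rw [if_neg (Finset.ne_of_mem_erase hk)]
        rw [Finset.sum_congr rfl (fun k _ => add_smul _ _ (v k)), Finset.sum_add_distrib,
          h1, h2, hg]
      have hj0 : g j = 0 := by
        have := hindep _ key i hi
        rw [if_pos rfl, add_zero] at this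
        rcases mul_eq_zero.mp this with h | h
        · exact h
        · exact absurd h hlam
      intro k hk
      rw [hW', Finset.mem_insert] at hk
      rcases hk with rfl | hk
      · exact hj0
      · have hki : k ≠ i := Finset.ne_of_mem_erase hk
        have := hindep _ key k (Finset.mem_of_mem_erase hk)
        simpa [hj0, hki] using this
    -- span of W'
    have hspan' : Submodule.span 𝔽 (v '' (W' : Set ι)) = Submodule.span 𝔽 (Set.range v) := by
      apply le_antisymm
      · exact Submodule.span_mono (Set.image_subset_range v _)
      · rw [← hspan]
        apply Submodule.span_le.mpr
        rintro x ⟨k, hk, rfl⟩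
        simp only [Finset.mem_coe] at hk
        by_cases hki : k = i
        · subst hki
          -- v k = (lam k)⁻¹ • (v j - ∑ over erase)
          have hsum : v j = lam k • v k + ∑ m ∈ W.erase k, lam m • v m := by
            rw [hexp, ← Finset.add_sum_erase _ _ hk]
          have hmem : lam k • v k ∈ Submodule.span 𝔽 (v '' (W' : Set ι)) := by
            have hvj : v j ∈ Submodule.span 𝔽 (v '' (W' : Set ι)) :=
              Submodule.subset_span ⟨j, Finset.mem_coe.mpr (Finset.mem_insert_self _ _), rfl⟩
            have hrest : ∑ m ∈ W.erase k, lam m • v m ∈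
                Submodule.span 𝔽 (v '' (W' : Set ι)) := by
              apply Submodule.sum_mem
              intro m hm
              exact Submodule.smul_mem _ _
                (Submodule.subset_span ⟨m, Finset.mem_coe.mpr
                  (Finset.mem_insert_of_mem hm), rfl⟩)
            have : lam k • v k = v j - ∑ m ∈ W.erase k, lam m • v m := by
              rw [hsum]; abel
            rw [this]
            exact Submodule.sub_mem _ hvj hrest
          have := Submodule.smul_mem _ (lam k)⁻¹ hmem
          rwa [inv_smul_smul₀ hlam] at this
        · exact Submodule.subset_span ⟨k, Finset.mem_coe.mpr
            (Finset.mem_insert_of_mem (Finset.mem_erase.mpr ⟨hki, hk⟩)), rfl⟩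
    -- weight contradiction
    have hle := hmin W' hindep' hspan'
    have hsum' : ∑ k ∈ W', w k = w j + ∑ k ∈ W.erase i, w k := Finset.sum_insert hjE
    have hsumW : ∑ k ∈ W, w k = w i + ∑ k ∈ W.erase i, w k := (Finset.add_sum_erase _ _ hi).symm
    omega
end

section
/- Let M = (E, I) be a matroid of rank k, let S_1 be a family of independent sets of M each of size p_1, and let S_2 be a family of independent sets of M each of size p_2. If Ŝ_1 ⊆ S_1 is (k − p_1)-representative for S_1 and Ŝ_2 ⊆ S_2 is (k − p_2)-representative for S_2, then Ŝ_1 • Ŝ_2 is (k − p_1 − p_2)-representative for S_1 • S_2. -/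
/-- `Shat ⊆ S` is a `q`-representative subfamily of `S` with respect to the matroid `M`. -/
def QRepFam {α : Type*} (M : Matroid α) (q : ℕ) (S Shat : Set (Set α)) : Prop :=
  Shat ⊆ S ∧
    ∀ Y : Set α, Y ⊆ M.E → Y.encard ≤ (q : ℕ∞) →
      ∀ X ∈ S, Disjoint X Y → M.Indep (X ∪ Y) →
        ∃ Xhat ∈ Shat, Disjoint Xhat Y ∧ M.Indep (Xhat ∪ Y)

/-- The product `A • B = {X ∪ Y : X ∈ A, Y ∈ B, X ∩ Y = ∅}` of two families of sets. -/
def dotSet {α : Type*} (A B : Set (Set α)) : Set (Set α) :=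
  {Z | ∃ X ∈ A, ∃ Y ∈ B, Disjoint X Y ∧ Z = X ∪ Y}

/-- Let `M` be a matroid of rank `k`, let `S₁` be a family of independent
sets each of size `p₁` and `S₂` a family of independent sets each of size `p₂`. If
`Ŝ₁ ⊆ S₁` is `(k − p₁)`-representative for `S₁` and `Ŝ₂ ⊆ S₂` is `(k − p₂)`-representative
for `S₂`, then `Ŝ₁ • Ŝ₂` is `(k − p₁ − p₂)`-representative for `S₁ • S₂`. -/
theorem stmt6 {α : Type*} (M : Matroid α) (k : ℕ) (hrank : MatroidRankEq M k)
    (p₁ p₂ : ℕ) (S₁ S₂ : Set (Set α))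
    (hS₁ : ∀ X ∈ S₁, M.Indep X ∧ X.encard = (p₁ : ℕ∞))
    (hS₂ : ∀ X ∈ S₂, M.Indep X ∧ X.encard = (p₂ : ℕ∞))
    (Sh₁ Sh₂ : Set (Set α))
    (h₁ : QRepFam M (k - p₁) S₁ Sh₁) (h₂ : QRepFam M (k - p₂) S₂ Sh₂) :
    QRepFam M (k - p₁ - p₂) (dotSet S₁ S₂) (dotSet Sh₁ Sh₂) := by
  obtain ⟨B, hB, hBcard⟩ := hrank
  constructor
  · rintro Z ⟨X, hX, Y, hY, hd, rfl⟩
    exact ⟨X, h₁.1 hX, Y, h₂.1 hY, hd, rfl⟩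
  rintro Y hYE hYcard Z ⟨X₁, hX₁, X₂, hX₂, hd12, rfl⟩ hdY hInd
  obtain ⟨hX₁i, hX₁c⟩ := hS₁ X₁ hX₁
  obtain ⟨hX₂i, hX₂c⟩ := hS₂ X₂ hX₂
  have hd1Y : Disjoint X₁ Y := (Set.disjoint_union_left.mp hdY).1
  have hd2Y : Disjoint X₂ Y := (Set.disjoint_union_left.mp hdY).2
  -- p₁ + p₂ ≤ k since X₁ ∪ X₂ is independent
  have hpk : p₁ + p₂ ≤ k := by
    have hind12 : M.Indep (X₁ ∪ X₂) := hInd.subset Set.subset_union_left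
    obtain ⟨B', hB', hsub⟩ := hind12.exists_isBase_superset
    have hle : (X₁ ∪ X₂).encard ≤ B'.encard := Set.encard_le_encard hsub
    rw [hB'.encard_eq_encard_of_isBase hB, hBcard,
      Set.encard_union_eq hd12, hX₁c, hX₂c] at hle
    exact_mod_cast hle
  -- apply h₂ with Y' = X₁ ∪ Y
  have hX1E : X₁ ⊆ M.E := hX₁i.subset_ground
  have hY'E : X₁ ∪ Y ⊆ M.E := Set.union_subset hX1E hYE
  have hY'card : (X₁ ∪ Y).encard ≤ ((k - p₂ : ℕ) : ℕ∞) := by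
    calc (X₁ ∪ Y).encard ≤ X₁.encard + Y.encard := Set.encard_union_le _ _
      _ ≤ (p₁ : ℕ∞) + ((k - p₁ - p₂ : ℕ) : ℕ∞) := by
          rw [hX₁c]; exact add_le_add_right hYcard _
      _ = ((p₁ + (k - p₁ - p₂) : ℕ) : ℕ∞) := by push_cast; ring
      _ ≤ ((k - p₂ : ℕ) : ℕ∞) := by
          exact Nat.cast_le.mpr (by omega)
  have hd2' : Disjoint X₂ (X₁ ∪ Y) := Set.disjoint_union_right.mpr ⟨hd12.symm, hd2Y⟩
  have hInd2 : M.Indep (X₂ ∪ (X₁ ∪ Y)) := by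
    have : X₂ ∪ (X₁ ∪ Y) = X₁ ∪ X₂ ∪ Y := by ext x; simp; tauto
    rwa [this]
  obtain ⟨X₂h, hX₂h, hX₂hd, hX₂hi⟩ := h₂.2 (X₁ ∪ Y) hY'E hY'card X₂ hX₂ hd2' hInd2
  -- apply h₁ with Y'' = X₂h ∪ Y
  obtain ⟨hX₂hi', hX₂hc⟩ := hS₂ X₂h (h₂.1 hX₂h)
  have hY''E : X₂h ∪ Y ⊆ M.E := Set.union_subset hX₂hi'.subset_ground hYE
  have hY''card : (X₂h ∪ Y).encard ≤ ((k - p₁ : ℕ) : ℕ∞) := by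
    calc (X₂h ∪ Y).encard ≤ X₂h.encard + Y.encard := Set.encard_union_le _ _
      _ ≤ (p₂ : ℕ∞) + ((k - p₁ - p₂ : ℕ) : ℕ∞) := by
          rw [hX₂hc]; exact add_le_add_right hYcard _
      _ = ((p₂ + (k - p₁ - p₂) : ℕ) : ℕ∞) := by push_cast; ring
      _ ≤ ((k - p₁ : ℕ) : ℕ∞) := by
          exact Nat.cast_le.mpr (by omega)
  have hd1' : Disjoint X₁ (X₂h ∪ Y) :=
    Set.disjoint_union_right.mpr ⟨((Set.disjoint_union_right.mp hX₂hd).1).symm, hd1Y⟩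
  have hInd1 : M.Indep (X₁ ∪ (X₂h ∪ Y)) := by
    have : X₁ ∪ (X₂h ∪ Y) = X₂h ∪ (X₁ ∪ Y) := by ext x; simp; tauto
    rwa [this]
  obtain ⟨X₁h, hX₁h, hX₁hd, hX₁hi⟩ := h₁.2 (X₂h ∪ Y) hY''E hY''card X₁ hX₁ hd1' hInd1
  refine ⟨X₁h ∪ X₂h, ⟨X₁h, hX₁h, X₂h, hX₂h, (Set.disjoint_union_right.mp hX₁hd).1, rfl⟩, ?_, ?_⟩
  · exact Set.disjoint_union_left.mpr
      ⟨(Set.disjoint_union_right.mp hX₁hd).2, (Set.disjoint_union_right.mp hX₂hd).2⟩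
  · have : X₁h ∪ X₂h ∪ Y = X₁h ∪ (X₂h ∪ Y) := by ext x; simp; tauto
    rwa [this]
end

section
/- Let p, q ≥ 1 be integers, let U be a finite set of size n ≥ 3, and set t = ⌈ ((p+q)^{p+q} / (p^p · q^q)) · (p+q+1) · ln n ⌉. Then there exists a family F of t subsets of U such that: (i) for every pair of disjoint subsets A, B ⊆ U with |A| = p and |B| = q there is a set F ∈ F with A ⊆ F and F ∩ B = ∅; and (ii) every subset A ⊆ U with |A| = p is contained in at most 6 · t · (p/(p+q))^p members of F. -/
open Finset

theorem aux_fin_lt_card (m p : ℕ) (h : p ≤ m) :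
    ((Finset.univ : Finset (Fin m)).filter (fun v : Fin m => (v : ℕ) < p)).card = p := by
  have : (Finset.univ : Finset (Fin m)).filter (fun v : Fin m => (v : ℕ) < p)
      = (Finset.range p).attachFin (fun a ha => lt_of_lt_of_le (Finset.mem_range.mp ha) h) := by
    ext v; simp [Finset.mem_attachFin]
  rw [this, Finset.card_attachFin, Finset.card_range]

theorem aux_count_pi {ι β : Type*} [Fintype ι] [DecidableEq ι] [Fintype β]
    (G : Finset β) (S : Finset ι) (E : Finset (ι → β))
    (hE : ∀ ω, ω ∈ E ↔ ∀ i ∈ S, ω i ∈ G) :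
    E.card = G.card ^ S.card * (Fintype.card β) ^ (Fintype.card ι - S.card) := by
  classical
  have h1 : E = Fintype.piFinset (fun i => if i ∈ S then G else Finset.univ) := by
    ext ω
    rw [hE]
    simp only [Fintype.mem_piFinset]
    constructor
    · intro h i; by_cases hi : i ∈ S <;> simp [hi, h]
    · intro h i hi; have := h i; rwa [if_pos hi] at this
  rw [h1, Fintype.card_piFinset]
  have h2 : ∀ i : ι, (if i ∈ S then G else (Finset.univ : Finset β)).card
      = if i ∈ S then G.card else Fintype.card β := by
    intro i; split_ifs <;> simp
  simp only [h2]
  rw [Finset.prod_ite, Finset.prod_const, Finset.prod_const]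
  congr 1
  · congr 1; rw [Finset.filter_univ_mem]
  · congr 1
    have h3 := Finset.card_filter_add_card_filter_not
      (s := (Finset.univ : Finset ι)) (p := fun i => i ∈ S)
    rw [Finset.filter_univ_mem, Finset.card_univ] at h3
    omega

theorem aux_count_g {α : Type*} [Fintype α] [DecidableEq α] (m p : ℕ) (hpm : p ≤ m)
    (A B : Finset α) (hAB : Disjoint A B) (E : Finset (α → Fin m))
    (hE : ∀ g, g ∈ E ↔ (∀ x ∈ A, (g x : ℕ) < p) ∧ (∀ x ∈ B, ¬ (g x : ℕ) < p)) :
    E.card = p ^ A.card * (m - p) ^ B.card * m ^ (Fintype.card α - A.card - B.card) := by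
  classical
  set L : Finset (Fin m) := Finset.univ.filter (fun v : Fin m => (v : ℕ) < p) with hL
  have hLcard : L.card = p := aux_fin_lt_card m p hpm
  have hLc : Lᶜ.card = m - p := by
    rw [Finset.card_compl, hLcard, Fintype.card_fin]
  have h1 : E = Fintype.piFinset (fun x => if x ∈ A then L else if x ∈ B then Lᶜ else
      Finset.univ) := by
    ext g
    rw [hE]
    simp only [Fintype.mem_piFinset]
    constructor
    · rintro ⟨h1, h2⟩ x
      by_cases hx : x ∈ A
      · rw [if_pos hx]; simp [hL, h1 x hx]
      · rw [if_neg hx]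
        by_cases hx' : x ∈ B
        · rw [if_pos hx']; simp [hL]; exact le_of_not_gt (h2 x hx')
        · rw [if_neg hx']; simp
    · intro h
      constructor
      · intro x hx; have := h x; rw [if_pos hx] at this; simpa [hL] using this
      · intro x hx
        have hxA : x ∉ A := fun hxa => (Finset.disjoint_left.mp hAB hxa) hx
        have := h x; rw [if_neg hxA, if_pos hx] at this; simpa [hL] using this
  rw [h1, Fintype.card_piFinset]
  have h2 : ∀ x : _, (if x ∈ A then L else if x ∈ B then Lᶜ else
      (Finset.univ : Finset (Fin m))).card
      = if x ∈ A then p else if x ∈ B then m - p else m := by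
    intro x; split_ifs <;> simp [hLcard, hLc]
  simp only [h2]
  rw [Finset.prod_ite, Finset.prod_const, Finset.filter_univ_mem]
  rw [Finset.prod_ite, Finset.prod_const, Finset.prod_const]
  have hBf : ((Finset.univ.filter fun x => x ∉ A).filter fun x => x ∈ B) = B := by
    ext x
    simp only [Finset.mem_filter, Finset.mem_univ, true_and]
    exact ⟨fun h => h.2, fun h => ⟨fun hxa => (Finset.disjoint_left.mp hAB hxa) h, h⟩⟩
  have hCf : ((Finset.univ.filter fun x => x ∉ A).filter fun x => x ∉ B).card
      = Fintype.card α - A.card - B.card := by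
    have e1 := Finset.card_filter_add_card_filter_not
      (s := (Finset.univ : Finset α)) (p := fun x => x ∈ A)
    rw [Finset.filter_univ_mem, Finset.card_univ] at e1
    have e2 := Finset.card_filter_add_card_filter_not
      (s := Finset.univ.filter fun x => x ∉ A) (p := fun x => x ∈ B)
    rw [hBf] at e2
    omega
  rw [hBf, hCf, mul_assoc]

theorem aux_filter_neg_card {β : Type*} [Fintype β] [DecidableEq β] (E F : Finset β)
    (hEF : ∀ g, g ∈ E ↔ ¬ g ∈ F) : E.card = Fintype.card β - F.card := by
  have : E = Fᶜ := by ext g; rw [hEF, Finset.mem_compl]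
  rw [this, Finset.card_compl]

theorem aux_exp16 : Real.exp 1 / 6 ≤ Real.exp (-(1 / 2) : ℝ) := by
  have hexp1 : Real.exp 1 < 2.7182818286 := Real.exp_one_lt_d9
  have h1 : Real.exp (3 / 2 : ℝ) ^ 2 = Real.exp 1 ^ 3 := by
    rw [← Real.exp_nat_mul, ← Real.exp_nat_mul]; norm_num
  have h5 : Real.exp 1 ^ 3 < 2.7182818286 ^ 3 :=
    pow_lt_pow_left₀ hexp1 (Real.exp_pos 1).le (by norm_num)
  have h6 : (2.7182818286 : ℝ) ^ 3 < 36 := by norm_num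
  have h2 : Real.exp (3 / 2 : ℝ) < 6 := by
    nlinarith [Real.exp_pos (3 / 2 : ℝ)]
  have h3 : Real.exp 1 = Real.exp (3 / 2 : ℝ) * Real.exp (-(1 / 2) : ℝ) := by
    rw [← Real.exp_add]; norm_num
  rw [div_le_iff₀ (by norm_num : (0:ℝ) < 6), h3]
  have h4 := Real.exp_pos (-(1 / 2) : ℝ)
  nlinarith

theorem aux_mono (P M L A : ℝ) (hP : 0 ≤ P) (hL : 0 ≤ L) (hM : 3 ≤ M)
    (h : 6 * ((1 + P) * (M * L)) ≤ A) : 6 * ((1 + P) * (3 * L)) ≤ A := by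
  nlinarith [mul_nonneg (by linarith : (0:ℝ) ≤ 1 + P) hL]

theorem aux_loglin (P L A : ℝ) (hP : 0 ≤ P) (h3 : 1 < Real.log 3) (hL : Real.log 3 ≤ L)
    (ha : 6 * ((1 + P) * (3 * L)) ≤ A) : P * L + -(A / 2) ≤ -Real.log 3 := by
  have hL0 : 0 ≤ L := by linarith
  have hPL : 0 ≤ P * L := mul_nonneg hP hL0
  nlinarith

set_option maxHeartbeats 2000000 in
/-- Let `p, q ≥ 1`, let `U` be a finite set of size `n ≥ 3`, and set
`t = ⌈((p+q)^(p+q) / (p^p · q^q)) · (p+q+1) · ln n⌉`. Then there is a family of `t`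
(not necessarily distinct) subsets of `U` such that (i) every pair of disjoint sets
`A, B ⊆ U` with `|A| = p`, `|B| = q` is separated by some member (`A ⊆ F` and `F ∩ B = ∅`),
and (ii) every `p`-subset `A` of `U` is contained in at most `6 · t · (p/(p+q))^p`
members of the family (counted with multiplicity). -/
theorem stmt8 {α : Type*} [Fintype α] [DecidableEq α] (p q : ℕ) (hp : 1 ≤ p) (hq : 1 ≤ q)
    (hn : 3 ≤ Fintype.card α) (t : ℕ)
    (ht : t = ⌈(((p : ℝ) + (q : ℝ)) ^ (p + q) / ((p : ℝ) ^ p * (q : ℝ) ^ q)) *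
        ((p : ℝ) + (q : ℝ) + 1) * Real.log (Fintype.card α)⌉₊) :
    ∃ F : Fin t → Finset α,
      (∀ A B : Finset α, A.card = p → B.card = q → Disjoint A B →
        ∃ i, A ⊆ F i ∧ Disjoint (F i) B) ∧
      (∀ A : Finset α, A.card = p →
        (((Finset.univ.filter fun i => A ⊆ F i).card : ℝ) ≤
          6 * (t : ℝ) * ((p : ℝ) / ((p : ℝ) + (q : ℝ))) ^ p)) := by
  classical
  set n := Fintype.card α with hn'
  set m := p + q with hm'
  by_cases hmn : m ≤ n
  swap
  · -- trivial case p + q > n : take all sets empty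
    refine ⟨fun _ => ∅, ?_, ?_⟩
    · intro A B hA hB hAB
      exfalso
      have h1 : (A ∪ B).card = p + q := by
        rw [Finset.card_union_of_disjoint hAB, hA, hB]
      have h2 : (A ∪ B).card ≤ n := by
        simpa [hn', Finset.card_univ] using Finset.card_le_card (Finset.subset_univ (A ∪ B))
      omega
    · intro A hA
      have hfe : (Finset.univ.filter fun i : Fin t => A ⊆ (∅ : Finset α)) = ∅ := by
        apply Finset.filter_false_of_mem
        intro i _ hsub
        have hAe : A = ∅ := Finset.subset_empty.mp hsub
        rw [hAe] at hA; simp at hA; omega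
      rw [hfe]
      simp only [Finset.card_empty, Nat.cast_zero]
      positivity
  -- main case
  have hpm : p ≤ m := Nat.le_add_right p q
  have hqm : q ≤ m := Nat.le_add_left q p
  have hm2 : 2 ≤ m := by omega
  set nR : ℝ := (n : ℝ) with hnR'
  have hnR3 : (3 : ℝ) ≤ nR := by rw [hnR']; exact_mod_cast hn
  have hnRpos : (0 : ℝ) < nR := by linarith
  have hmRpos : (0 : ℝ) < (m : ℝ) := by exact_mod_cast (by omega : 0 < m)
  have hpRpos : (0 : ℝ) < (p : ℝ) := by exact_mod_cast hp
  have hqRpos : (0 : ℝ) < (q : ℝ) := by exact_mod_cast hq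
  have hlog3 : 1 < Real.log 3 := by
    rw [Real.lt_log_iff_exp_lt (by norm_num : (0:ℝ) < 3)]
    have := Real.exp_one_lt_d9
    linarith
  have hlogn3 : Real.log 3 ≤ Real.log nR := Real.log_le_log (by norm_num) hnR3
  have hlogn : 1 < Real.log nR := lt_of_lt_of_le hlog3 hlogn3
  have hlognpos : (0 : ℝ) < Real.log nR := by linarith
  have hmcast : ((m : ℕ) : ℝ) = (p : ℝ) + (q : ℝ) := by rw [hm']; push_cast; ring
  set pr : ℝ := ((p : ℝ) ^ p * (q : ℝ) ^ q) / ((m : ℝ) ^ m) with hpr'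
  set prp : ℝ := ((p : ℝ) / (m : ℝ)) ^ p with hprp'
  have hprpos : 0 < pr := by rw [hpr']; positivity
  have hprppos : 0 < prp := by rw [hprp']; positivity
  have hpr1 : pr ≤ 1 := by
    rw [hpr', div_le_one (by positivity)]
    have h1 : (p : ℝ) ^ p ≤ (m : ℝ) ^ p :=
      pow_le_pow_left₀ (le_of_lt hpRpos) (by exact_mod_cast hpm) p
    have h2 : (q : ℝ) ^ q ≤ (m : ℝ) ^ q :=
      pow_le_pow_left₀ (le_of_lt hqRpos) (by exact_mod_cast hqm) q
    calc (p : ℝ) ^ p * (q : ℝ) ^ q ≤ (m : ℝ) ^ p * (m : ℝ) ^ q :=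
          mul_le_mul h1 h2 (by positivity) (by positivity)
      _ = (m : ℝ) ^ m := by rw [hm', pow_add]
  have hxt : ((m : ℝ) ^ m / ((p : ℝ) ^ p * (q : ℝ) ^ q)) * ((m : ℝ) + 1) * Real.log nR
      ≤ (t : ℝ) := by
    rw [ht, hmcast]
    exact Nat.le_ceil _
  have hprt : ((m : ℝ) + 1) * Real.log nR ≤ pr * t := by
    have h1 : pr * (((m : ℝ) ^ m / ((p : ℝ) ^ p * (q : ℝ) ^ q)) * ((m : ℝ) + 1) * Real.log nR)
        = ((m : ℝ) + 1) * Real.log nR := by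
      rw [hpr']; field_simp
    calc ((m : ℝ) + 1) * Real.log nR = pr * _ := h1.symm
      _ ≤ pr * t := mul_le_mul_of_nonneg_left hxt (le_of_lt hprpos)
  have hsplitm : (m : ℝ) ^ m = (m : ℝ) ^ p * (m : ℝ) ^ q := by rw [hm', pow_add]
  have hbern : (1 : ℝ) + p ≤ ((m : ℝ) / q) ^ q := by
    have h0 : (-2 : ℝ) ≤ (p : ℝ) / (q : ℝ) := by
      have : (0:ℝ) ≤ (p : ℝ) / (q : ℝ) := by positivity
      linarith
    have h1 := one_add_mul_le_pow h0 q
    have h2 : (1 : ℝ) + (q : ℝ) * ((p : ℝ) / (q : ℝ)) = 1 + p := by field_simp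
    have h3 : (1 : ℝ) + (p : ℝ) / (q : ℝ) = (m : ℝ) / q := by
      rw [hmcast]; field_simp; ring
    rw [h2, h3] at h1
    exact h1
  have hprpt : ((1 : ℝ) + p) * (((m : ℝ) + 1) * Real.log nR) ≤ prp * t := by
    have h1 : prp * (((m : ℝ) ^ m / ((p : ℝ) ^ p * (q : ℝ) ^ q)) * ((m : ℝ) + 1) * Real.log nR)
        = ((m : ℝ) / q) ^ q * (((m : ℝ) + 1) * Real.log nR) := by
      rw [hprp', div_pow, div_pow, hsplitm]; field_simp
    calc ((1 : ℝ) + p) * (((m : ℝ) + 1) * Real.log nR)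
        ≤ ((m : ℝ) / q) ^ q * (((m : ℝ) + 1) * Real.log nR) := by
          apply mul_le_mul_of_nonneg_right hbern
          exact mul_nonneg (by positivity) hlognpos.le
      _ = prp * _ := h1.symm
      _ ≤ prp * t := mul_le_mul_of_nonneg_left hxt (le_of_lt hprppos)
  have hcardb : Fintype.card (α → Fin m) = m ^ n := by
    rw [Fintype.card_fun, Fintype.card_fin, hn']
  set s : ℕ := p ^ p * q ^ q * m ^ (n - m) with hs'
  have hsle : s ≤ m ^ n := by
    calc s ≤ m ^ p * m ^ q * m ^ (n - m) :=
          Nat.mul_le_mul (Nat.mul_le_mul (Nat.pow_le_pow_left hpm p)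
            (Nat.pow_le_pow_left hqm q)) le_rfl
      _ = m ^ n := by rw [← pow_add, ← pow_add]; congr 1; omega
  set NR : ℝ := (m : ℝ) ^ n with hNR'
  have hNRpos : 0 < NR := by rw [hNR']; positivity
  have hcastN : ((m ^ n : ℕ) : ℝ) = NR := by rw [hNR']; push_cast; ring
  have hsR : (s : ℝ) = pr * NR := by
    have hnsplit : (m : ℝ) ^ n = (m : ℝ) ^ m * (m : ℝ) ^ (n - m) := by
      rw [← pow_add, Nat.add_sub_cancel' hmn]
    rw [hs', hpr', hNR', hnsplit]
    push_cast
    field_simp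
  set bound : ℝ := 6 * (t : ℝ) * prp with hbound'
  have hboundnn : 0 ≤ bound := by rw [hbound']; positivity
  set a : ℕ := ⌊bound⌋₊ + 1 with ha'
  have ha_gt : bound < a := by
    rw [ha']; push_cast; exact Nat.lt_floor_add_one bound
  have ha_ge : 6 * (((1 : ℝ) + p) * (((m : ℝ) + 1) * Real.log nR)) ≤ a := by
    calc 6 * (((1 : ℝ) + p) * (((m : ℝ) + 1) * Real.log nR))
        ≤ 6 * (prp * t) := by linarith [hprpt]
      _ = bound := by rw [hbound']; ring
      _ ≤ a := le_of_lt ha_gt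
  clear_value a
  set Fam : (Fin t → α → Fin m) → Fin t → Finset α :=
    fun ω i => Finset.univ.filter fun x => ((ω i x : ℕ) < p) with hFam'
  have hsub_iff : ∀ (g : α → Fin m) (A : Finset α),
      (A ⊆ Finset.univ.filter fun x => ((g x : ℕ) < p)) ↔ ∀ x ∈ A, (g x : ℕ) < p := by
    intro g A
    constructor
    · intro h x hx; simpa using h hx
    · intro h x hx; simp [h x hx]
  have hdisj_iff : ∀ (g : α → Fin m) (B : Finset α),
      Disjoint (Finset.univ.filter fun x => ((g x : ℕ) < p)) B ↔
        ∀ x ∈ B, ¬ (g x : ℕ) < p := by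
    intro g B
    rw [Finset.disjoint_right]
    simp
  set BadG : Finset α → Finset α → Finset (α → Fin m) := fun A B =>
    Finset.univ.filter fun g => ¬ ((∀ x ∈ A, (g x : ℕ) < p) ∧ (∀ x ∈ B, ¬ (g x : ℕ) < p))
    with hBadG'
  have hBadGcard : ∀ A B : Finset α, A.card = p → B.card = q → Disjoint A B →
      (BadG A B).card = m ^ n - s := by
    intro A B hA hB hd
    have hgood := aux_count_g m p hpm A B hd
      (Finset.univ.filter fun g : α → Fin m =>
        (∀ x ∈ A, (g x : ℕ) < p) ∧ (∀ x ∈ B, ¬ (g x : ℕ) < p))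
      (fun g => by simp)
    rw [hA, hB] at hgood
    have hmp : m - p = q := by rw [hm']; exact Nat.add_sub_cancel_left p q
    have hnm : Fintype.card α - p - q = n - m := by rw [← hn', hm', Nat.sub_sub]
    rw [hmp, hnm, ← hs'] at hgood
    have hneg := aux_filter_neg_card (BadG A B)
      (Finset.univ.filter fun g : α → Fin m =>
        (∀ x ∈ A, (g x : ℕ) < p) ∧ (∀ x ∈ B, ¬ (g x : ℕ) < p))
      (fun g => by simp [hBadG'])
    rw [hgood, hcardb] at hneg
    exact hneg
  set GA : Finset α → Finset (α → Fin m) := fun A =>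
    Finset.univ.filter fun g => ∀ x ∈ A, (g x : ℕ) < p with hGA'
  have hGAcard : ∀ A : Finset α, A.card = p → (GA A).card = p ^ p * m ^ (n - p) := by
    intro A hA
    have h1 := aux_count_g m p hpm A ∅ (Finset.disjoint_empty_right A) (GA A)
      (fun g => by simp [hGA'])
    rw [hA] at h1
    simpa [← hn'] using h1
  set Bad1 : Finset (Fin t → α → Fin m) := Finset.univ.filter fun ω =>
    ∃ A B : Finset α, A.card = p ∧ B.card = q ∧ Disjoint A B ∧
      ∀ i, ω i ∈ BadG A B with hBad1'
  set P1 : Finset (Finset α × Finset α) :=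
    (Finset.powersetCard p Finset.univ ×ˢ Finset.powersetCard q Finset.univ).filter
      (fun AB => Disjoint AB.1 AB.2) with hP1'
  have hBad1card : Bad1.card ≤ n.choose p * n.choose q * (m ^ n - s) ^ t := by
    have hsubset : Bad1 ⊆ P1.biUnion (fun AB =>
        Finset.univ.filter fun ω : Fin t → α → Fin m =>
          ∀ i ∈ Finset.univ, ω i ∈ BadG AB.1 AB.2) := by
      intro ω hω
      simp only [hBad1', Finset.mem_filter, Finset.mem_univ, true_and] at hω
      obtain ⟨A, B, hA, hB, hd, hbad⟩ := hω
      rw [Finset.mem_biUnion]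
      refine ⟨(A, B), ?_, ?_⟩
      · simp only [hP1', Finset.mem_filter, Finset.mem_product, Finset.mem_powersetCard_univ]
        exact ⟨⟨hA, hB⟩, hd⟩
      · simp only [Finset.mem_filter, Finset.mem_univ, true_and]
        intro i _; exact hbad i
    calc Bad1.card ≤ _ := Finset.card_le_card hsubset
      _ ≤ ∑ AB ∈ P1, (Finset.univ.filter fun ω : Fin t → α → Fin m =>
            ∀ i ∈ Finset.univ, ω i ∈ BadG AB.1 AB.2).card := Finset.card_biUnion_le
      _ ≤ ∑ _AB ∈ P1, (m ^ n - s) ^ t := by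
          apply Finset.sum_le_sum
          intro AB hAB
          simp only [hP1', Finset.mem_filter, Finset.mem_product,
            Finset.mem_powersetCard_univ] at hAB
          have hcp := aux_count_pi (BadG AB.1 AB.2) (Finset.univ : Finset (Fin t))
            (Finset.univ.filter fun ω : Fin t → α → Fin m =>
              ∀ i ∈ Finset.univ, ω i ∈ BadG AB.1 AB.2)
            (fun ω => by simp)
          rw [Finset.card_univ, Fintype.card_fin, Nat.sub_self, pow_zero, mul_one,
            hBadGcard AB.1 AB.2 hAB.1.1 hAB.1.2 hAB.2] at hcp
          exact hcp.le
      _ = P1.card * (m ^ n - s) ^ t := by rw [Finset.sum_const, smul_eq_mul]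
      _ ≤ n.choose p * n.choose q * (m ^ n - s) ^ t := by
          apply Nat.mul_le_mul_right
          calc P1.card ≤ (Finset.powersetCard p (Finset.univ : Finset α) ×ˢ
                Finset.powersetCard q (Finset.univ : Finset α)).card :=
                Finset.card_le_card (Finset.filter_subset _ _)
            _ = n.choose p * n.choose q := by
                rw [Finset.card_product, Finset.card_powersetCard, Finset.card_powersetCard,
                  Finset.card_univ, ← hn']
  set Bad2 : Finset (Fin t → α → Fin m) := Finset.univ.filter fun ω =>
    ∃ A : Finset α, A.card = p ∧ a ≤ (Finset.univ.filter fun i => A ⊆ Fam ω i).card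
    with hBad2'
  set P2 : Finset (Finset α × Finset (Fin t)) :=
    Finset.powersetCard p Finset.univ ×ˢ Finset.powersetCard a Finset.univ with hP2'
  have hBad2card : Bad2.card ≤
      n.choose p * t.choose a * ((p ^ p * m ^ (n - p)) ^ a * (m ^ n) ^ (t - a)) := by
    have hsubset : Bad2 ⊆ P2.biUnion (fun AS =>
        Finset.univ.filter fun ω : Fin t → α → Fin m => ∀ i ∈ AS.2, ω i ∈ GA AS.1) := by
      intro ω hω
      simp only [hBad2', Finset.mem_filter, Finset.mem_univ, true_and] at hω
      obtain ⟨A, hA, hcount⟩ := hω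
      obtain ⟨S, hSsub, hScard⟩ := Finset.exists_subset_card_eq hcount
      rw [Finset.mem_biUnion]
      refine ⟨(A, S), ?_, ?_⟩
      · simp only [hP2', Finset.mem_product, Finset.mem_powersetCard_univ]
        exact ⟨hA, hScard⟩
      · simp only [Finset.mem_filter, Finset.mem_univ, true_and]
        intro i hi
        have hmem := hSsub hi
        simp only [Finset.mem_filter, Finset.mem_univ, true_and, hFam'] at hmem
        simp only [hGA', Finset.mem_filter, Finset.mem_univ, true_and]
        exact (hsub_iff (ω i) A).mp hmem
    calc Bad2.card ≤ _ := Finset.card_le_card hsubset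
      _ ≤ ∑ AS ∈ P2, (Finset.univ.filter fun ω : Fin t → α → Fin m =>
            ∀ i ∈ AS.2, ω i ∈ GA AS.1).card := Finset.card_biUnion_le
      _ ≤ ∑ _AS ∈ P2, (p ^ p * m ^ (n - p)) ^ a * (m ^ n) ^ (t - a) := by
          apply Finset.sum_le_sum
          intro AS hAS
          simp only [hP2', Finset.mem_product, Finset.mem_powersetCard_univ] at hAS
          have hcp := aux_count_pi (GA AS.1) AS.2
            (Finset.univ.filter fun ω : Fin t → α → Fin m => ∀ i ∈ AS.2, ω i ∈ GA AS.1)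
            (fun ω => by simp)
          rw [hAS.2, Fintype.card_fin, hcardb, hGAcard AS.1 hAS.1] at hcp
          exact hcp.le
      _ = P2.card * ((p ^ p * m ^ (n - p)) ^ a * (m ^ n) ^ (t - a)) := by
          rw [Finset.sum_const, smul_eq_mul]
      _ = n.choose p * t.choose a * ((p ^ p * m ^ (n - p)) ^ a * (m ^ n) ^ (t - a)) := by
          rw [hP2', Finset.card_product, Finset.card_powersetCard, Finset.card_powersetCard,
            Finset.card_univ, Finset.card_univ, Fintype.card_fin, ← hn']
  -- real bound for Bad1
  have hchoosep : (n.choose p : ℝ) ≤ nR ^ p := by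
    rw [hnR']; exact_mod_cast Nat.choose_le_pow n p
  have hchooseq : (n.choose q : ℝ) ≤ nR ^ q := by
    rw [hnR']; exact_mod_cast Nat.choose_le_pow n q
  have h1mpr : (0 : ℝ) ≤ 1 - pr := by linarith
  have hB1R : ((n.choose p * n.choose q * (m ^ n - s) ^ t : ℕ) : ℝ) ≤ NR ^ t / 3 := by
    have hc1 : ((m ^ n - s : ℕ) : ℝ) = (1 - pr) * NR := by
      rw [Nat.cast_sub hsle, hsR, hcastN]; ring
    have hexp : (1 - pr) ^ t ≤ Real.exp (-(pr * t)) := by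
      have h1 : 1 - pr ≤ Real.exp (-pr) := by
        have := Real.add_one_le_exp (-pr); linarith
      calc (1 - pr) ^ t ≤ Real.exp (-pr) ^ t := pow_le_pow_left₀ h1mpr h1 t
        _ = Real.exp ((t : ℝ) * (-pr)) := (Real.exp_nat_mul _ t).symm
        _ = Real.exp (-(pr * t)) := by ring_nf
    have hexp2 : Real.exp (-(pr * t)) ≤ (nR ^ (m + 1))⁻¹ := by
      have h2 : Real.exp (((m + 1 : ℕ) : ℝ) * Real.log nR) = nR ^ (m + 1) := by
        rw [Real.exp_nat_mul, Real.exp_log hnRpos]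
      calc Real.exp (-(pr * t)) ≤ Real.exp (-(((m : ℝ) + 1) * Real.log nR)) := by
            apply Real.exp_le_exp.mpr; linarith [hprt]
        _ = (nR ^ (m + 1))⁻¹ := by
            rw [Real.exp_neg]; congr 1; rw [← h2]; congr 1; push_cast; ring
    have hfrac : nR ^ m * Real.exp (-(pr * t)) ≤ 1 / 3 := by
      calc nR ^ m * Real.exp (-(pr * t)) ≤ nR ^ m * (nR ^ (m + 1))⁻¹ :=
            mul_le_mul_of_nonneg_left hexp2 (by positivity)
        _ = 1 / nR := by rw [pow_succ]; field_simp
        _ ≤ 1 / 3 := one_div_le_one_div_of_le (by norm_num) hnR3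
    rw [Nat.cast_mul, Nat.cast_mul, Nat.cast_pow, hc1]
    calc (n.choose p : ℝ) * (n.choose q : ℝ) * ((1 - pr) * NR) ^ t
        = ((n.choose p : ℝ) * (n.choose q : ℝ) * (1 - pr) ^ t) * NR ^ t := by
          rw [mul_pow]; ring
      _ ≤ (nR ^ p * nR ^ q * Real.exp (-(pr * t))) * NR ^ t := by
          gcongr <;> first
            | exact hchoosep
            | exact hchooseq
            | exact hexp
            | exact pow_nonneg h1mpr t
            | positivity
      _ = (nR ^ m * Real.exp (-(pr * t))) * NR ^ t := by rw [hm', pow_add]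
      _ ≤ (1 / 3) * NR ^ t := mul_le_mul_of_nonneg_right hfrac (by positivity)
      _ = NR ^ t / 3 := by ring
  -- real bound for Bad2
  have hB2R : ((n.choose p * t.choose a * ((p ^ p * m ^ (n - p)) ^ a * (m ^ n) ^ (t - a)) : ℕ) : ℝ)
      ≤ NR ^ t / 3 := by
    rcases lt_or_ge t a with hta | hta
    · rw [Nat.choose_eq_zero_of_lt hta]
      simp only [Nat.mul_zero, Nat.zero_mul, Nat.cast_zero]
      positivity
    · have hGAR : ((p ^ p * m ^ (n - p) : ℕ) : ℝ) = prp * NR := by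
        have hmn2 : (m : ℝ) ^ n = (m : ℝ) ^ p * (m : ℝ) ^ (n - p) := by
          rw [← pow_add, Nat.add_sub_cancel' (le_trans hpm hmn)]
        rw [hprp', hNR']; push_cast
        rw [div_pow, hmn2]; field_simp
      have hchooseta : (t.choose a : ℝ) ≤ (t : ℝ) ^ a / a.factorial :=
        Nat.choose_le_pow_div a t
      have hfact : ((a : ℝ)) ^ a / a.factorial ≤ Real.exp a :=
        Real.pow_div_factorial_le_exp (x := (a : ℝ)) (by positivity) a
      have hkey : nR ^ p * Real.exp (-(1 / 2) : ℝ) ^ a ≤ 1 / 3 := by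
        have e1 : Real.exp (-(1 / 2) : ℝ) ^ a = Real.exp (-((a : ℝ) / 2)) := by
          rw [← Real.exp_nat_mul]; congr 1; ring
        have e2 : Real.exp ((p : ℝ) * Real.log nR) = nR ^ p := by
          rw [Real.exp_nat_mul, Real.exp_log hnRpos]
        have e3 : (1 : ℝ) / 3 = Real.exp (-Real.log 3) := by
          rw [Real.exp_neg, Real.exp_log (by norm_num : (0:ℝ) < 3), one_div]
        rw [e1, ← e2, ← Real.exp_add, e3]
        apply Real.exp_le_exp.mpr
        have ha2 : 6 * ((1 + (p : ℝ)) * (3 * Real.log nR)) ≤ (a : ℝ) :=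
          aux_mono (p : ℝ) ((m : ℝ) + 1) (Real.log nR) (a : ℝ) (by positivity)
            hlognpos.le (by exact_mod_cast (by omega : 3 ≤ m + 1)) ha_ge
        exact aux_loglin (p : ℝ) (Real.log nR) (a : ℝ) (by positivity) hlog3 hlogn3 ha2
      have htpr : (t : ℝ) * prp ≤ (a : ℝ) / 6 := by
        have h6 : 6 * ((t : ℝ) * prp) ≤ a := by
          calc 6 * ((t : ℝ) * prp) = bound := by rw [hbound']; ring
            _ ≤ a := le_of_lt ha_gt
        linarith
      rw [Nat.cast_mul, Nat.cast_mul, Nat.cast_mul, Nat.cast_pow, Nat.cast_pow, hGAR, hcastN]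
      calc (n.choose p : ℝ) * (t.choose a : ℝ) * ((prp * NR) ^ a * NR ^ (t - a))
          = (n.choose p : ℝ) * (t.choose a : ℝ) * prp ^ a * NR ^ t := by
            rw [mul_pow, mul_assoc (prp ^ a), ← pow_add, Nat.add_sub_cancel' hta]
            ring
        _ ≤ nR ^ p * ((t : ℝ) ^ a / a.factorial) * prp ^ a * NR ^ t := by
            gcongr <;> first
              | exact hchoosep
              | exact hchooseta
              | positivity
        _ = nR ^ p * (((t : ℝ) * prp) ^ a / a.factorial) * NR ^ t := by
            rw [mul_pow]; ring
        _ ≤ nR ^ p * (((a : ℝ) / 6) ^ a / a.factorial) * NR ^ t := by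
            gcongr
        _ = nR ^ p * (((a : ℝ) ^ a / a.factorial) / 6 ^ a) * NR ^ t := by
            rw [div_pow]; ring
        _ ≤ nR ^ p * (Real.exp a / 6 ^ a) * NR ^ t := by
            gcongr
        _ = nR ^ p * (Real.exp 1 / 6) ^ a * NR ^ t := by
            rw [div_pow, Real.exp_one_pow]
        _ ≤ nR ^ p * Real.exp (-(1 / 2) : ℝ) ^ a * NR ^ t := by
            gcongr <;> first
              | exact aux_exp16
              | positivity
        _ ≤ (1 / 3) * NR ^ t := mul_le_mul_of_nonneg_right hkey (by positivity)
        _ = NR ^ t / 3 := by ring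
  have hOm : Fintype.card (Fin t → α → Fin m) = (m ^ n) ^ t := by
    rw [Fintype.card_fun, hcardb, Fintype.card_fin]
  have hcastNt : (((m ^ n) ^ t : ℕ) : ℝ) = NR ^ t := by rw [hNR']; push_cast; ring
  have hlt : Bad1.card + Bad2.card < (m ^ n) ^ t := by
    have b1 : (Bad1.card : ℝ) ≤ NR ^ t / 3 := le_trans (Nat.cast_le.mpr hBad1card) hB1R
    have b2 : (Bad2.card : ℝ) ≤ NR ^ t / 3 := le_trans (Nat.cast_le.mpr hBad2card) hB2R
    have hR : ((Bad1.card + Bad2.card : ℕ) : ℝ) < (((m ^ n) ^ t : ℕ) : ℝ) := by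
      rw [Nat.cast_add, hcastNt]
      have hpos : (0 : ℝ) < NR ^ t := by positivity
      linarith
    exact_mod_cast hR
  have hne : ((Finset.univ : Finset (Fin t → α → Fin m)) \ (Bad1 ∪ Bad2)).Nonempty := by
    rw [← Finset.card_pos, Finset.card_sdiff_of_subset (Finset.subset_univ _), Finset.card_univ, hOm]
    exact Nat.sub_pos_of_lt (lt_of_le_of_lt (Finset.card_union_le Bad1 Bad2) hlt)
  obtain ⟨ω, hω⟩ := hne
  rw [Finset.mem_sdiff, Finset.mem_union] at hω
  push_neg at hω
  obtain ⟨-, hω1, hω2⟩ := hω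
  refine ⟨Fam ω, ?_, ?_⟩
  · intro A B hA hB hd
    by_contra hno
    push_neg at hno
    apply hω1
    simp only [hBad1', Finset.mem_filter, Finset.mem_univ, true_and]
    refine ⟨A, B, hA, hB, hd, ?_⟩
    intro i
    simp only [hBadG', Finset.mem_filter, Finset.mem_univ, true_and]
    intro hPQ
    have hsub : A ⊆ Fam ω i := by
      simp only [hFam']; exact (hsub_iff (ω i) A).mpr hPQ.1
    have hdis : Disjoint (Fam ω i) B := by
      simp only [hFam']; exact (hdisj_iff (ω i) B).mpr hPQ.2
    exact hno i hsub hdis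
  · intro A hA
    by_contra hgt
    push_neg at hgt
    apply hω2
    simp only [hBad2', Finset.mem_filter, Finset.mem_univ, true_and]
    refine ⟨A, hA, ?_⟩
    have hb : bound < ((Finset.univ.filter fun i => A ⊆ Fam ω i).card : ℝ) := by
      rw [hbound', hprp', hmcast]
      exact hgt
    have hfl := (Nat.floor_lt hboundnn).mpr hb
    rw [ha']
    exact hfl
end

section
/- Let U be a finite set of size n, let R be a finite set, and let f_1, …, f_t : U → R be a (p+q)-perfect family of hash functions, i.e., for every S ⊆ U with |S| = p + q there is some i with f_i injective on S. Let (F̂, χ̂) be a |R|-p-q-separating collection over the universe R. Define F = ⋃_{i ≤ t} { f_i^{-1}(F̂) : F̂ ∈ F̂ }, and for every p-subset A of U define χ(A) = ⋃_{i ≤ t, f_i injective on A} { f_i^{-1}(F̂) : F̂ ∈ χ̂(f_i(A)) }. Then (F, χ) is an n-p-q-separating collection over U. -/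
/-- `(𝓕, χ)` is a `p`-`q`-separating collection over the universe `α`: `𝓕` is a family of
subsets of `α` and `χ` assigns to each `p`-subset `A` of `α` a subfamily `χ A ⊆ 𝓕` such that
(a) every `F ∈ χ A` contains `A`, and (b) for every `p`-subset `A` and every `q`-subset `B`
disjoint from `A`, some `F ∈ χ A` satisfies `A ⊆ F` and `F ∩ B = ∅`. -/
def SeparatingCollection {α : Type*} (p q : ℕ)
    (𝓕 : Set (Set α)) (χ : Set α → Set (Set α)) : Prop :=
  (∀ A : Set α, A.ncard = p → χ A ⊆ 𝓕) ∧
  (∀ A : Set α, A.ncard = p → ∀ F ∈ χ A, A ⊆ F) ∧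
  (∀ A B : Set α, A.ncard = p → B.ncard = q → Disjoint A B →
    ∃ F ∈ χ A, A ⊆ F ∧ Disjoint F B)

/-- Let `f 1, …, f t : U → R` be a `(p+q)`-perfect family of hash functions
and let `(F̂, χ̂)` be a separating collection over `R`. Pulling back `F̂` and `χ̂` along the
hash functions (using, for a `p`-set `A`, only those hash functions injective on `A`) yields
a separating collection over `U`. -/
theorem stmt9 {U R : Type*} [Fintype U] [Fintype R] (p q t : ℕ)
    (f : Fin t → U → R)
    (hperf : ∀ S : Set U, S.ncard = p + q → ∃ i, Set.InjOn (f i) S)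
    (Fh : Set (Set R)) (χh : Set R → Set (Set R))
    (hsep : SeparatingCollection p q Fh χh) :
    SeparatingCollection p q
      (⋃ i, (fun F => f i ⁻¹' F) '' Fh)
      (fun A => ⋃ (i) (_ : Set.InjOn (f i) A), (fun F => f i ⁻¹' F) '' (χh (f i '' A))) := by
  obtain ⟨h1, h2, h3⟩ := hsep
  refine ⟨?_, ?_, ?_⟩
  · intro A hA F hF
    simp only [Set.mem_iUnion, Set.mem_image] at hF ⊢
    obtain ⟨i, hinj, Fh', hFh', rfl⟩ := hF
    exact ⟨i, Fh', h1 _ (by rw [Set.ncard_image_of_injOn hinj, hA]) hFh', rfl⟩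
  · intro A hA F hF
    simp only [Set.mem_iUnion, Set.mem_image] at hF
    obtain ⟨i, hinj, Fh', hFh', rfl⟩ := hF
    intro a ha
    exact h2 _ (by rw [Set.ncard_image_of_injOn hinj, hA]) _ hFh' ⟨a, ha, rfl⟩
  · intro A B hA hB hAB
    obtain ⟨i, hinj⟩ := hperf (A ∪ B) (by
      rw [Set.ncard_union_eq hAB (Set.toFinite A) (Set.toFinite B), hA, hB])
    have hinjA : Set.InjOn (f i) A := hinj.mono Set.subset_union_left
    have hinjB : Set.InjOn (f i) B := hinj.mono Set.subset_union_right
    have hdisj : Disjoint (f i '' A) (f i '' B) := by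
      rw [Set.disjoint_left]
      rintro x ⟨a, ha, rfl⟩ ⟨b, hb, hab⟩
      exact hAB.ne_of_mem ha hb (hinj (Or.inl ha) (Or.inr hb) hab.symm)
    obtain ⟨F', hF', hsub, hFd⟩ := h3 (f i '' A) (f i '' B)
      (by rw [Set.ncard_image_of_injOn hinjA, hA])
      (by rw [Set.ncard_image_of_injOn hinjB, hB]) hdisj
    refine ⟨f i ⁻¹' F', ?_, ?_, ?_⟩
    · simp only [Set.mem_iUnion, Set.mem_image]
      exact ⟨i, hinjA, F', hF', rfl⟩
    · intro a ha; exact hsub ⟨a, ha, rfl⟩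
    · rw [Set.disjoint_left]
      intro b hbF hbB
      exact hFd.ne_of_mem hbF ⟨b, hbB, rfl⟩ rfl
end

section
/- Let D be a finite directed graph on vertex set V and let k ≥ 2 be an integer. For distinct vertices u, v ∈ V, let P^k_{uv} be the family of all sets X ⊆ V with u, v ∈ X and |X| = k such that there is a directed path in D from u to v of length k − 1 whose vertex set is exactly X. Suppose that for every pair of distinct vertices u, v a subfamily P̂_{uv} ⊆ P^k_{uv} is given satisfying: for every Y ⊆ V with |Y| ≤ k, if there is X ∈ P^k_{uv} with X ∩ Y = ∅, then there is X̂ ∈ P̂_{uv} with X̂ ∩ Y = ∅. Then D has a directed cycle of length at least k if and only if there exist distinct vertices u, v ∈ V, a set X ∈ P̂_{uv}, and a directed cycle C of D such that the vertices of X form a consecutive segment of C inducing a directed path of C from u to v. -/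
/-- `l` is (the vertex sequence of) a directed cycle in the digraph with arc relation `arc`:
at least two distinct vertices, consecutive vertices joined by arcs, and an arc from the
last vertex back to the first. -/
def IsDirCycle {V : Type*} (arc : V → V → Prop) (l : List V) : Prop :=
  2 ≤ l.length ∧ l.Nodup ∧ l.Chain' arc ∧
    ∃ x y, l.getLast? = some x ∧ l.head? = some y ∧ arc x y

/-- `PathFam arc k u v` is the family `P^k_{uv}` of all vertex sets `X` with `u, v ∈ X` and
`|X| = k` such that there is a directed path from `u` to `v` of length `k − 1` whose vertex
set is exactly `X`. -/
def PathFam {V : Type*} [DecidableEq V] (arc : V → V → Prop) (k : ℕ) (u v : V) :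
    Set (Finset V) :=
  {X | u ∈ X ∧ v ∈ X ∧ X.card = k ∧
    ∃ l : List V, l.Nodup ∧ l.Chain' arc ∧ l.head? = some u ∧ l.getLast? = some v ∧
      l.toFinset = X}

/-- A "span"-type decomposition of a list with respect to a predicate `P`: a maximal
prefix all of whose elements satisfy `P`, followed by a remainder whose head (if any)
fails `P`. -/
lemma span_spec {α : Type*} (P : α → Prop) [DecidablePred P] :
    ∀ l : List α, ∃ l₁ l₂ : List α, l = l₁ ++ l₂ ∧ (∀ x ∈ l₁, P x) ∧
      (∀ n : ℕ, (∀ x ∈ l.take n, P x) → min n l.length ≤ l₁.length) ∧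
      (l₂ = [] ∨ ∃ w t, l₂ = w :: t ∧ ¬ P w)
  | [] => ⟨[], [], rfl, by simp, by simp, Or.inl rfl⟩
  | a :: l => by
    by_cases ha : P a
    · obtain ⟨l₁, l₂, he, h1, h2, h3⟩ := span_spec P l
      refine ⟨a :: l₁, l₂, by simp [he], ?_, ?_, h3⟩
      · intro x hx
        rcases List.mem_cons.1 hx with rfl | hx
        · exact ha
        · exact h1 x hx
      · intro n hn
        cases n with
        | zero => simp
        | succ n =>
          have hstep := h2 n (fun x hx => hn x (by
            rw [List.take_succ_cons, List.mem_cons]; exact Or.inr hx))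
          simpa [Nat.succ_min_succ] using Nat.succ_le_succ hstep
    · refine ⟨[], a :: l, rfl, by simp, ?_, Or.inr ⟨a, l, rfl, ha⟩⟩
      intro n hn
      cases n with
      | zero => simp
      | succ n => exact absurd (hn a (by simp [List.take_succ_cons])) ha

/-- In a duplicate-free list with at least two elements, the head differs from the last
element. -/
lemma head_ne_getLast {α : Type*} {l : List α} (hnd : l.Nodup) (h2 : 2 ≤ l.length)
    (hne : l ≠ []) : l.head hne ≠ l.getLast hne := by
  match l with
  | [] => simp at h2
  | [a] => simp at h2
  | a :: b :: t =>
    have h1 : (a :: b :: t).head hne = a := rfl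
    have h2' : (a :: b :: t).getLast hne = (b :: t).getLast (by simp) :=
      List.getLast_cons (by simp)
    rw [h1, h2']
    intro hcontra
    have hmem : (b :: t).getLast (by simp) ∈ b :: t := List.getLast_mem _
    rw [← hcontra] at hmem
    exact (List.nodup_cons.1 hnd).1 hmem

/-- Key lemma: the forward direction of Statement 12, proved by strong induction on the
length of the cycle. -/
lemma key_step {V : Type*} [DecidableEq V]
    (arc : V → V → Prop) (k : ℕ) (hk : 2 ≤ k)
    (Phat : V → V → Set (Finset V))
    (hsub : ∀ u v : V, u ≠ v → Phat u v ⊆ PathFam arc k u v)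
    (hrep : ∀ u v : V, u ≠ v → ∀ Y : Finset V, Y.card ≤ k →
      ∀ X ∈ PathFam arc k u v, Disjoint X Y →
        ∃ Xhat ∈ Phat u v, Disjoint Xhat Y) :
    ∀ c : List V, IsDirCycle arc c → k ≤ c.length →
      (∃ u v : V, u ≠ v ∧ ∃ X ∈ Phat u v, ∃ l₁ l₂ : List V,
        IsDirCycle arc (l₁ ++ l₂) ∧ l₁.toFinset = X ∧
        l₁.head? = some u ∧ l₁.getLast? = some v) := by
  suffices H : ∀ n : ℕ, ∀ c : List V, c.length ≤ n → IsDirCycle arc c → k ≤ c.length →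
      (∃ u v : V, u ≠ v ∧ ∃ X ∈ Phat u v, ∃ l₁ l₂ : List V,
        IsDirCycle arc (l₁ ++ l₂) ∧ l₁.toFinset = X ∧
        l₁.head? = some u ∧ l₁.getLast? = some v) by
    exact fun c hc hl => H c.length c le_rfl hc hl
  intro n
  induction n with
  | zero =>
    intro c hcn _ hlen
    omega
  | succ n ih =>
    intro c hcn hc hlen
    obtain ⟨hc2, hcnd, hcch, xL, yH, hxL, hyH, hwrap⟩ := hc
    -- split c into the first k vertices and the rest
    set tk := c.take k with htk
    set rest := c.drop k with hrest
    have htd : tk ++ rest = c := List.take_append_drop k c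
    have htkl : tk.length = k := by
      rw [htk, List.length_take]; exact min_eq_left hlen
    have htkne : tk ≠ [] := by
      intro h; rw [h] at htkl; simp at htkl; omega
    clear_value tk rest
    -- nodup and disjointness facts
    have hnd' : (tk ++ rest).Nodup := by rw [htd]; exact hcnd
    obtain ⟨htknd, hrestnd, hdisjTR⟩ := List.nodup_append.1 hnd'
    -- chain facts
    have hch' : List.Chain' arc (tk ++ rest) := by rw [htd]; exact hcch
    obtain ⟨htkch, hrestch, hlink⟩ := List.isChain_append.1 hch'
    -- u and v
    set u := tk.head htkne with hu
    set v := tk.getLast htkne with hv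
    have hu? : tk.head? = some u := List.head?_eq_head htkne
    have hv? : tk.getLast? = some v := List.getLast?_eq_getLast_of_ne_nil htkne
    have huv : u ≠ v := head_ne_getLast htknd (htkl ▸ hk) htkne
    have hchead : c.head? = some u := by
      rw [← htd, List.head?_append_of_ne_nil _ htkne, hu?]
    -- X = tk.toFinset is in PathFam
    have hXfam : tk.toFinset ∈ PathFam arc k u v := by
      refine ⟨List.mem_toFinset.2 (List.head_mem htkne), List.mem_toFinset.2
        (List.getLast_mem htkne), ?_, tk, htknd, htkch, hu?, hv?, rfl⟩
      rw [List.toFinset_card_of_nodup htknd, htkl]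
    -- Y = first (at most) k vertices of rest
    set Ylist := rest.take k with hYlist
    have hYcard : Ylist.toFinset.card ≤ k := by
      calc Ylist.toFinset.card ≤ Ylist.length := List.toFinset_card_le _
        _ ≤ k := by rw [hYlist, List.length_take]; exact min_le_left _ _
    have hYsub : ∀ x ∈ Ylist, x ∈ rest := fun x hx =>
      (List.take_sublist k rest).subset hx
    have hdisjXY : Disjoint tk.toFinset Ylist.toFinset := by
      rw [List.disjoint_toFinset_iff_disjoint]
      exact fun a ha hb => hdisjTR a ha a (hYsub a hb) rfl
    obtain ⟨Xh, hXhPhat, hXhY⟩ :=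
      hrep u v huv Ylist.toFinset hYcard tk.toFinset hXfam hdisjXY
    obtain ⟨huX, hvX, hXcard, p, pnd, pch, phd, pls, pfin⟩ := hsub u v huv hXhPhat
    have plen : p.length = k := by
      rw [← List.toFinset_card_of_nodup pnd, pfin, hXcard]
    have hpne : p ≠ [] := by intro h; rw [h] at plen; simp at plen; omega
    -- p is disjoint (as a list) from Ylist
    have hd2 : Disjoint p.toFinset Ylist.toFinset := by rw [pfin]; exact hXhY
    have hpY : ∀ x ∈ p, x ∉ Ylist := by
      intro x hx hxY
      exact (List.disjoint_toFinset_iff_disjoint.1 hd2) hx hxY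
    -- split rest into the part avoiding p and the remainder
    obtain ⟨r1, r2', hsplit, hr1P, hr1min, hcase⟩ := span_spec (fun x => x ∉ p) rest
    rcases hcase with hnil | ⟨w, r2, hr2, hwP⟩
    · -- Case A: no vertex of rest lies in p. Cycle: p ++ rest.
      rw [hnil, List.append_nil] at hsplit
      have hallrest : ∀ x ∈ rest, x ∉ p := by rw [hsplit]; exact hr1P
      refine ⟨u, v, huv, Xh, hXhPhat, p, rest, ?_, pfin, phd, pls⟩
      refine ⟨?_, ?_, ?_, ?_⟩
      · rw [List.length_append]; omega
      · exact List.nodup_append.2 ⟨pnd, hrestnd, fun a ha b hb hab => by subst hab; exact hallrest a hb ha⟩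
      · refine List.IsChain.append pch hrestch ?_
        intro x hx y hy
        rw [pls, Option.mem_def, Option.some.injEq] at hx
        subst hx
        exact hlink v (by rw [hv?]; rfl) y hy
      · by_cases hre : rest = []
        · subst hre
          refine ⟨v, u, ?_, ?_, ?_⟩
          · rw [List.append_nil, pls]
          · rw [List.append_nil]
            cases p with
            | nil => exact absurd rfl hpne
            | cons a q =>
              simp only [List.head?_cons, Option.some.injEq] at phd ⊢
              exact phd
          · have hcv : c.getLast? = some v := by
              rw [← htd, List.append_nil, hv?]
            have h1 : v = xL := Option.some.inj (hcv.symm.trans hxL)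
            have h2 : u = yH := Option.some.inj (hchead.symm.trans hyH)
            rw [h1, h2]
            exact hwrap
        · refine ⟨xL, u, ?_, ?_, ?_⟩
          · rw [List.getLast?_append_of_ne_nil _ hre, ← hxL, ← htd,
              List.getLast?_append_of_ne_nil _ hre]
          · rw [List.head?_append_of_ne_nil _ hpne, phd]
          · have h2 : u = yH := Option.some.inj (hchead.symm.trans hyH)
            rw [h2]
            exact hwrap
    · -- Case B: some vertex w of rest lies in p; build a shorter cycle and recurse.
      have hwp : w ∈ p := not_not.1 hwP
      obtain ⟨s, t, hps⟩ := List.append_of_mem hwp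
      rw [hr2] at hsplit
      -- r1 has length at least k
      have hr1len : k ≤ r1.length := by
        have htake : ∀ x ∈ rest.take k, x ∉ p := by
          intro x hx hxp
          exact hpY x hxp hx
        have hmin := hr1min k htake
        have hrlen : rest.length = r1.length + 1 + r2.length := by
          rw [hsplit, List.length_append, List.length_cons]; omega
        rcases le_total k rest.length with h | h
        · rwa [min_eq_left h] at hmin
        · rw [min_eq_right h] at hmin; omega
      have hr1ne : r1 ≠ [] := by
        intro h; rw [h] at hr1len; simp at hr1len; omega
      have hrestne : rest ≠ [] := by
        intro h; rw [h] at hsplit; exact absurd hsplit.symm (by simp)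
      -- chain on pieces
      have hwtch : List.Chain' arc (w :: t) := pch.suffix ⟨s, hps.symm⟩
      have hr1ch : List.Chain' arc r1 := hrestch.prefix ⟨w :: r2, hsplit.symm⟩
      have hwtlast : (w :: t).getLast? = some v := by
        rw [← pls, hps, List.getLast?_append_of_ne_nil _ (List.cons_ne_nil w t)]
      have hr1head : r1.head? = rest.head? := by
        rw [hsplit, List.head?_append_of_ne_nil _ hr1ne]
      -- the link from v into rest
      have hlinkvr : ∀ y ∈ rest.head?, arc v y := fun y hy =>
        hlink v (by rw [hv?]; rfl) y hy
      -- the wrap-around arc from the last of r1 back to w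
      have hwraparc : ∀ x ∈ r1.getLast?, arc x w := by
        have := (List.isChain_append.1 (hsplit ▸ hrestch)).2.2
        intro x hx
        exact this x hx w rfl
      -- nodup of pieces
      have hwtnd : (w :: t).Nodup := pnd.sublist (by rw [hps]; exact (List.sublist_append_right s (w :: t)))
      have hr1nd : r1.Nodup := hrestnd.sublist (by rw [hsplit]; exact List.sublist_append_left r1 (w :: r2))
      have hdisjwtr1 : List.Disjoint (w :: t) r1 := by
        intro a ha har1
        exact hr1P a har1 (by rw [hps]; exact List.mem_append_right s ha)
      -- the new cycle
      set c' := (w :: t) ++ r1 with hc'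
      have hc'cyc : IsDirCycle arc c' := by
        refine ⟨?_, ?_, ?_, ?_⟩
        · rw [hc', List.length_append]
          have : 1 ≤ (w :: t).length := by simp
          omega
        · exact List.nodup_append.2 ⟨hwtnd, hr1nd, fun a ha b hb hab => by subst hab; exact hdisjwtr1 ha hb⟩
        · refine List.IsChain.append hwtch hr1ch ?_
          intro x hx y hy
          rw [hwtlast, Option.mem_def, Option.some.injEq] at hx
          subst hx
          rw [hr1head] at hy
          exact hlinkvr y hy
        · obtain ⟨z, hz⟩ : ∃ z, r1.getLast? = some z := by
            cases r1 with
            | nil => exact absurd rfl hr1ne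
            | cons a q => exact ⟨(a :: q).getLast (by simp), List.getLast?_eq_getLast_of_ne_nil _⟩
          refine ⟨z, w, ?_, rfl, hwraparc z hz⟩
          rw [hc', List.getLast?_append_of_ne_nil _ hr1ne, hz]
      have hc'len : k ≤ c'.length := by
        rw [hc', List.length_append]
        omega
      have hc'lt : c'.length ≤ n := by
        have hclen : c.length = k + rest.length := by
          rw [← htd, List.length_append, htkl]
        have hrlen : rest.length = r1.length + 1 + r2.length := by
          rw [hsplit, List.length_append, List.length_cons]; omega
        have hplen2 : s.length + 1 + t.length = k := by
          rw [← plen, hps, List.length_append, List.length_cons]; try omega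
        have : c'.length = t.length + 1 + r1.length := by
          rw [hc', List.length_append, List.length_cons]; try omega
        omega
      exact ih c' hc'lt hc'cyc hc'len

/-- Let `D` be a finite digraph, `k ≥ 2`, and for all distinct `u, v`
let `P̂ u v ⊆ P^k_{uv}` be a `k`-representative subfamily (for every `Y` with `|Y| ≤ k`,
if some member of `P^k_{uv}` avoids `Y` then some member of `P̂ u v` avoids `Y`). Then `D`
has a directed cycle of length at least `k` if and only if there are distinct `u, v`, a set
`X ∈ P̂ u v`, and a directed cycle of `D` in which the vertices of `X` form a consecutive
segment inducing a directed path of the cycle from `u` to `v`. -/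
theorem stmt12 {V : Type*} [Fintype V] [DecidableEq V]
    (arc : V → V → Prop) (hirr : ∀ v, ¬ arc v v) (k : ℕ) (hk : 2 ≤ k)
    (Phat : V → V → Set (Finset V))
    (hsub : ∀ u v : V, u ≠ v → Phat u v ⊆ PathFam arc k u v)
    (hrep : ∀ u v : V, u ≠ v → ∀ Y : Finset V, Y.card ≤ k →
      ∀ X ∈ PathFam arc k u v, Disjoint X Y →
        ∃ Xhat ∈ Phat u v, Disjoint Xhat Y) :
    (∃ l : List V, IsDirCycle arc l ∧ k ≤ l.length) ↔
      (∃ u v : V, u ≠ v ∧ ∃ X ∈ Phat u v, ∃ l₁ l₂ : List V,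
        IsDirCycle arc (l₁ ++ l₂) ∧ l₁.toFinset = X ∧
        l₁.head? = some u ∧ l₁.getLast? = some v) := by
  constructor
  · rintro ⟨c, hc, hlen⟩
    exact key_step arc k hk Phat hsub hrep c hc hlen
  · rintro ⟨u, v, huv, X, hXPhat, l₁, l₂, hcyc, hfin, hh, hl⟩
    refine ⟨l₁ ++ l₂, hcyc, ?_⟩
    obtain ⟨_, _, hXcard, _⟩ := hsub u v huv hXPhat
    have hl₁nd : l₁.Nodup := (List.nodup_append.1 hcyc.2.1).1
    have : l₁.length = k := by
      rw [← List.toFinset_card_of_nodup hl₁nd, hfin, hXcard]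
    rw [List.length_append]
    omega
end

section
/- Let D be a finite directed graph on vertex set V, let u ∈ V, and let ℓ and i be integers with 2 ≤ i and i + 1 ≤ ℓ. For a vertex w ∈ V, let P^i_{uw} be the family of all sets X ⊆ V with u, w ∈ X and |X| = i such that there is a directed path in D from u to w of length i − 1 whose vertex set is exactly X. Suppose that for every vertex w a subfamily P̂^i_{uw} ⊆ P^i_{uw} is given satisfying: for every Y ⊆ V with |Y| ≤ ℓ − i, if there is X ∈ P^i_{uw} with X ∩ Y = ∅, then there is X̂ ∈ P̂^i_{uw} with X̂ ∩ Y = ∅. For a vertex v, define N^{i+1}_{uv} = ⋃_{w : (w,v) is an arc of D} { X̂ ∪ {v} : X̂ ∈ P̂^i_{uw}, v ∉ X̂ }. Then N^{i+1}_{uv} ⊆ P^{i+1}_{uv}, and N^{i+1}_{uv} satisfies: for every Y ⊆ V with |Y| ≤ ℓ − (i+1), if there is X ∈ P^{i+1}_{uv} with X ∩ Y = ∅, then there is X̂ ∈ N^{i+1}_{uv} with X̂ ∩ Y = ∅. -/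
/-- Let `D` be a finite digraph, `u` a vertex, `2 ≤ i` and `i + 1 ≤ ℓ`.
Suppose that for every vertex `w` a subfamily `P̂ w ⊆ P^i_{uw}` is given which is
`(ℓ − i)`-representative for `P^i_{uw}`. For a vertex `v`, let
`N = ⋃_{w : arc w v} {X̂ ∪ {v} : X̂ ∈ P̂ w, v ∉ X̂}`. Then `N ⊆ P^{i+1}_{uv}` and `N` is
`(ℓ − (i+1))`-representative for `P^{i+1}_{uv}`. -/
theorem stmt13 {V : Type*} [Fintype V] [DecidableEq V]
    (arc : V → V → Prop) (u : V) (ℓ i : ℕ) (hi : 2 ≤ i) (hiℓ : i + 1 ≤ ℓ)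
    (Phat : V → Set (Finset V))
    (hsub : ∀ w : V, Phat w ⊆ PathFam arc i u w)
    (hrep : ∀ w : V, ∀ Y : Finset V, Y.card ≤ ℓ - i →
      ∀ X ∈ PathFam arc i u w, Disjoint X Y →
        ∃ Xhat ∈ Phat w, Disjoint Xhat Y)
    (v : V) :
    ({Z : Finset V | ∃ w : V, arc w v ∧ ∃ Xhat ∈ Phat w, v ∉ Xhat ∧ Z = insert v Xhat}
        ⊆ PathFam arc (i + 1) u v) ∧
    (∀ Y : Finset V, Y.card ≤ ℓ - (i + 1) →
      ∀ X ∈ PathFam arc (i + 1) u v, Disjoint X Y →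
        ∃ Xhat ∈ {Z : Finset V |
            ∃ w : V, arc w v ∧ ∃ Xh ∈ Phat w, v ∉ Xh ∧ Z = insert v Xh},
          Disjoint Xhat Y) := by

  constructor
  · rintro Z ⟨w, harc, Xhat, hmem, hvX, rfl⟩
    obtain ⟨huX, hwX, hcard, l, hnd, hch, hhd, hlast, htf⟩ := hsub w hmem
    have hlne : l ≠ [] := by rintro rfl; simp at hhd
    have hvl : v ∉ l := by
      intro hv; exact hvX (by rw [← htf]; exact List.mem_toFinset.mpr hv)
    refine ⟨Finset.mem_insert_of_mem huX, Finset.mem_insert_self _ _,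
      by rw [Finset.card_insert_of_notMem hvX, hcard],
      l ++ [v], ?_, ?_, ?_, ?_, ?_⟩
    · rw [List.nodup_append']
      exact ⟨hnd, List.nodup_singleton v, by simpa using fun h => (hvl h).elim⟩
    · refine List.IsChain.append hch (List.isChain_singleton v) ?_
      intro x hx y hy
      simp only [List.head?_cons, Option.mem_def, Option.some.injEq] at hy
      rw [hlast] at hx
      simp only [Option.mem_def, Option.some.injEq] at hx
      rw [← hx, ← hy]; exact harc
    · rw [List.head?_append_of_ne_nil _ hlne, hhd]
    · simp [List.getLast?_concat]
    · rw [List.toFinset_append, htf]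
      simp
  · intro Y hY X hX hdisj
    obtain ⟨huX, hvX, hcard, l, hnd, hch, hhd, hlast, htf⟩ := hX
    have hlne : l ≠ [] := by rintro rfl; simp at hhd
    have hlen : l.length = i + 1 := by
      rw [← List.toFinset_card_of_nodup hnd, htf, hcard]
    set l' := l.dropLast with hl'
    have hl'len : l'.length = i := by
      rw [hl', List.length_dropLast, hlen]; omega
    have hl'ne : l' ≠ [] := by
      intro h; rw [h] at hl'len; simp at hl'len; omega
    have hlsplit : l = l' ++ [l.getLast hlne] := (List.dropLast_append_getLast hlne).symm
    have hlastv : l.getLast hlne = v := by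
      rw [List.getLast?_eq_getLast hlne] at hlast
      exact Option.some.inj hlast
    set w := l'.getLast hl'ne with hw
    -- chain facts
    rw [hlsplit] at hch; replace hch := List.isChain_append.mp hch
    obtain ⟨hch', -, hconn⟩ := hch
    have harcwv : arc w v := by
      have := hconn w (by rw [List.getLast?_eq_getLast hl'ne]; rfl) (l.getLast hlne) rfl
      rwa [hlastv] at this
    -- nodup of l'
    rw [hlsplit, List.nodup_append'] at hnd
    obtain ⟨hnd', -, hdisj'⟩ := hnd
    have hvnotl' : v ∉ l' := by
      intro h
      exact hdisj' h (by rw [hlastv]; exact List.mem_singleton_self v)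
    -- head of l'
    have hhd' : l'.head? = some u := by
      rw [hlsplit, List.head?_append_of_ne_nil _ hl'ne] at hhd
      exact hhd
    have hul' : u ∈ l' := by
      have := List.head?_eq_head hl'ne
      rw [hhd'] at this
      have : u = l'.head hl'ne := Option.some.inj this
      rw [this]; exact List.head_mem hl'ne
    have hwl' : w ∈ l' := List.getLast_mem hl'ne
    have hX'mem : l'.toFinset ∈ PathFam arc i u w :=
      ⟨List.mem_toFinset.mpr hul', List.mem_toFinset.mpr hwl',
        by rw [List.toFinset_card_of_nodup hnd', hl'len],
        l', hnd', hch', hhd', List.getLast?_eq_getLast hl'ne, rfl⟩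
    have hsubX : l'.toFinset ⊆ X := by
      intro x hx
      rw [← htf, hlsplit]
      simp only [List.toFinset_append, Finset.mem_union]
      exact Or.inl hx
    have hvY : v ∉ Y := Finset.disjoint_left.mp hdisj hvX
    have hYcard : (insert v Y).card ≤ ℓ - i := by
      have := Finset.card_insert_le v Y
      omega
    have hdisj'' : Disjoint l'.toFinset (insert v Y) := by
      rw [Finset.disjoint_insert_right]
      exact ⟨fun h => hvnotl' (List.mem_toFinset.mp h),
        Finset.disjoint_of_subset_left hsubX hdisj⟩
    obtain ⟨Xhat, hXhat, hXhatdisj⟩ := hrep w (insert v Y) hYcard _ hX'mem hdisj''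
    rw [Finset.disjoint_insert_right] at hXhatdisj
    exact ⟨insert v Xhat, ⟨w, harcwv, Xhat, hXhat, hXhatdisj.1, rfl⟩,
      by rw [Finset.disjoint_insert_left]; exact ⟨hvY, hXhatdisj.2⟩⟩
end

section
/- Let T be a finite tree, let x, y be vertices of T, and let c ≥ 1 be an integer. Then there exists a set W of vertices of T with {x, y} ⊆ W and |W| ≤ 2c + 4 such that every connected component U of T − W satisfies |U| ≤ |V(T)| / c and has at most two neighbors in W, i.e., |N_T(U)| ≤ 2. -/
set_option linter.unusedSectionVars false

namespace Stmt14Aux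
open SimpleGraph Walk

variable {V : Type*} [DecidableEq V] {T : SimpleGraph V}

/-- betweenness in the graph metric -/
def TBtw (T : SimpleGraph V) (a m b : V) : Prop :=
  T.dist a m + T.dist m b = T.dist a b

theorem path_unique (hT : T.IsTree) {a b : V} (p q : T.Walk a b)
    (hp : p.IsPath) (hq : q.IsPath) : p = q :=
  (hT.existsUnique_path a b).unique hp hq

theorem isPath_length (hT : T.IsTree) {a b : V} {p : T.Walk a b} (hp : p.IsPath) :
    p.length = T.dist a b := by
  obtain ⟨q, hq, hlen⟩ := hT.isConnected.exists_path_of_dist a b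
  rw [path_unique hT p q hp hq]; exact hlen

theorem btw_of_mem (hT : T.IsTree) {a b m : V} {p : T.Walk a b} (hp : p.IsPath)
    (hm : m ∈ p.support) : TBtw T a m b := by
  have h1 := isPath_length hT (hp.takeUntil hm)
  have h2 := isPath_length hT (hp.dropUntil hm)
  have h3 : (p.takeUntil m hm).length + (p.dropUntil m hm).length = p.length := by
    conv_rhs => rw [← p.take_spec hm]
    rw [Walk.length_append]
  have h4 := isPath_length hT hp
  unfold TBtw; omega

theorem append_isPath (hT : T.IsTree) {a b c : V} {p : T.Walk a b} {q : T.Walk b c}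
    (hp : p.IsPath) (hq : q.IsPath)
    (hdisj : ∀ z, z ∈ p.support → z ∈ q.support → z = b) : (p.append q).IsPath := by
  have hfalse : ∀ z1, z1 ∈ p.support → z1 ∈ q.support.tail → False := by
    intro z1 hz1 hz2
    have hz2' : z1 ∈ q.support := List.mem_of_mem_tail hz2
    have hzb : z1 = b := hdisj z1 hz1 hz2'
    rw [hzb] at hz2
    have hcons : q.support = b :: q.support.tail := (q.support_eq_cons).trans (by simp)
    have hnd := hq.support_nodup
    rw [hcons] at hnd
    exact (List.nodup_cons.1 hnd).1 hz2
  rw [Walk.isPath_def, Walk.support_append]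
  exact List.Nodup.append hp.support_nodup (hq.support_nodup.tail)
    (fun {z} hz1 hz2 => hfalse z hz1 hz2)

theorem dist_pos_of_ne (hT : T.IsTree) {a b : V} (h : a ≠ b) : 0 < T.dist a b := by
  rcases Nat.eq_zero_or_pos (T.dist a b) with h0 | h0
  · exact absurd ((hT.isConnected.dist_eq_zero_iff).1 h0) h
  · exact h0

theorem eq_of_dist_eq_zero (hT : T.IsTree) {a b : V} (h : T.dist a b = 0) : a = b :=
  (hT.isConnected.dist_eq_zero_iff).1 h

theorem mem_support_of_btw (hT : T.IsTree) {a b m : V} {p : T.Walk a b} (hp : p.IsPath)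
    (hb : TBtw T a m b) : m ∈ p.support := by
  obtain ⟨q1, hq1, hl1⟩ := hT.isConnected.exists_path_of_dist a m
  obtain ⟨q2, hq2, hl2⟩ := hT.isConnected.exists_path_of_dist m b
  have hdisj : ∀ z, z ∈ q1.support → z ∈ q2.support → z = m := by
    intro z h1 h2
    have b1 := btw_of_mem hT hq1 h1
    have b2 := btw_of_mem hT hq2 h2
    have tri := hT.isConnected.dist_triangle (u := a) (v := z) (w := b)
    have hzm : T.dist z m = T.dist m z := T.dist_comm
    unfold TBtw at b1 b2 hb
    have : T.dist z m = 0 := by omega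
    exact eq_of_dist_eq_zero hT this
  have hpath := append_isPath hT hq1 hq2 hdisj
  have := path_unique hT p (q1.append q2) hp hpath
  rw [this, Walk.mem_support_append_iff]
  left; exact q1.end_mem_support

/-- ancestors of `u` (w.r.t. basepoint `x`) are comparable -/
theorem comparable (hT : T.IsTree) {x u a b : V}
    (h1 : TBtw T x a u) (h2 : TBtw T x b u) : TBtw T x a b ∨ TBtw T x b a := by
  obtain ⟨p, hp, _⟩ := hT.isConnected.exists_path_of_dist x u
  have ha : a ∈ p.support := mem_support_of_btw hT hp h1
  by_cases hb : b ∈ (p.takeUntil a ha).support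
  · right
    exact btw_of_mem hT (hp.takeUntil ha) hb
  · have hbp : b ∈ p.support := mem_support_of_btw hT hp h2
    have : b ∈ (p.dropUntil a ha).support := by
      rcases (Walk.mem_support_append_iff _ _).1 (by rwa [p.take_spec ha]) with h | h
      · exact absurd h hb
      · exact h
    have b3 : TBtw T a b u := btw_of_mem hT (hp.dropUntil ha) this
    left
    unfold TBtw at *
    have tri := hT.isConnected.dist_triangle (u := x) (v := a) (w := b)
    omega

end Stmt14Aux

namespace Stmt14Aux2
open SimpleGraph Walk Stmt14Aux

variable {V : Type*} [DecidableEq V] {T : SimpleGraph V}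

def isLca (T : SimpleGraph V) (x a b m : V) : Prop :=
  TBtw T x m a ∧ TBtw T x m b ∧ TBtw T a m b

theorem btw_symm {a m b : V} (h : TBtw T a m b) : TBtw T b m a := by
  unfold TBtw at *
  rw [T.dist_comm (u := b) (v := m), T.dist_comm (u := m) (v := a), T.dist_comm (u := b) (v := a)]
  omega

@[simp] theorem btw_triv_left (hT : T.IsTree) (a b : V) : TBtw T a a b := by
  unfold TBtw; rw [SimpleGraph.dist_self]; omega

@[simp] theorem btw_triv_right (hT : T.IsTree) (a b : V) : TBtw T a b b := by
  unfold TBtw; rw [SimpleGraph.dist_self]; omega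

theorem exists_lca (hT : T.IsTree) (x a b : V) : ∃ m, isLca T x a b m := by
  obtain ⟨p, hp, _⟩ := hT.isConnected.exists_path_of_dist a b
  obtain ⟨m, hm', hmin⟩ := Finset.exists_min_image p.support.toFinset
    (fun z => T.dist x z) ⟨a, List.mem_toFinset.2 p.start_mem_support⟩
  rw [List.mem_toFinset] at hm'
  have hmin' : ∀ z ∈ p.support, T.dist x m ≤ T.dist x z :=
    fun z hz => hmin z (List.mem_toFinset.2 hz)
  obtain ⟨q, hq, hlq⟩ := hT.isConnected.exists_path_of_dist x m
  have halfA : TBtw T x m a := by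
    have hr : ((p.takeUntil m hm').reverse).IsPath := (hp.takeUntil hm').reverse
    have hdisj : ∀ z, z ∈ q.support → z ∈ ((p.takeUntil m hm').reverse).support → z = m := by
      intro z hz1 hz2
      rw [Walk.support_reverse, List.mem_reverse] at hz2
      have hzp : z ∈ p.support := p.support_takeUntil_subset hm' hz2
      have hbz : TBtw T x z m := btw_of_mem hT hq hz1
      have := hmin' z hzp
      unfold TBtw at hbz
      exact eq_of_dist_eq_zero hT (by omega)
    have hpath := append_isPath hT hq hr hdisj
    have hlen := isPath_length hT hpath
    rw [Walk.length_append, Walk.length_reverse] at hlen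
    have hl2 : (p.takeUntil m hm').length = T.dist a m := isPath_length hT (hp.takeUntil hm')
    unfold TBtw
    rw [T.dist_comm (u := m) (v := a)]
    omega
  have halfB : TBtw T x m b := by
    have hr : (p.dropUntil m hm').IsPath := hp.dropUntil hm'
    have hdisj : ∀ z, z ∈ q.support → z ∈ (p.dropUntil m hm').support → z = m := by
      intro z hz1 hz2
      have hzp : z ∈ p.support := p.support_dropUntil_subset hm' hz2
      have hbz : TBtw T x z m := btw_of_mem hT hq hz1
      have := hmin' z hzp
      unfold TBtw at hbz
      exact eq_of_dist_eq_zero hT (by omega)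
    have hpath := append_isPath hT hq hr hdisj
    have hlen := isPath_length hT hpath
    rw [Walk.length_append] at hlen
    have hl2 : (p.dropUntil m hm').length = T.dist m b := isPath_length hT (hp.dropUntil hm')
    unfold TBtw
    omega
  exact ⟨m, halfA, halfB, btw_of_mem hT hp hm'⟩

theorem lca_unique_aux (hT : T.IsTree) {x a b m m' : V}
    (h : isLca T x a b m) (h' : isLca T x a b m') (hcase : TBtw T a m m') : m = m' := by
  obtain ⟨h1, h2, h3⟩ := h
  obtain ⟨h1', h2', h3'⟩ := h'
  unfold TBtw at *
  have c1 : T.dist m a = T.dist a m := T.dist_comm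
  have c2 : T.dist m' a = T.dist a m' := T.dist_comm
  have c3 : T.dist m m' = T.dist m' m := T.dist_comm
  apply eq_of_dist_eq_zero hT (a := m) (b := m')
  have tri : T.dist x m' ≤ T.dist x m + T.dist m m' := hT.isConnected.dist_triangle
  have tri2 : T.dist x m ≤ T.dist x m' + T.dist m' m := hT.isConnected.dist_triangle
  omega

theorem lca_unique (hT : T.IsTree) {x a b m m' : V}
    (h : isLca T x a b m) (h' : isLca T x a b m') : m = m' := by
  rcases comparable hT (x := a) h.2.2 h'.2.2 with hc | hc
  · exact lca_unique_aux hT h h' hc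
  · exact (lca_unique_aux hT h' h hc).symm

noncomputable def lca (hT : T.IsTree) (x a b : V) : V := (exists_lca hT x a b).choose

theorem lca_spec (hT : T.IsTree) (x a b : V) : isLca T x a b (lca hT x a b) :=
  (exists_lca hT x a b).choose_spec

theorem lca_eq (hT : T.IsTree) {x a b m : V} (h : isLca T x a b m) : lca hT x a b = m :=
  lca_unique hT (lca_spec hT x a b) h

theorem lca_comm (hT : T.IsTree) (x a b : V) : lca hT x a b = lca hT x b a := by
  apply lca_eq hT
  obtain ⟨h1, h2, h3⟩ := lca_spec hT x b a
  exact ⟨h2, h1, btw_symm h3⟩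

theorem lca_self (hT : T.IsTree) (x a : V) : lca hT x a a = a :=
  lca_eq hT ⟨btw_triv_right hT x a, btw_triv_right hT x a, btw_triv_left hT a a⟩

end Stmt14Aux2
namespace Stmt14Aux3
open SimpleGraph Walk Stmt14Aux Stmt14Aux2

variable {V : Type*} [DecidableEq V] {T : SimpleGraph V}

/-- comparability of two ancestors, resolved by depth -/
theorem anc_of_depth_le (hT : T.IsTree) {x u g m : V}
    (hg : TBtw T x g u) (hm : TBtw T x m u)
    (hdep : T.dist x g ≤ T.dist x m) : TBtw T x g m := by
  rcases comparable hT hg hm with h | h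
  · exact h
  · unfold TBtw at *
    have hc : T.dist m g = T.dist g m := T.dist_comm
    have : T.dist g m = 0 := by omega
    have : g = m := eq_of_dist_eq_zero hT this
    subst this
    rw [SimpleGraph.dist_self]; omega

theorem key_step (hT : T.IsTree) (x v a0 a g m : V)
    (hgl : isLca T x v a g) (hml : isLca T x v a0 m)
    (hdep : T.dist x g ≤ T.dist x m)
    (hne : g ≠ m) :
    isLca T x a0 a g ∧ isLca T x m a g := by
  obtain ⟨sg1, sg2, sg3⟩ := hgl
  obtain ⟨sm1, sm2, sm3⟩ := hml
  have hgm : TBtw T x g m := anc_of_depth_le hT sg1 sm1 hdep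
  have hgmpos : 0 < T.dist g m := dist_pos_of_ne hT hne
  have hi : TBtw T x g a0 := by
    unfold TBtw at *
    have t1 : T.dist x a0 ≤ T.dist x g + T.dist g a0 := hT.isConnected.dist_triangle
    have t2 : T.dist g a0 ≤ T.dist g m + T.dist m a0 := hT.isConnected.dist_triangle
    omega
  have hgmv : TBtw T g m v := by
    unfold TBtw at *
    have t1 : T.dist x v ≤ T.dist x g + T.dist g v := hT.isConnected.dist_triangle
    have t2 : T.dist g v ≤ T.dist g m + T.dist m v := hT.isConnected.dist_triangle
    omega
  have hmga : TBtw T m g a := by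
    unfold TBtw at *
    have c1 : T.dist v g = T.dist g v := T.dist_comm
    have c2 : T.dist v m = T.dist m v := T.dist_comm
    have c4 : T.dist m g = T.dist g m := T.dist_comm
    have t1 : T.dist v a ≤ T.dist v m + T.dist m a := hT.isConnected.dist_triangle
    have t2 : T.dist m a ≤ T.dist m g + T.dist g a := hT.isConnected.dist_triangle
    omega
  obtain ⟨q1, hq1, hl1⟩ := hT.isConnected.exists_path_of_dist a0 m
  obtain ⟨q2, hq2, hl2⟩ := hT.isConnected.exists_path_of_dist m g
  obtain ⟨q3, hq3, hl3⟩ := hT.isConnected.exists_path_of_dist g a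
  have disj23 : ∀ z, z ∈ q2.support → z ∈ q3.support → z = g := by
    intro z h2 h3
    have b2 := btw_of_mem hT hq2 h2   -- TBtw m z g
    have b3 := btw_of_mem hT hq3 h3   -- TBtw g z a
    unfold TBtw at *
    have c1 : T.dist z v = T.dist v z := T.dist_comm
    have c2 : T.dist g z = T.dist z g := T.dist_comm
    have c3 : T.dist v g = T.dist g v := T.dist_comm
    have c4 : T.dist z m = T.dist m z := T.dist_comm
    have c5 : T.dist v m = T.dist m v := T.dist_comm
    have c6 : T.dist z a = T.dist a z := T.dist_comm
    have c7 : T.dist m g = T.dist g m := T.dist_comm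
    have t1 : T.dist g v ≤ T.dist g z + T.dist z v := hT.isConnected.dist_triangle
    have t2 : T.dist z v ≤ T.dist z m + T.dist m v := hT.isConnected.dist_triangle
    have t3 : T.dist v a ≤ T.dist v z + T.dist z a := hT.isConnected.dist_triangle
    have t4 : T.dist v z ≤ T.dist v g + T.dist g z := hT.isConnected.dist_triangle
    have e1 : T.dist z v = T.dist z m + T.dist m v := by omega
    have e2 : T.dist v z = T.dist v g + T.dist z g := by omega
    have : T.dist z g = 0 := by omega
    exact eq_of_dist_eq_zero hT this
  have hq23 : (q2.append q3).IsPath := append_isPath hT hq2 hq3 disj23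
  have disj123 : ∀ z, z ∈ q1.support → z ∈ (q2.append q3).support → z = m := by
    intro z h1 h23
    have b1 := btw_of_mem hT hq1 h1   -- TBtw a0 z m
    have exz : T.dist x z = T.dist x m + T.dist m z := by
      unfold TBtw at *
      have c1 : T.dist z a0 = T.dist a0 z := T.dist_comm
      have c2 : T.dist z m = T.dist m z := T.dist_comm
      have c3 : T.dist m a0 = T.dist a0 m := T.dist_comm
      have t1 : T.dist x a0 ≤ T.dist x z + T.dist z a0 := hT.isConnected.dist_triangle
      have t2 : T.dist x z ≤ T.dist x m + T.dist m z := hT.isConnected.dist_triangle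
      omega
    rcases (Walk.mem_support_append_iff _ _).1 h23 with h2 | h3
    · have b2 := btw_of_mem hT hq2 h2   -- TBtw m z g
      unfold TBtw at *
      have c2 : T.dist z g = T.dist g z := T.dist_comm
      have c3 : T.dist m z = T.dist z m := T.dist_comm
      have c4 : T.dist m g = T.dist g m := T.dist_comm
      have t1 : T.dist x z ≤ T.dist x g + T.dist g z := hT.isConnected.dist_triangle
      have : T.dist z m = 0 := by omega
      exact eq_of_dist_eq_zero hT this
    · exfalso
      have b3 := btw_of_mem hT hq3 h3   -- TBtw g z a
      unfold TBtw at *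
      have c1 : T.dist z a = T.dist a z := T.dist_comm
      have c2 : T.dist g z = T.dist z g := T.dist_comm
      have c3 : T.dist z a0 = T.dist a0 z := T.dist_comm
      have c4 : T.dist z m = T.dist m z := T.dist_comm
      have c5 : T.dist v g = T.dist g v := T.dist_comm
      have c6 : T.dist v m = T.dist m v := T.dist_comm
      have c7 : T.dist m g = T.dist g m := T.dist_comm
      have c8 : T.dist v z = T.dist z v := T.dist_comm
      have c9 : T.dist m a0 = T.dist a0 m := T.dist_comm
      have t1 : T.dist x a ≤ T.dist x z + T.dist z a := hT.isConnected.dist_triangle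
      have t2 : T.dist x z ≤ T.dist x g + T.dist g z := hT.isConnected.dist_triangle
      have exz2 : T.dist x z = T.dist x g + T.dist g z := by omega
      have t3 : T.dist v a0 ≤ T.dist v z + T.dist z a0 := hT.isConnected.dist_triangle
      have t4 : T.dist v z ≤ T.dist v m + T.dist m z := hT.isConnected.dist_triangle
      have evz1 : T.dist v z = T.dist v m + T.dist m z := by omega
      have t5 : T.dist v a ≤ T.dist v z + T.dist z a := hT.isConnected.dist_triangle
      have t6 : T.dist v z ≤ T.dist v g + T.dist g z := hT.isConnected.dist_triangle
      have evz2 : T.dist v z = T.dist v g + T.dist g z := by omega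
      omega
  have hbig : (q1.append (q2.append q3)).IsPath := append_isPath hT hq1 hq23 disj123
  have hlen := isPath_length hT hbig
  rw [Walk.length_append, Walk.length_append] at hlen
  have hiii : TBtw T a0 g a := by
    unfold TBtw at *
    have t1 : T.dist a0 g ≤ T.dist a0 m + T.dist m g := hT.isConnected.dist_triangle
    have t2 : T.dist a0 a ≤ T.dist a0 g + T.dist g a := hT.isConnected.dist_triangle
    omega
  exact ⟨⟨hi, sg2, hiii⟩, ⟨hgm, sg2, hmga⟩⟩

theorem closure_insert (hT : T.IsTree) (x v : V) (B : Finset V) (hBne : B.Nonempty)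
    (hB : ∀ a ∈ B, ∀ b ∈ B, lca hT x a b ∈ B) :
    ∃ m, ∀ a ∈ insert v (insert m B), ∀ b ∈ insert v (insert m B),
      lca hT x a b ∈ insert v (insert m B) := by
  obtain ⟨a0, ha0, hmax⟩ := Finset.exists_max_image B (fun a => T.dist x (lca hT x v a)) hBne
  refine ⟨lca hT x v a0, ?_⟩
  set m := lca hT x v a0 with hmdef
  obtain ⟨sm1, sm2, sm3⟩ := lca_spec hT x v a0
  have hC1 : ∀ a ∈ B, lca hT x v a ∈ insert m B := by
    intro a ha
    by_cases h : lca hT x v a = m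
    · rw [h]; exact Finset.mem_insert_self _ _
    · have hks := key_step hT x v a0 a _ _ (lca_spec hT x v a) (lca_spec hT x v a0)
        (hmax a ha) h
      have heq : lca hT x a0 a = lca hT x v a := lca_eq hT hks.1
      rw [← heq]
      exact Finset.mem_insert_of_mem (hB a0 ha0 a ha)
  have hC2 : ∀ a ∈ B, lca hT x m a ∈ insert m B := by
    intro a ha
    by_cases h : lca hT x v a = m
    · have hmx : lca hT x m a = m := by
        apply lca_eq hT
        refine ⟨btw_triv_right hT x m, ?_, btw_triv_left hT m a⟩
        have := (lca_spec hT x v a).2.1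
        rwa [h] at this
      rw [hmx]; exact Finset.mem_insert_self _ _
    · have hks := key_step hT x v a0 a _ _ (lca_spec hT x v a) (lca_spec hT x v a0)
        (hmax a ha) h
      have heq : lca hT x m a = lca hT x v a := lca_eq hT hks.2
      rw [heq]
      exact hC1 a ha
  have hvm : lca hT x v m = m :=
    lca_eq hT ⟨sm1, btw_triv_right hT x m, btw_triv_right hT v m⟩
  have hmm : lca hT x m m = m := lca_self hT x m
  have hvv : lca hT x v v = v := lca_self hT x v
  intro a ha b hb
  rcases Finset.mem_insert.1 ha with rfl | ha'
  · rcases Finset.mem_insert.1 hb with rfl | hb'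
    · rw [hvv]; exact Finset.mem_insert_self _ _
    · rcases Finset.mem_insert.1 hb' with rfl | hb''
      · rw [hvm]; exact Finset.mem_insert_of_mem (Finset.mem_insert_self _ _)
      · exact Finset.mem_insert_of_mem (hC1 b hb'')
  · rcases Finset.mem_insert.1 ha' with rfl | ha''
    · rcases Finset.mem_insert.1 hb with rfl | hb'
      · rw [lca_comm, hvm]; exact Finset.mem_insert_of_mem (Finset.mem_insert_self _ _)
      · rcases Finset.mem_insert.1 hb' with rfl | hb''
        · rw [hmm]; exact Finset.mem_insert_of_mem (Finset.mem_insert_self _ _)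
        · exact Finset.mem_insert_of_mem (hC2 b hb'')
    · rcases Finset.mem_insert.1 hb with rfl | hb'
      · rw [lca_comm]; exact Finset.mem_insert_of_mem (hC1 a ha'')
      · rcases Finset.mem_insert.1 hb' with rfl | hb''
        · rw [lca_comm]; exact Finset.mem_insert_of_mem (hC2 a ha'')
        · exact Finset.mem_insert_of_mem (Finset.mem_insert_of_mem (hB a ha'' b hb''))

theorem closure (hT : T.IsTree) (x : V) (A : Finset V) :
    ∃ B : Finset V, A ⊆ B ∧ B.Nonempty ∧ B.card ≤ 2 * A.card + 1 ∧
      ∀ a ∈ B, ∀ b ∈ B, lca hT x a b ∈ B := by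
  classical
  induction A using Finset.induction_on with
  | empty =>
    refine ⟨{x}, by simp, ⟨x, by simp⟩, by simp, ?_⟩
    intro a ha b hb
    simp only [Finset.mem_singleton] at *
    subst ha; subst hb
    simp [lca_self hT]
  | @insert v A' hnotmem ih =>
    obtain ⟨B, hsub, hne, hcard, hclosed⟩ := ih
    obtain ⟨m, hm⟩ := closure_insert hT x v B hne hclosed
    refine ⟨insert v (insert m B), ?_, ⟨v, Finset.mem_insert_self _ _⟩, ?_, hm⟩
    · intro z hz
      rcases Finset.mem_insert.1 hz with rfl | hz'
      · exact Finset.mem_insert_self _ _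
      · exact Finset.mem_insert_of_mem (Finset.mem_insert_of_mem (hsub hz'))
    · calc (insert v (insert m B)).card ≤ (insert m B).card + 1 := Finset.card_insert_le _ _
        _ ≤ B.card + 1 + 1 := by have := Finset.card_insert_le m B; omega
        _ ≤ 2 * A'.card + 1 + 1 + 1 := by omega
        _ ≤ 2 * (insert v A').card + 1 := by
            rw [Finset.card_insert_of_notMem hnotmem]; omega

end Stmt14Aux3
namespace Stmt14Aux4
open SimpleGraph Walk Stmt14Aux Stmt14Aux2 Stmt14Aux3

variable {V : Type*} [Fintype V] [DecidableEq V] {T : SimpleGraph V}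

theorem dist_lt_card (hT : T.IsTree) (a b : V) : T.dist a b < Fintype.card V := by
  obtain ⟨p, hp, hl⟩ := hT.isConnected.exists_path_of_dist a b
  have h1 : p.support.length = p.length + 1 := p.length_support
  have h2 : p.support.length ≤ Fintype.card V := hp.support_nodup.length_le_card
  omega

open Classical in
/-- residual weight of the subtree under `v` (rooted at `x`), not counting
already-heavy child subtrees -/
noncomputable def resW (T : SimpleGraph V) (x : V) (c : ℕ) (v : V) : ℕ :=
  1 + ∑ w ∈ (Finset.univ.filter (fun w => T.Adj v w ∧ T.dist x w = T.dist x v + 1 ∧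
        T.dist x w < Fintype.card V)).attach,
      (if c * resW T x c w.1 ≤ Fintype.card V then resW T x c w.1 else 0)
termination_by Fintype.card V - T.dist x v
decreasing_by
  all_goals {
    have hw := w.2
    simp only [Finset.mem_filter] at hw
    omega }

open Classical in
/-- the "children" of `v` in the tree rooted at `x` -/
noncomputable def childF (T : SimpleGraph V) (x v : V) : Finset V :=
  Finset.univ.filter (fun w => T.Adj v w ∧ T.dist x w = T.dist x v + 1 ∧
    T.dist x w < Fintype.card V)

theorem resW_eq (T : SimpleGraph V) (x : V) (c : ℕ) (v : V) :
    resW T x c v = 1 + ∑ w ∈ childF T x v,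
      (if c * resW T x c w ≤ Fintype.card V then resW T x c w else 0) := by
  rw [resW, childF]
  congr 1
  exact Finset.sum_attach _ (fun w => if c * resW T x c w ≤ Fintype.card V then resW T x c w else 0)

theorem resW_pos (T : SimpleGraph V) (x : V) (c : ℕ) (v : V) : 0 < resW T x c v := by
  rw [resW_eq]; omega

open Classical in
/-- heavy vertices -/
noncomputable def Sset (T : SimpleGraph V) (x : V) (c : ℕ) : Finset V :=
  Finset.univ.filter (fun v => Fintype.card V < c * resW T x c v)

open Classical in
/-- residual descendants of `v`: descendants reachable without passing a heavy
vertex strictly below `v` -/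
noncomputable def DrF (T : SimpleGraph V) (hT : T.IsTree) (x : V) (c : ℕ) (v : V) : Finset V :=
  Finset.univ.filter (fun u => TBtw T x v u ∧
    ∀ z, TBtw T x z u → TBtw T x v z → Fintype.card V < c * resW T x c z → z = v)

theorem mem_childF (hT : T.IsTree) {x v w : V} :
    w ∈ childF T x v ↔ T.Adj v w ∧ T.dist x w = T.dist x v + 1 := by
  simp only [childF, Finset.mem_filter, Finset.mem_univ, true_and]
  exact ⟨fun h => ⟨h.1, h.2.1⟩, fun h => ⟨h.1, h.2, dist_lt_card hT x w⟩⟩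

/-- branching step: a descendant lies under a unique child -/
theorem exists_child (hT : T.IsTree) {x v u : V} (hu : TBtw T x v u) (hne : u ≠ v) :
    ∃ w, w ∈ childF T x v ∧ TBtw T x w u ∧ TBtw T v w u := by
  obtain ⟨p, hp, hl⟩ := hT.isConnected.exists_path_of_dist v u
  cases p with
  | nil => exact absurd rfl hne.symm
  | cons hadj q =>
    rename_i w
    have hwsup : w ∈ (Walk.cons hadj q).support := by simp
    have hbvwu : TBtw T v w u := btw_of_mem hT hp hwsup
    have hdvw : T.dist v w = 1 := (T.dist_eq_one_iff_adj).2 hadj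
    have t1 : T.dist x w ≤ T.dist x v + T.dist v w := hT.isConnected.dist_triangle
    have t2 : T.dist x u ≤ T.dist x w + T.dist w u := hT.isConnected.dist_triangle
    unfold TBtw at hu hbvwu ⊢
    have hdep : T.dist x w = T.dist x v + 1 := by omega
    exact ⟨w, (mem_childF hT).2 ⟨hadj, hdep⟩, by omega, hbvwu⟩

theorem btw_x_child (hT : T.IsTree) {x v w : V} (hw : w ∈ childF T x v) : TBtw T x v w := by
  rw [mem_childF hT] at hw
  have hdvw : T.dist v w = 1 := (T.dist_eq_one_iff_adj).2 hw.1
  unfold TBtw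
  omega

theorem mem_DrF_self (hT : T.IsTree) (x : V) (c : ℕ) (v : V) : v ∈ DrF T hT x c v := by
  classical
  simp only [DrF, Finset.mem_filter, Finset.mem_univ, true_and]
  refine ⟨btw_triv_right hT x v, ?_⟩
  intro z h1 h2 _
  unfold TBtw at h1 h2
  have c1 : T.dist z v = T.dist v z := T.dist_comm
  have : T.dist v z = 0 := by omega
  exact (eq_of_dist_eq_zero hT this).symm

theorem btw_of_mem_DrF (hT : T.IsTree) {x v u : V} {c : ℕ} (h : u ∈ DrF T hT x c v) :
    TBtw T x v u := by
  classical
  simp only [DrF, Finset.mem_filter, Finset.mem_univ, true_and] at h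
  exact h.1

theorem DrF_decomp (hT : T.IsTree) (x : V) (c : ℕ) (v : V) :
    DrF T hT x c v = insert v (Finset.biUnion
      ((childF T x v).filter (fun w => c * resW T x c w ≤ Fintype.card V))
      (fun w => DrF T hT x c w)) := by
  classical
  ext u
  simp only [Finset.mem_insert, Finset.mem_biUnion, Finset.mem_filter]
  constructor
  · intro hu
    by_cases hne : u = v
    · exact Or.inl hne
    · right
      simp only [DrF, Finset.mem_filter, Finset.mem_univ, true_and] at hu
      obtain ⟨hbvu, hcond⟩ := hu
      obtain ⟨w, hwchild, hbwu, _⟩ := exists_child hT hbvu hne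
      have hbvw : TBtw T x v w := btw_x_child hT hwchild
      have hwv : w ≠ v := by
        rw [mem_childF hT] at hwchild
        intro h; rw [h] at hwchild
        omega
      have hwlight : c * resW T x c w ≤ Fintype.card V := by
        by_contra hh
        push_neg at hh
        exact hwv (hcond w hbwu hbvw hh)
      refine ⟨w, ⟨hwchild, hwlight⟩, ?_⟩
      simp only [DrF, Finset.mem_filter, Finset.mem_univ, true_and]
      refine ⟨hbwu, ?_⟩
      intro z hzu hbwz hzheavy
      exfalso
      have hbvz : TBtw T x v z := by
        unfold TBtw at hbvw hbwz ⊢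
        have t1 : T.dist v z ≤ T.dist v w + T.dist w z := hT.isConnected.dist_triangle
        have t2 : T.dist x z ≤ T.dist x v + T.dist v z := hT.isConnected.dist_triangle
        omega
      have hzv : z = v := hcond z hzu hbvz hzheavy
      rw [hzv] at hbwz
      rw [mem_childF hT] at hwchild
      unfold TBtw at hbwz hbvw
      omega
  · intro hu
    rcases hu with rfl | ⟨w, ⟨hwchild, hwlight⟩, hu⟩
    · exact mem_DrF_self hT x c u
    · simp only [DrF, Finset.mem_filter, Finset.mem_univ, true_and] at hu ⊢
      obtain ⟨hbwu, hcond⟩ := hu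
      have hbvw : TBtw T x v w := btw_x_child hT hwchild
      have hbvu : TBtw T x v u := by
        unfold TBtw at hbvw hbwu ⊢
        have t1 : T.dist v u ≤ T.dist v w + T.dist w u := hT.isConnected.dist_triangle
        have t2 : T.dist x u ≤ T.dist x v + T.dist v u := hT.isConnected.dist_triangle
        omega
      refine ⟨hbvu, ?_⟩
      intro z hzu hbvz hzheavy
      rcases comparable hT hzu hbwu with hzw | hwz
      · by_cases hzv : z = v
        · exact hzv
        · exfalso
          have hpos : 0 < T.dist v z := dist_pos_of_ne hT (fun h => hzv h.symm)
          rw [mem_childF hT] at hwchild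
          have hzw' : z = w := by
            apply eq_of_dist_eq_zero hT
            unfold TBtw at hzw hbvz hbvw
            omega
          rw [hzw'] at hzheavy
          omega
      · exfalso
        have hzw2 := hcond z hzu hwz hzheavy
        rw [hzw2] at hzheavy
        omega

theorem DrF_child_disjoint (hT : T.IsTree) (x : V) (c : ℕ) {v w w' : V}
    (hw : w ∈ childF T x v) (hw' : w' ∈ childF T x v) (hne : w ≠ w') :
    ∀ u, u ∈ DrF T hT x c w → u ∈ DrF T hT x c w' → False := by
  intro u h1 h2
  have b1 := btw_of_mem_DrF hT h1
  have b2 := btw_of_mem_DrF hT h2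
  rw [mem_childF hT] at hw hw'
  have : T.dist w w' = 0 ∨ T.dist w' w = 0 := by
    rcases comparable hT b1 b2 with h | h
    · left; unfold TBtw at h; omega
    · right; unfold TBtw at h; omega
  rcases this with h | h
  · exact hne (eq_of_dist_eq_zero hT h)
  · exact hne (eq_of_dist_eq_zero hT h).symm

theorem card_DrF (hT : T.IsTree) (x : V) (c : ℕ) :
    ∀ k v, Fintype.card V - T.dist x v ≤ k → (DrF T hT x c v).card = resW T x c v := by
  classical
  intro k
  induction k with
  | zero =>
    intro v hv
    have := dist_lt_card hT x v
    omega
  | succ k ih =>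
    intro v hv
    rw [DrF_decomp hT x c v]
    have hvnot : v ∉ Finset.biUnion
        ((childF T x v).filter (fun w => c * resW T x c w ≤ Fintype.card V))
        (fun w => DrF T hT x c w) := by
      simp only [Finset.mem_biUnion, Finset.mem_filter]
      rintro ⟨w, ⟨hwchild, _⟩, hmem⟩
      have hb := btw_of_mem_DrF hT hmem
      rw [mem_childF hT] at hwchild
      unfold TBtw at hb
      omega
    rw [Finset.card_insert_of_notMem hvnot]
    rw [Finset.card_biUnion (fun w hwm w' hwm' hne => by
      rw [Function.onFun, Finset.disjoint_left]
      intro u hu hu'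
      exact DrF_child_disjoint hT x c (Finset.mem_filter.1 hwm).1
        (Finset.mem_filter.1 hwm').1 hne u hu hu')]
    rw [resW_eq T x c v]
    rw [← Finset.sum_filter]
    rw [Nat.add_comm]
    congr 1
    apply Finset.sum_congr rfl
    intro w hw
    apply ih
    have := (mem_childF hT).1 (Finset.mem_filter.1 hw).1
    omega

theorem Sset_card (hT : T.IsTree) (x : V) (c : ℕ) (hc : 1 ≤ c) :
    (Sset T x c).card + 1 ≤ c := by
  classical
  set n := Fintype.card V with hn
  have hdisj : ∀ v ∈ Sset T x c, ∀ v' ∈ Sset T x c, v ≠ v' →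
      Disjoint (DrF T hT x c v) (DrF T hT x c v') := by
    have key : ∀ v ∈ Sset T x c, ∀ v' ∈ Sset T x c, v ≠ v' →
        ∀ u, u ∈ DrF T hT x c v → u ∈ DrF T hT x c v' → TBtw T x v v' → False := by
      intro v hv v' hv' hne u hu hu' hbvv'
      simp only [DrF, Finset.mem_filter, Finset.mem_univ, true_and] at hu
      simp only [Sset, Finset.mem_filter, Finset.mem_univ, true_and] at hv'
      exact hne ((hu.2 v' (btw_of_mem_DrF hT hu') hbvv' hv').symm)
    intro v hv v' hv' hne
    rw [Finset.disjoint_left]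
    intro u hu hu'
    rcases comparable hT (btw_of_mem_DrF hT hu) (btw_of_mem_DrF hT hu') with h | h
    · exact key v hv v' hv' hne u hu hu' h
    · exact key v' hv' v hv hne.symm u hu' hu h
  have hsum : ∑ v ∈ Sset T x c, resW T x c v ≤ n := by
    have : ∑ v ∈ Sset T x c, resW T x c v
        = ((Sset T x c).biUnion (fun v => DrF T hT x c v)).card := by
      rw [Finset.card_biUnion hdisj]
      exact Finset.sum_congr rfl (fun v _ => (card_DrF hT x c n v (by omega)).symm)
    rw [this, hn]
    exact Finset.card_le_univ _
  have hlow : ∀ v ∈ Sset T x c, n + 1 ≤ c * resW T x c v := by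
    intro v hv
    simp only [Sset, Finset.mem_filter, Finset.mem_univ, true_and] at hv
    omega
  have h1 : (Sset T x c).card * (n + 1) ≤ c * n := by
    calc (Sset T x c).card * (n + 1) = ∑ _v ∈ Sset T x c, (n + 1) := by
          rw [Finset.sum_const, smul_eq_mul]
        _ ≤ ∑ v ∈ Sset T x c, c * resW T x c v := Finset.sum_le_sum hlow
        _ = c * ∑ v ∈ Sset T x c, resW T x c v := by rw [Finset.mul_sum]
        _ ≤ c * n := Nat.mul_le_mul_left c hsum
  by_contra hcon
  push_neg at hcon
  have h2 : c * (n + 1) ≤ (Sset T x c).card * (n + 1) := Nat.mul_le_mul_right _ (by omega)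
  have h3 : c * (n + 1) = c * n + c := by ring
  omega

end Stmt14Aux4
namespace Stmt14Aux5
open SimpleGraph Walk Stmt14Aux Stmt14Aux2 Stmt14Aux3 Stmt14Aux4

variable {V : Type*} [Fintype V] [DecidableEq V] {T : SimpleGraph V}

theorem exists_path_in (hT : T.IsTree) {U : Set V}
    (hconn : (SimpleGraph.induce U T).Connected) {u0 u : V} (h0 : u0 ∈ U) (h1 : u ∈ U) :
    ∃ p : T.Walk u0 u, p.IsPath ∧ ∀ z ∈ p.support, z ∈ U := by
  obtain ⟨q⟩ := hconn.preconnected ⟨u0, h0⟩ ⟨u, h1⟩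
  let f := (SimpleGraph.Embedding.induce U (G := T)).toHom
  let p1 : T.Walk u0 u := q.map f
  refine ⟨p1.bypass, Walk.bypass_isPath _, ?_⟩
  intro z hz
  have hz' := p1.support_bypass_subset hz
  have : z ∈ q.support.map f := by
    rw [← Walk.support_map]; exact hz'
  obtain ⟨zz, hzz, rfl⟩ := List.mem_map.1 this
  exact zz.2

theorem comp_small (hT : T.IsTree) (x : V) (c : ℕ) {U : Set V} (hUne : U.Nonempty)
    (hconn : (SimpleGraph.induce U T).Connected)
    (hlight : ∀ v ∈ U, c * resW T x c v ≤ Fintype.card V) :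
    U.ncard * c ≤ Fintype.card V := by
  classical
  obtain ⟨u0, hu0, hmin⟩ := Set.exists_min_image U (fun v => T.dist x v) U.toFinite hUne
  have hsub : U ⊆ ↑(DrF T hT x c u0) := by
    intro u hu
    obtain ⟨p, hp, hpsub⟩ := exists_path_in hT hconn hu0 hu
    obtain ⟨s1, s2, s3⟩ := lca_spec hT x u0 u
    have hb : TBtw T x u0 u := by
      have hmem : lca hT x u0 u ∈ p.support := mem_support_of_btw hT hp s3
      have hUm : lca hT x u0 u ∈ U := hpsub _ hmem
      have hle := hmin _ hUm
      have hlu : lca hT x u0 u = u0 := by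
        apply eq_of_dist_eq_zero hT
        unfold TBtw at s1
        have : T.dist (lca hT x u0 u) u0 = 0 := by omega
        -- goal : dist (lca) u0 = 0
        exact this
      rw [hlu] at s2; exact s2
    have : u ∈ DrF T hT x c u0 := by
      simp only [DrF, Finset.mem_filter, Finset.mem_univ, true_and]
      refine ⟨hb, ?_⟩
      intro z hz1 hz2 hzheavy
      have hbu : TBtw T u0 z u := by
        unfold TBtw at hb hz1 hz2 ⊢
        omega
      have hzU : z ∈ U := hpsub _ (mem_support_of_btw hT hp hbu)
      exact absurd (hlight z hzU) (by omega)
    exact this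
  have h1 : U.ncard ≤ (DrF T hT x c u0).card := by
    rw [← Set.ncard_coe_finset]
    exact Set.ncard_le_ncard hsub (Finset.finite_toSet _)
  have h2 : (DrF T hT x c u0).card = resW T x c u0 :=
    card_DrF hT x c (Fintype.card V) u0 (by omega)
  have h3 := hlight u0 hu0
  calc U.ncard * c ≤ resW T x c u0 * c := Nat.mul_le_mul_right _ (by omega)
    _ = c * resW T x c u0 := Nat.mul_comm _ _
    _ ≤ Fintype.card V := h3

theorem median_btw (hT : T.IsTree) (x w1 w2 w3 : V)
    (h13 : T.dist x (lca hT x w1 w3) ≤ T.dist x (lca hT x w1 w2))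
    (h23 : T.dist x (lca hT x w2 w3) ≤ T.dist x (lca hT x w1 w2)) :
    TBtw T w1 (lca hT x w1 w2) w3 ∧ TBtw T w2 (lca hT x w1 w2) w3 := by
  obtain ⟨a1, a2, a3⟩ := lca_spec hT x w1 w2
  obtain ⟨b1, b2, b3⟩ := lca_spec hT x w1 w3
  obtain ⟨c1, c2, c3⟩ := lca_spec hT x w2 w3
  have hcmp1 : TBtw T x (lca hT x w1 w3) (lca hT x w1 w2) := anc_of_depth_le hT b1 a1 h13
  have hcmp2 : TBtw T x (lca hT x w2 w3) (lca hT x w1 w2) := anc_of_depth_le hT c1 a2 h23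
  constructor
  · unfold TBtw at b1 a1 hcmp1 b3 ⊢
    have e1 : T.dist w1 (lca hT x w1 w3) = T.dist (lca hT x w1 w3) w1 := T.dist_comm
    have e2 : T.dist w1 (lca hT x w1 w2) = T.dist (lca hT x w1 w2) w1 := T.dist_comm
    have e3 : T.dist (lca hT x w1 w2) (lca hT x w1 w3)
        = T.dist (lca hT x w1 w3) (lca hT x w1 w2) := T.dist_comm
    have t1 : T.dist w1 w3 ≤ T.dist w1 (lca hT x w1 w2) + T.dist (lca hT x w1 w2) w3 :=
      hT.isConnected.dist_triangle
    have t2 : T.dist (lca hT x w1 w2) w3 ≤ T.dist (lca hT x w1 w2) (lca hT x w1 w3)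
        + T.dist (lca hT x w1 w3) w3 := hT.isConnected.dist_triangle
    omega
  · unfold TBtw at c1 a2 hcmp2 c3 ⊢
    have e1 : T.dist w2 (lca hT x w2 w3) = T.dist (lca hT x w2 w3) w2 := T.dist_comm
    have e2 : T.dist w2 (lca hT x w1 w2) = T.dist (lca hT x w1 w2) w2 := T.dist_comm
    have e3 : T.dist (lca hT x w1 w2) (lca hT x w2 w3)
        = T.dist (lca hT x w2 w3) (lca hT x w1 w2) := T.dist_comm
    have t1 : T.dist w2 w3 ≤ T.dist w2 (lca hT x w1 w2) + T.dist (lca hT x w1 w2) w3 :=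
      hT.isConnected.dist_triangle
    have t2 : T.dist (lca hT x w1 w2) w3 ≤ T.dist (lca hT x w1 w2) (lca hT x w2 w3)
        + T.dist (lca hT x w2 w3) w3 := hT.isConnected.dist_triangle
    omega

theorem three_contra (hT : T.IsTree) {U : Set V} {W : Finset V}
    (hUdisj : Disjoint U (↑W : Set V)) {w1 w2 w3 m : V}
    (hm : m ∈ W) (hne12 : w1 ≠ w2) (hne13 : w1 ≠ w3) (hne23 : w2 ≠ w3)
    (b12 : TBtw T w1 m w2) (b13 : TBtw T w1 m w3) (b23 : TBtw T w2 m w3)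
    (h12 : ∃ p : T.Walk w1 w2, p.IsPath ∧ ∀ z ∈ p.support, z ∈ U ∪ {w1, w2})
    (h13 : ∃ p : T.Walk w1 w3, p.IsPath ∧ ∀ z ∈ p.support, z ∈ U ∪ {w1, w3})
    (h23 : ∃ p : T.Walk w2 w3, p.IsPath ∧ ∀ z ∈ p.support, z ∈ U ∪ {w2, w3}) :
    False := by
  have hmU : m ∉ U := fun h => Set.disjoint_left.1 hUdisj h (by exact_mod_cast hm)
  obtain ⟨p12, hp12, hs12⟩ := h12
  obtain ⟨p13, hp13, hs13⟩ := h13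
  obtain ⟨p23, hp23, hs23⟩ := h23
  have m12 : m = w1 ∨ m = w2 := by
    have := hs12 m (mem_support_of_btw hT hp12 b12)
    rcases this with h | h
    · exact absurd h hmU
    · simpa using h
  have m13 : m = w1 ∨ m = w3 := by
    have := hs13 m (mem_support_of_btw hT hp13 b13)
    rcases this with h | h
    · exact absurd h hmU
    · simpa using h
  have m23 : m = w2 ∨ m = w3 := by
    have := hs23 m (mem_support_of_btw hT hp23 b23)
    rcases this with h | h
    · exact absurd h hmU
    · simpa using h
  rcases m12 with rfl | rfl
  · rcases m23 with h | h
    · exact hne12 h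
    · exact hne13 h
  · rcases m13 with h | h
    · exact hne12 h.symm
    · exact hne23 h

end Stmt14Aux5

/-- The neighborhood `N_G(U)`: vertices outside `U` adjacent to some vertex of `U`. -/
def Nbhd {V : Type*} (G : SimpleGraph V) (U : Set V) : Set V :=
  {v | v ∉ U ∧ ∃ u ∈ U, G.Adj u v}

/-- `U` is a connected component of `G − W`: `U` is a nonempty set of vertices disjoint
from `W`, inducing a connected subgraph, and every neighbor of `U` outside `U` lies
in `W`. -/
def IsCompOutside {V : Type*} (G : SimpleGraph V) (W U : Set V) : Prop :=
  U.Nonempty ∧ Disjoint U W ∧ (SimpleGraph.induce U G).Connected ∧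
    ∀ u ∈ U, ∀ v : V, G.Adj u v → v ∉ U → v ∈ W

open SimpleGraph Walk Stmt14Aux Stmt14Aux2 Stmt14Aux3 Stmt14Aux4 Stmt14Aux5 in
/-- For every finite tree `T`, vertices `x, y` and integer `c ≥ 1`,
there is a set `W` of vertices with `x, y ∈ W` and `|W| ≤ 2c + 4` such that every connected
component `U` of `T − W` satisfies `|U| ≤ |V(T)|/c` and `|N_T(U)| ≤ 2`. -/
theorem stmt14 {V : Type*} [Fintype V] [DecidableEq V]
    (T : SimpleGraph V) (hT : T.IsTree) (x y : V) (c : ℕ) (hc : 1 ≤ c) :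
    ∃ W : Finset V, x ∈ W ∧ y ∈ W ∧ W.card ≤ 2 * c + 4 ∧
      ∀ U : Set V, IsCompOutside T (↑W) U →
        U.ncard * c ≤ Fintype.card V ∧ (Nbhd T U).ncard ≤ 2 := by
  classical
  obtain ⟨W, hsub, hWne, hWcard, hclosed⟩ :=
    closure hT x (insert x (insert y (Sset T x c)))
  refine ⟨W, hsub (Finset.mem_insert_self _ _),
    hsub (Finset.mem_insert_of_mem (Finset.mem_insert_self _ _)), ?_, ?_⟩
  · have hS := Sset_card hT x c hc
    have h1 : (insert x (insert y (Sset T x c))).card ≤ (Sset T x c).card + 2 := by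
      have h2 := Finset.card_insert_le x (insert y (Sset T x c))
      have h3 := Finset.card_insert_le y (Sset T x c)
      omega
    omega
  · intro U hU
    obtain ⟨hUne, hUdisj, hUconn, hUclosed⟩ := hU
    constructor
    · apply comp_small hT x c hUne hUconn
      intro v hv
      by_contra hh
      push_neg at hh
      have hvS : v ∈ Sset T x c := by
        simp only [Sset, Finset.mem_filter, Finset.mem_univ, true_and]
        omega
      have hvW : v ∈ (↑W : Set V) := by
        exact_mod_cast hsub (Finset.mem_insert_of_mem (Finset.mem_insert_of_mem hvS))
      exact Set.disjoint_left.1 hUdisj hv hvW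
    · by_contra hh
      push_neg at hh
      have hNsub : ∀ w ∈ Nbhd T U, w ∈ W := by
        rintro w ⟨hwU, u, huU, hadj⟩
        have := hUclosed u huU w hadj hwU
        exact_mod_cast this
      have hfin : (Nbhd T U).Finite := Set.toFinite _
      have hcard' : 2 < hfin.toFinset.card := by
        rw [← Set.ncard_eq_toFinset_card _ hfin]
        omega
      obtain ⟨w1, w2, w3, hw1, hw2, hw3, hne12, hne13, hne23⟩ :=
        Finset.two_lt_card_iff.1 hcard'
      rw [Set.Finite.mem_toFinset] at hw1 hw2 hw3
      have hpair : ∀ wa wb : V, wa ∈ Nbhd T U → wb ∈ Nbhd T U →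
          ∃ p : T.Walk wa wb, p.IsPath ∧ ∀ z ∈ p.support, z ∈ U ∪ {wa, wb} := by
        rintro wa wb ⟨hwaU, ua, huaU, hadja⟩ ⟨hwbU, ub, hubU, hadjb⟩
        obtain ⟨q, hq, hqsub⟩ := exists_path_in hT hUconn huaU hubU
        refine ⟨(Walk.cons (T.adj_symm hadja)
          (q.append (Walk.cons hadjb Walk.nil))).bypass, Walk.bypass_isPath _, ?_⟩
        intro z hz
        have hz' := Walk.support_bypass_subset _ hz
        rw [Walk.support_cons] at hz'
        rcases List.mem_cons.1 hz' with rfl | hz''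
        · right; left; rfl
        · rcases (Walk.mem_support_append_iff _ _).1 hz'' with h | h
          · exact Or.inl (hqsub _ h)
          · rw [Walk.support_cons] at h
            rcases List.mem_cons.1 h with rfl | h'
            · exact Or.inl hubU
            · rw [Walk.support_nil] at h'
              rcases List.mem_singleton.1 h' with rfl
              right; right; rfl
      have hp12 := hpair w1 w2 hw1 hw2
      have hp13 := hpair w1 w3 hw1 hw3
      have hp23 := hpair w2 w3 hw2 hw3
      have hw1W : w1 ∈ W := hNsub w1 hw1
      have hw2W : w2 ∈ W := hNsub w2 hw2
      have hw3W : w3 ∈ W := hNsub w3 hw3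
      have hc12 : lca hT x w1 w2 ∈ W := hclosed w1 hw1W w2 hw2W
      have hc13 : lca hT x w1 w3 ∈ W := hclosed w1 hw1W w3 hw3W
      have hc23 : lca hT x w2 w3 ∈ W := hclosed w2 hw2W w3 hw3W
      by_cases hA : T.dist x (lca hT x w1 w3) ≤ T.dist x (lca hT x w1 w2) ∧
          T.dist x (lca hT x w2 w3) ≤ T.dist x (lca hT x w1 w2)
      · obtain ⟨hb13, hb23⟩ := median_btw hT x w1 w2 w3 hA.1 hA.2
        exact three_contra hT hUdisj hc12 hne12 hne13 hne23
          (lca_spec hT x w1 w2).2.2 hb13 hb23 hp12 hp13 hp23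
      · by_cases hB : T.dist x (lca hT x w1 w2) ≤ T.dist x (lca hT x w1 w3) ∧
            T.dist x (lca hT x w2 w3) ≤ T.dist x (lca hT x w1 w3)
        · have hB2 : T.dist x (lca hT x w3 w2) ≤ T.dist x (lca hT x w1 w3) := by
            rw [lca_comm hT x w3 w2]; exact hB.2
          obtain ⟨hb12, hb32⟩ := median_btw hT x w1 w3 w2 hB.1 hB2
          exact three_contra hT hUdisj hc13 hne12 hne13 hne23
            hb12 (lca_spec hT x w1 w3).2.2 (btw_symm hb32) hp12 hp13 hp23
        · rw [not_and_or] at hA hB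
          push_neg at hA hB
          have hC1 : T.dist x (lca hT x w2 w1) ≤ T.dist x (lca hT x w2 w3) := by
            rw [lca_comm hT x w2 w1]; omega
          have hC2 : T.dist x (lca hT x w3 w1) ≤ T.dist x (lca hT x w2 w3) := by
            rw [lca_comm hT x w3 w1]; omega
          obtain ⟨hb21, hb31⟩ := median_btw hT x w2 w3 w1 hC1 hC2
          exact three_contra hT hUdisj hc23 hne12 hne13 hne23
            (btw_symm hb21) (btw_symm hb31) (lca_spec hT x w2 w3).2.2 hp12 hp13 hp23
end

section
/- Let T be a finite tree rooted at a vertex r and let W_1 be a nonempty set of vertices of T. Let W be the least common ancestor closure of W_1, i.e., the smallest superset of W_1 such that for every pair of vertices u, v ∈ W their least common ancestor in the rooted tree T is also in W. Then |W| ≤ 2·|W_1|. -/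
/-- In the graph `T` rooted at `r`, the vertex `a` is an ancestor of `v`: `a` lies on
a (in a tree: the unique) path from `v` to `r`. -/
def IsAncestor {V : Type*} (T : SimpleGraph V) (r a v : V) : Prop :=
  ∃ p : T.Walk v r, p.IsPath ∧ a ∈ p.support

/-- In the graph `T` rooted at `r`, the vertex `a` is a least common ancestor of `u` and
`v`: it is a common ancestor of `u` and `v` that is farthest from the root `r`. -/
def IsLCA {V : Type*} (T : SimpleGraph V) (r u v a : V) : Prop :=
  IsAncestor T r a u ∧ IsAncestor T r a v ∧
    ∀ b : V, IsAncestor T r b u → IsAncestor T r b v → T.dist r b ≤ T.dist r a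

namespace Stmt16Aux

open SimpleGraph

variable {V : Type*} [DecidableEq V] {T : SimpleGraph V}

/-- The canonical (unique) path between two vertices of a tree. -/
noncomputable def pth (hT : T.IsTree) (u v : V) : T.Walk u v :=
  (hT.existsUnique_path u v).exists.choose

lemma pth_isPath (hT : T.IsTree) (u v : V) : (pth hT u v).IsPath :=
  (hT.existsUnique_path u v).exists.choose_spec

lemma path_unique (hT : T.IsTree) {u v : V} (p : T.Walk u v) (hp : p.IsPath) :
    p = pth hT u v :=
  (hT.existsUnique_path u v).unique hp (pth_isPath hT u v)

lemma length_pth (hT : T.IsTree) (u v : V) : (pth hT u v).length = T.dist u v := by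
  obtain ⟨q, hq, hlen⟩ := hT.isConnected.exists_path_of_dist u v
  rw [← path_unique hT q hq]; exact hlen

lemma isAncestor_iff (hT : T.IsTree) {r a v : V} :
    IsAncestor T r a v ↔ a ∈ (pth hT v r).support := by
  constructor
  · rintro ⟨p, hp, hap⟩; rwa [path_unique hT p hp] at hap
  · intro h; exact ⟨_, pth_isPath hT v r, h⟩

lemma dropUntil_pth (hT : T.IsTree) {v r a : V} (h : a ∈ (pth hT v r).support) :
    (pth hT v r).dropUntil a h = pth hT a r :=
  path_unique hT _ ((pth_isPath hT v r).dropUntil h)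

lemma isAncestor_self (hT : T.IsTree) (r v : V) : IsAncestor T r v v :=
  ⟨pth hT v r, pth_isPath hT v r, Walk.start_mem_support _⟩

lemma isAncestor_root (hT : T.IsTree) (r v : V) : IsAncestor T r r v :=
  ⟨pth hT v r, pth_isPath hT v r, Walk.end_mem_support _⟩

lemma isAncestor_trans (hT : T.IsTree) {r a b v : V}
    (hab : IsAncestor T r a b) (hbv : IsAncestor T r b v) : IsAncestor T r a v := by
  rw [isAncestor_iff hT] at hab hbv ⊢
  have h := dropUntil_pth hT hbv
  exact (pth hT v r).support_dropUntil_subset hbv (h ▸ hab)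

lemma dist_le_of_ancestor (hT : T.IsTree) {r a v : V} (h : IsAncestor T r a v) :
    T.dist r a ≤ T.dist r v := by
  rw [isAncestor_iff hT] at h
  have h1 := congrArg Walk.length ((pth hT v r).take_spec h)
  rw [Walk.length_append] at h1
  have h2 : (pth hT v r).dropUntil a h = pth hT a r := dropUntil_pth hT h
  rw [SimpleGraph.dist_comm (G := T) (u := r) (v := a), SimpleGraph.dist_comm (G := T) (u := r) (v := v),
    ← length_pth hT, ← length_pth hT, ← h2, ← h1]
  omega

lemma dist_lt_of_ancestor_ne (hT : T.IsTree) {r a v : V} (h : IsAncestor T r a v)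
    (hne : a ≠ v) : T.dist r a < T.dist r v := by
  rw [isAncestor_iff hT] at h
  have h1 := congrArg Walk.length ((pth hT v r).take_spec h)
  rw [Walk.length_append] at h1
  have h2 : (pth hT v r).dropUntil a h = pth hT a r := dropUntil_pth hT h
  have h3 : ((pth hT v r).takeUntil a h).length ≠ 0 := by
    intro h0
    exact hne (Walk.eq_of_length_eq_zero h0).symm
  rw [SimpleGraph.dist_comm (G := T) (u := r) (v := a), SimpleGraph.dist_comm (G := T) (u := r) (v := v),
    ← length_pth hT, ← length_pth hT, ← h2, ← h1]
  omega

lemma ancestor_comparable (hT : T.IsTree) {r a b v : V}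
    (ha : IsAncestor T r a v) (hb : IsAncestor T r b v) :
    IsAncestor T r a b ∨ IsAncestor T r b a := by
  rw [isAncestor_iff hT] at ha hb
  set p := pth hT v r with hpdef
  have hpp : p.IsPath := pth_isPath hT v r
  have hspec := p.take_spec ha
  have hmem : b ∈ ((p.takeUntil a ha).append (p.dropUntil a ha)).support := by
    rw [hspec]; exact hb
  rw [Walk.mem_support_append_iff] at hmem
  rcases hmem with h1 | h2
  · -- `b` lies before `a` on the path, so `a` is an ancestor of `b`
    left
    refine ⟨((p.takeUntil a ha).dropUntil b h1).append (p.dropUntil a ha), ?_, ?_⟩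
    · rw [Walk.isPath_def, Walk.support_append]
      have hnodup : ((p.takeUntil a ha).support ++ (p.dropUntil a ha).support.tail).Nodup := by
        rw [← Walk.support_append, hspec]; exact hpp.support_nodup
      rcases List.nodup_append'.mp hnodup with ⟨_, hn2, hdisj⟩
      refine List.Nodup.append ?_ hn2 ?_
      · exact ((hpp.takeUntil ha).dropUntil h1).support_nodup
      · intro x hx hx'
        exact hdisj ((p.takeUntil a ha).support_dropUntil_subset h1 hx) hx'
    · rw [Walk.mem_support_append_iff]
      exact Or.inr (Walk.start_mem_support _)
  · right
    rw [isAncestor_iff hT, ← dropUntil_pth hT ha]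
    exact h2

lemma ancestor_eq_of_dist_eq (hT : T.IsTree) {r a b v : V}
    (ha : IsAncestor T r a v) (hb : IsAncestor T r b v)
    (hd : T.dist r a = T.dist r b) : a = b := by
  rcases ancestor_comparable hT ha hb with h | h
  · by_contra hne
    exact absurd hd (ne_of_lt (dist_lt_of_ancestor_ne hT h hne))
  · by_contra hne
    exact absurd hd.symm (ne_of_lt (dist_lt_of_ancestor_ne hT h (Ne.symm hne)))

lemma exists_isLCA [Fintype V] (hT : T.IsTree) (r u v : V) : ∃ a, IsLCA T r u v a := by
  classical
  have hne : {x | IsAncestor T r x u ∧ IsAncestor T r x v}.Nonempty :=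
    ⟨r, isAncestor_root hT r u, isAncestor_root hT r v⟩
  obtain ⟨a, haS, hmax⟩ := Set.exists_max_image
    {x | IsAncestor T r x u ∧ IsAncestor T r x v} (fun x => T.dist r x)
    (Set.toFinite _) hne
  exact ⟨a, haS.1, haS.2, fun b hbu hbv => hmax b ⟨hbu, hbv⟩⟩

lemma isLCA_unique (hT : T.IsTree) {r u v a b : V}
    (ha : IsLCA T r u v a) (hb : IsLCA T r u v b) : a = b :=
  ancestor_eq_of_dist_eq hT ha.1 hb.1
    (le_antisymm (hb.2.2 a ha.1 ha.2.1) (ha.2.2 b hb.1 hb.2.1))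

lemma isLCA_comm {r u v a : V} (h : IsLCA T r u v a) : IsLCA T r v u a :=
  ⟨h.2.1, h.1, fun b h1 h2 => h.2.2 b h2 h1⟩

lemma isLCA_of_ancestor (hT : T.IsTree) {r a x : V} (h : IsAncestor T r a x) :
    IsLCA T r x a a :=
  ⟨h, isAncestor_self hT r a, fun b _ hba => dist_le_of_ancestor hT hba⟩

/-- Adding one vertex to an LCA-closed set: the closure grows by at most 2. -/
lemma closed_insert [Fintype V] (hT : T.IsTree) (r x : V) (C : Set V)
    (hcl : ∀ u ∈ C, ∀ v ∈ C, ∀ b : V, IsLCA T r u v b → b ∈ C) :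
    ∃ D : Set V, C ⊆ D ∧ x ∈ D ∧ D.ncard ≤ C.ncard + 2 ∧
      (∀ u ∈ D, ∀ v ∈ D, ∀ b : V, IsLCA T r u v b → b ∈ D) := by
  classical
  rcases C.eq_empty_or_nonempty with hC | hC
  · refine ⟨{x}, by simp [hC], rfl, by simp, ?_⟩
    intro u hu v hv b hb
    rw [Set.mem_singleton_iff] at hu hv
    rw [hu, hv] at hb
    have hbx : b = x := isLCA_unique hT hb (isLCA_of_ancestor hT (isAncestor_self hT r x))
    simp [hbx]
  · -- choose a deepest LCA of x with an element of C
    set L : Set V := {c | ∃ w ∈ C, IsLCA T r x w c} with hLdef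
    have hLne : L.Nonempty := by
      obtain ⟨w, hw⟩ := hC
      obtain ⟨c, hc⟩ := exists_isLCA hT r x w
      exact ⟨c, w, hw, hc⟩
    obtain ⟨a, haL, hamax⟩ := Set.exists_max_image L (fun c => T.dist r c)
      (Set.toFinite _) hLne
    obtain ⟨w0, hw0C, hlca0⟩ := haL
    have ha_anc_x : IsAncestor T r a x := hlca0.1
    have ha_anc_w0 : IsAncestor T r a w0 := hlca0.2.1
    refine ⟨insert x (insert a C), fun y hy => by simp [hy], by simp, ?_, ?_⟩
    · calc (insert x (insert a C)).ncard ≤ (insert a C).ncard + 1 :=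
            Set.ncard_insert_le _ _
        _ ≤ C.ncard + 1 + 1 := by
            have := Set.ncard_insert_le a C; omega
        _ = C.ncard + 2 := by omega
    · -- closure of the new set
      -- key case: lca of x with an element of C
      have keyx : ∀ w ∈ C, ∀ b : V, IsLCA T r x w b → b ∈ insert a C := by
        intro w hw b hb
        have hbL : b ∈ L := ⟨w, hw, hb⟩
        have hdba : T.dist r b ≤ T.dist r a := hamax b hbL
        by_cases hba : b = a
        · simp [hba]
        · -- b is a strict ancestor of a
          have hb_anc_a : IsAncestor T r b a := by
            rcases ancestor_comparable hT hb.1 ha_anc_x with h | h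
            · exact h
            · -- a ancestor of b : forces equality, contradiction
              exact absurd (ancestor_eq_of_dist_eq hT hb.1 ha_anc_x
                (le_antisymm hdba (dist_le_of_ancestor hT h))) hba
          have hb_anc_w0 : IsAncestor T r b w0 := isAncestor_trans hT hb_anc_a ha_anc_w0
          -- show b = lca w0 w ∈ C
          obtain ⟨d, hd⟩ := exists_isLCA hT r w0 w
          have hdb : T.dist r d ≤ T.dist r b := by
            by_contra hlt
            push_neg at hlt
            -- d, b both ancestors of w0; b strict ancestor of d impossible both ways via a
            rcases ancestor_comparable hT hd.1 hb_anc_w0 with hdbanc | hbdanc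
            · exact absurd (dist_le_of_ancestor hT hdbanc) (not_le_of_gt hlt)
            · -- b ancestor of d; compare a and d (both ancestors of w0)
              rcases ancestor_comparable hT ha_anc_w0 hd.1 with had | hda
              · -- a ancestor of d ⇒ a ancestor of w ⇒ a common anc of x,w ⇒ dist a ≤ dist b
                have ha_anc_w : IsAncestor T r a w := isAncestor_trans hT had hd.2.1
                have h1 : T.dist r a ≤ T.dist r b := hb.2.2 a ha_anc_x ha_anc_w
                have h2 : T.dist r b < T.dist r a :=
                  dist_lt_of_ancestor_ne hT hb_anc_a hba
                omega
              · -- d ancestor of a ⇒ d ancestor of x ⇒ d common anc of x,w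
                have hd_anc_x : IsAncestor T r d x := isAncestor_trans hT hda ha_anc_x
                have h1 : T.dist r d ≤ T.dist r b := hb.2.2 d hd_anc_x hd.2.1
                omega
          have : IsLCA T r w0 w b :=
            ⟨hb_anc_w0, hb.2.1, fun c h1 h2 => le_trans (hd.2.2 c h1 h2) hdb⟩
          exact Set.mem_insert_of_mem _ (hcl w0 hw0C w hw b this)
      -- key case: lca of a with an element of C
      have keya : ∀ w ∈ C, ∀ b : V, IsLCA T r a w b → b ∈ insert a C := by
        intro w hw b hb
        obtain ⟨e, he⟩ := exists_isLCA hT r w0 w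
        have heC : e ∈ C := hcl w0 hw0C w hw e he
        rcases ancestor_comparable hT he.1 ha_anc_w0 with hea | hae
        · -- e ancestor of a : b = e
          have : IsLCA T r a w e :=
            ⟨hea, he.2.1, fun c h1 h2 =>
              he.2.2 c (isAncestor_trans hT h1 ha_anc_w0) h2⟩
          have hbe : b = e := isLCA_unique hT hb this
          exact Set.mem_insert_of_mem _ (hbe ▸ heC)
        · -- a ancestor of e : b = a
          have ha_anc_w : IsAncestor T r a w := isAncestor_trans hT hae he.2.1
          have : IsLCA T r a w a :=
            ⟨isAncestor_self hT r a, ha_anc_w,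
              fun c h1 _ => dist_le_of_ancestor hT h1⟩
          have hba : b = a := isLCA_unique hT hb this
          exact hba ▸ Set.mem_insert a C
      -- lca with x and a directly
      have hxx : ∀ b : V, IsLCA T r x x b → b = x := fun b hb =>
        isLCA_unique hT hb (isLCA_of_ancestor hT (isAncestor_self hT r x))
      have hxa : ∀ b : V, IsLCA T r x a b → b = a := fun b hb =>
        isLCA_unique hT hb (isLCA_of_ancestor hT ha_anc_x)
      have haa : ∀ b : V, IsLCA T r a a b → b = a := fun b hb =>
        isLCA_unique hT hb (isLCA_of_ancestor hT (isAncestor_self hT r a))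
      intro u hu v hv b hb
      simp only [Set.mem_insert_iff] at hu hv
      rcases hu with rfl | rfl | huC <;> rcases hv with rfl | rfl | hvC
      · exact (hxx b hb) ▸ Set.mem_insert _ _
      · exact (hxa b hb) ▸ Set.mem_insert_of_mem _ (Set.mem_insert _ _)
      · exact Set.mem_insert_of_mem _ (keyx v hvC b hb)
      · exact (hxa b (isLCA_comm hb)) ▸ Set.mem_insert_of_mem _ (Set.mem_insert _ _)
      · exact (haa b hb) ▸ Set.mem_insert_of_mem _ (Set.mem_insert _ _)
      · exact Set.mem_insert_of_mem _ (keya v hvC b hb)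
      · exact Set.mem_insert_of_mem _ (keyx u huC b (isLCA_comm hb))
      · exact Set.mem_insert_of_mem _ (keya u huC b (isLCA_comm hb))
      · exact Set.mem_insert_of_mem _ (Set.mem_insert_of_mem _ (hcl u huC v hvC b hb))

/-- Every finite vertex set has an LCA-closed superset of at most twice its size. -/
lemma exists_closed [Fintype V] (hT : T.IsTree) (r : V) (S : Set V) :
    ∃ C : Set V, S ⊆ C ∧
      (∀ u ∈ C, ∀ v ∈ C, ∀ b : V, IsLCA T r u v b → b ∈ C) ∧
      C.ncard ≤ 2 * S.ncard := by
  classical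
  have hfin : S.Finite := Set.toFinite S
  refine Set.Finite.induction_on (motive := fun s _ => ∃ C : Set V, s ⊆ C ∧
      (∀ u ∈ C, ∀ v ∈ C, ∀ b : V, IsLCA T r u v b → b ∈ C) ∧
      C.ncard ≤ 2 * s.ncard) S hfin ⟨∅, le_refl _, by simp, by simp⟩ ?_
  intro x s hxs hsfin ih
  obtain ⟨C, hsubC, hclC, hcardC⟩ := ih
  obtain ⟨D, hCD, hxD, hcardD, hclD⟩ := closed_insert hT r x C hclC
  refine ⟨D, ?_, hclD, ?_⟩
  · intro y hy
    rcases Set.mem_insert_iff.mp hy with rfl | hys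
    · exact hxD
    · exact hCD (hsubC hys)
  · rw [Set.ncard_insert_of_notMem hxs hsfin]
    omega

end Stmt16Aux

/-- Let `T` be a finite tree rooted at `r` and let `W₁` be a nonempty set
of vertices. If `W` is the least common ancestor closure of `W₁` (the smallest superset of
`W₁` closed under taking least common ancestors), then `|W| ≤ 2 · |W₁|`. -/
theorem stmt16 {V : Type*} [Fintype V] (T : SimpleGraph V) (hT : T.IsTree) (r : V)
    (W1 W : Set V) (hne : W1.Nonempty) (hsub : W1 ⊆ W)
    (hclosed : ∀ u ∈ W, ∀ v ∈ W, ∀ a : V, IsLCA T r u v a → a ∈ W)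
    (hmin : ∀ W' : Set V, W1 ⊆ W' →
      (∀ u ∈ W', ∀ v ∈ W', ∀ a : V, IsLCA T r u v a → a ∈ W') → W ⊆ W') :
    W.ncard ≤ 2 * W1.ncard := by
  classical
  obtain ⟨C, hsubC, hclC, hcard⟩ := Stmt16Aux.exists_closed hT r W1
  have hWC : W ⊆ C := hmin C hsubC hclC
  calc W.ncard ≤ C.ncard := Set.ncard_le_ncard hWC (Set.toFinite C)
    _ ≤ 2 * W1.ncard := hcard
end
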